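/- arXiv:1807.04163 — 9 statements merged into one kernel-verified Lean document; each statement's English description precedes it below -/
import Mathlib

section
/- Perturbation Lemma (variant of Alkan–Demange–Gale, Lemma 2.2): Let (π, p) be an envy-free solution of a rent-division instance in which every utility function v a r is strictly decreasing, and suppose there exist η > 0 and slopes λ : Fin n → Fin n → ℝ with λ a r > 0 for all a, r, such that v a r x = v a r (p r) + λ a r · (p r − x) for all agents a, rooms r, and all x with p r − η ≤ x ≤ p r (local piecewise linearity below p). Let σ be any permutation of Fin n such that (σ, p) is envy-free and ∏_a λ a (σ a) ≥ ∏_a λ a (τ a) for every permutation τ for which (τ, p) is envy-free (i.e., σ is a maximum-weight perfect matching in the weighted first-choice graph at p with edge weights log λ a r). Then there exists δ₀ > 0 such that for every δ with 0 < δ ≤ δ₀ there is a price vector q : Fin n → ℝ satisfying p r − δ ≤ q r < p r for all rooms r, and (σ, q) is envy-free. -/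
open List

namespace ADGPerturb

variable {α : Type*} {w : α → α → ℝ}

/-- Product of edge weights along a walk given as a list of vertices. -/
def pv (w : α → α → ℝ) : List α → ℝ
  | [] => 1
  | [_] => 1
  | a :: b :: t => w a b * pv w (b :: t)

@[simp] lemma pv_nil : pv w [] = 1 := rfl
@[simp] lemma pv_single (a : α) : pv w [a] = 1 := rfl
@[simp] lemma pv_cons_cons (a b : α) (t : List α) :
    pv w (a :: b :: t) = w a b * pv w (b :: t) := rfl

lemma pv_pos (hw : ∀ a b, 0 < w a b) : ∀ l : List α, 0 < pv w l
  | [] => one_pos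
  | [_] => one_pos
  | _ :: b :: t => mul_pos (hw _ _) (pv_pos hw (b :: t))

lemma pv_splice (A : List α) (x : α) (B : List α) :
    pv w (A ++ x :: B) = pv w (A ++ [x]) * pv w (x :: B) := by
  induction A with
  | nil => simp
  | cons a A ih =>
    cases A with
    | nil => simp [pv]
    | cons b A' =>
      simp only [cons_append, pv_cons_cons] at *
      rw [ih]; ring

lemma pv_zip : ∀ l : List α, pv w l = ((l.zip l.tail).map fun pq => w pq.1 pq.2).prod
  | [] => by simp
  | [a] => by simp
  | a :: b :: t => by
    simp only [pv_cons_cons, tail_cons, zip_cons_cons, map_cons, prod_cons]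
    rw [pv_zip (b :: t)]; rfl

lemma exists_dup_split {l : List α} (h : ¬ l.Nodup) :
    ∃ (x : α) (A B C : List α), l = A ++ x :: B ++ x :: C := by
  induction l with
  | nil => simp at h
  | cons a t ih =>
    by_cases ha : a ∈ t
    · obtain ⟨B, C, rfl⟩ := List.append_of_mem ha
      exact ⟨a, [], B, C, rfl⟩
    · have ht : ¬ t.Nodup := fun hn => h (List.nodup_cons.mpr ⟨ha, hn⟩)
      obtain ⟨x, A, B, C, rfl⟩ := ih ht
      exact ⟨x, a :: A, B, C, rfl⟩


lemma closed_le_one (hw : ∀ a b, 0 < w a b) {arc : α → α → Prop}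
    (Hcyc : ∀ (x : α) (B : List α), (x :: B).Nodup → Chain' arc (x :: B ++ [x]) →
      pv w (x :: B ++ [x]) ≤ 1) :
    ∀ (N : ℕ) (x : α) (B : List α), (x :: B).length ≤ N → Chain' arc (x :: B ++ [x]) →
      pv w (x :: B ++ [x]) ≤ 1 := by
  intro N
  induction N with
  | zero => intro x B h; simp at h
  | succ N ih =>
    intro x B hlen hch
    by_cases hnd : (x :: B).Nodup
    · exact Hcyc x B hnd hch
    · obtain ⟨y, A, D, E, hsplit⟩ := exists_dup_split hnd
      have hc : x :: B ++ [x] = A ++ y :: (D ++ y :: (E ++ [x])) := by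
        rw [hsplit]; simp
      rw [hc] at hch ⊢
      have hch1 := (isChain_split.mp hch).1
      have hch2 := (isChain_split.mp hch).2
      -- hch2 : Chain' arc (y :: (D ++ y :: (E ++ [x])))
      have hch2' : Chain' arc ((y :: D) ++ y :: (E ++ [x])) := by
        simpa [Chain'] using hch2
      have hch3 := (isChain_split.mp hch2').1  -- Chain' ((y::D) ++ [y])
      have hch4 := (isChain_split.mp hch2').2  -- Chain' (y :: (E ++ [x]))
      -- pv decomposition
      have hpv : pv w (A ++ y :: (D ++ y :: (E ++ [x]))) =
          pv w (A ++ y :: (E ++ [x])) * pv w (y :: D ++ [y]) := by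
        rw [pv_splice A y (D ++ y :: (E ++ [x])),
            show (y : α) :: (D ++ y :: (E ++ [x])) = (y :: D) ++ y :: (E ++ [x]) by simp,
            pv_splice (y :: D) y (E ++ [x]), pv_splice A y (E ++ [x])]
        ring
      -- middle closed walk
      have hmid : pv w (y :: D ++ [y]) ≤ 1 := by
        apply ih y D ?_ (by simpa [Chain'] using hch3)
        have hlenEq : (x :: B).length = A.length + D.length + E.length + 2 := by
          rw [hsplit]; simp; omega
        simp only [length_cons, length_append] at hlen hlenEq ⊢
        omega
      -- outer closed walk
      have houter : pv w (A ++ y :: (E ++ [x])) ≤ 1 := by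
        cases A with
        | nil =>
          have hs' : x = y ∧ B = D ++ y :: E := by
            have h := hsplit; simp at h; exact ⟨h.1, h.2⟩
          obtain ⟨rfl, rfl⟩ := hs'
          apply ih x E ?_ (by simpa [Chain'] using isChain_split.mpr ⟨hch1, hch4⟩)
          simp only [length_cons, length_append] at hlen ⊢
          omega
        | cons a A' =>
          have hs' : x = a ∧ B = A' ++ y :: D ++ y :: E := by
            have h := hsplit; simp at h
            exact ⟨h.1, by rw [h.2]; simp⟩
          obtain ⟨rfl, rfl⟩ := hs'
          have hform : (x :: A') ++ y :: (E ++ [x]) = x :: (A' ++ y :: E) ++ [x] := by simp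
          rw [hform]
          apply ih x (A' ++ y :: E) ?_ ?_
          · simp only [length_cons, length_append] at hlen ⊢
            omega
          · rw [← hform]; exact isChain_split.mpr ⟨hch1, hch4⟩
      have h1 := pv_pos hw (A ++ y :: (E ++ [x]))
      have h2 := pv_pos hw (y :: D ++ [y])
      calc pv w (A ++ y :: (D ++ y :: (E ++ [x])))
          = pv w (A ++ y :: (E ++ [x])) * pv w (y :: D ++ [y]) := hpv
        _ ≤ 1 * 1 := by
            apply mul_le_mul houter hmid h2.le zero_le_one
        _ = 1 := by ring

lemma pv_le_pow (hw : ∀ a b, 0 < w a b) {Wb : ℝ} (hWb1 : 1 ≤ Wb) (hWb : ∀ a b, w a b ≤ Wb) :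
    ∀ l : List α, pv w l ≤ Wb ^ l.length
  | [] => by simp
  | [a] => by simpa using hWb1
  | a :: b :: t => by
    have h1 := pv_le_pow hw hWb1 hWb (b :: t)
    have h2 := pv_pos hw (b :: t)
    have : Wb ^ (b :: t).length ≤ Wb ^ (a :: b :: t).length := by
      apply pow_le_pow_right₀ hWb1; simp
    calc pv w (a :: b :: t) = w a b * pv w (b :: t) := rfl
      _ ≤ Wb * Wb ^ (b :: t).length := by
          apply mul_le_mul (hWb a b) h1 h2.le ((zero_le_one.trans hWb1))
      _ = Wb ^ (b :: t).length * Wb := by ring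
      _ = Wb ^ ((b :: t).length + 1) := (pow_succ Wb _).symm
      _ = Wb ^ (a :: b :: t).length := by simp

lemma pv_le_bound [Fintype α] (hw : ∀ a b, 0 < w a b) {arc : α → α → Prop}
    (Hclosed : ∀ (x : α) (B : List α), Chain' arc (x :: B ++ [x]) → pv w (x :: B ++ [x]) ≤ 1)
    {Wb : ℝ} (hWb1 : 1 ≤ Wb) (hWb : ∀ a b, w a b ≤ Wb) :
    ∀ (N : ℕ) (l : List α), l.length ≤ N → Chain' arc l →
      pv w l ≤ Wb ^ (Fintype.card α) := by
  classical
  intro N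
  induction N with
  | zero =>
    intro l h _
    have : l = [] := by cases l <;> simp_all
    subst this
    simpa using one_le_pow₀ (n := Fintype.card α) hWb1
  | succ N ih =>
    intro l hlen hch
    by_cases hnd : l.Nodup
    · calc pv w l ≤ Wb ^ l.length := pv_le_pow hw hWb1 hWb l
        _ ≤ Wb ^ (Fintype.card α) := by
            apply pow_le_pow_right₀ hWb1 (hnd.length_le_card)
    · obtain ⟨y, A, D, E, rfl⟩ := exists_dup_split hnd
      rw [show A ++ (y : α) :: D ++ y :: E = A ++ y :: (D ++ y :: E) by simp] at hch
      have hch1 := (isChain_split.mp hch).1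
      have hch2 := (isChain_split.mp hch).2
      have hch2' : Chain' arc ((y :: D) ++ y :: E) := by simpa [Chain'] using hch2
      have hch3 := (isChain_split.mp hch2').1
      have hch4 := (isChain_split.mp hch2').2
      have hmid : pv w (y :: D ++ [y]) ≤ 1 := Hclosed y D (by simpa [Chain'] using hch3)
      have hpv : pv w (A ++ y :: D ++ y :: E) =
          pv w (A ++ y :: E) * pv w (y :: D ++ [y]) := by
        rw [show A ++ (y : α) :: D ++ y :: E = A ++ y :: (D ++ y :: E) by simp,
            pv_splice A y (D ++ y :: E),
            show (y : α) :: (D ++ y :: E) = (y :: D) ++ y :: E by simp,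
            pv_splice (y :: D) y E, pv_splice A y E]
        ring
      have houter : pv w (A ++ y :: E) ≤ Wb ^ (Fintype.card α) := by
        apply ih (A ++ y :: E) ?_ (isChain_split.mpr ⟨hch1, hch4⟩)
        simp at hlen ⊢
        omega
      have h1 := pv_pos hw (A ++ y :: E)
      have h2 := pv_pos hw (y :: D ++ [y])
      calc pv w (A ++ y :: D ++ y :: E)
          = pv w (A ++ y :: E) * pv w (y :: D ++ [y]) := hpv
        _ ≤ pv w (A ++ y :: E) * 1 := by
            apply mul_le_mul_of_nonneg_left hmid h1.le
        _ = pv w (A ++ y :: E) := by ring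
        _ ≤ Wb ^ (Fintype.card α) := houter


lemma exists_potential [Fintype α] {arc : α → α → Prop} (hw : ∀ a b, 0 < w a b)
    (Hcyc : ∀ (x : α) (B : List α), (x :: B).Nodup → Chain' arc (x :: B ++ [x]) →
      pv w (x :: B ++ [x]) ≤ 1) :
    ∃ y : α → ℝ, (∀ a, 1 ≤ y a) ∧ ∀ a b, arc a b → y a * w a b ≤ y b := by
  classical
  cases isEmpty_or_nonempty α with
  | inl h => exact ⟨fun _ => 1, fun a => le_rfl, fun a => isEmptyElim a⟩
  | inr h =>
  have hclosed : ∀ (x : α) (B : List α), Chain' arc (x :: B ++ [x]) →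
      pv w (x :: B ++ [x]) ≤ 1 :=
    fun x B hch => closed_le_one hw Hcyc (x :: B).length x B le_rfl hch
  set Wb : ℝ := 1 ⊔ (Finset.univ.sup' Finset.univ_nonempty fun pq : α × α => w pq.1 pq.2)
    with hWb_def
  have hWb1 : 1 ≤ Wb := le_sup_left
  have hWb : ∀ a b, w a b ≤ Wb :=
    fun a b => le_sup_of_le_right (Finset.le_sup' (fun pq : α × α => w pq.1 pq.2) (Finset.mem_univ (a, b)))
  set S : α → Set ℝ := fun a =>
    {t | ∃ l : List α, Chain' arc l ∧ l.getLast? = some a ∧ pv w l = t} with hS_def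
  have hmem1 : ∀ a, (1 : ℝ) ∈ S a := fun a => ⟨[a], isChain_singleton a, rfl, rfl⟩
  have hbdd : ∀ a, BddAbove (S a) := by
    intro a
    refine ⟨Wb ^ (Fintype.card α), ?_⟩
    rintro t ⟨l, hch, -, rfl⟩
    exact pv_le_bound hw hclosed hWb1 hWb l.length l le_rfl hch
  refine ⟨fun a => sSup (S a), fun a => le_csSup (hbdd a) (hmem1 a), ?_⟩
  intro a b hab
  rw [← le_div_iff₀ (hw a b)]
  apply csSup_le ⟨1, hmem1 a⟩
  rintro t ⟨l, hch, hlast, rfl⟩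
  rw [le_div_iff₀ (hw a b)]
  have hl_ne : l ≠ [] := by rintro rfl; simp at hlast
  have hlast' : l.getLast hl_ne = a := by
    rw [List.getLast?_eq_getLast hl_ne] at hlast
    exact Option.some_injective _ hlast
  have hch' : Chain' arc (l ++ [b]) := by
    rw [show Chain' arc (l ++ [b]) ↔ IsChain arc (l ++ [b]) from Iff.rfl, isChain_append]
    refine ⟨hch, isChain_singleton b, ?_⟩
    intro x hx y hy
    simp only [head?_cons, Option.mem_def, Option.some.injEq] at hy
    rw [hlast, Option.mem_def, Option.some.injEq] at hx
    rw [← hy, ← hx]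
    exact hab
  have hdrop : l.dropLast ++ [a] = l := by
    rw [← hlast']; exact List.dropLast_append_getLast hl_ne
  have hpv' : pv w (l ++ [b]) = pv w l * w a b := by
    conv_lhs => rw [← hdrop]
    rw [show l.dropLast ++ [a] ++ [b] = l.dropLast ++ a :: [b] by simp,
        pv_splice l.dropLast a [b], hdrop]
    rw [show pv w [a, b] = w a b * 1 from rfl]
    ring
  exact le_csSup (hbdd b) ⟨l ++ [b], hch', List.getLast?_concat, hpv'⟩

end ADGPerturb



open ADGPerturb in
set_option maxHeartbeats 1000000 in
/-- Perturbation Lemma (variant of Alkan–Demange–Gale). -/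
theorem perturbation_lemma
    (n : ℕ) (v : Fin n → Fin n → ℝ → ℝ)
    (hanti : ∀ a r, StrictAnti (v a r))
    (π : Equiv.Perm (Fin n)) (p : Fin n → ℝ)
    (hEF : ∀ a r, v a r (p r) ≤ v a (π a) (p (π a)))
    (η : ℝ) (hη : 0 < η)
    (lam : Fin n → Fin n → ℝ) (hlam : ∀ a r, 0 < lam a r)
    (hlin : ∀ a r x, p r - η ≤ x → x ≤ p r →
      v a r x = v a r (p r) + lam a r * (p r - x))
    (σ : Equiv.Perm (Fin n))
    (hσEF : ∀ a r, v a r (p r) ≤ v a (σ a) (p (σ a)))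
    (hσmax : ∀ τ : Equiv.Perm (Fin n),
      (∀ a r, v a r (p r) ≤ v a (τ a) (p (τ a))) →
      (∏ a, lam a (τ a)) ≤ ∏ a, lam a (σ a)) :
    ∃ δ₀ > 0, ∀ δ, 0 < δ → δ ≤ δ₀ →
      ∃ q : Fin n → ℝ, (∀ r, p r - δ ≤ q r ∧ q r < p r) ∧
        ∀ a r, v a r (q r) ≤ v a (σ a) (q (σ a)) := by
  classical
  rcases Nat.eq_zero_or_pos n with hn | hn
  · subst hn
    exact ⟨1, one_pos, fun δ hδ hδ' => ⟨p, fun r => r.elim0, fun a => a.elim0⟩⟩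
  have r0 : Fin n := ⟨0, hn⟩
  haveI hnis : Nonempty (Fin n) := ⟨r0⟩
  set arc : Fin n → Fin n → Prop :=
    fun r r' => v (σ.symm r') r (p r) = v (σ.symm r') r' (p r') with harc_def
  set w : Fin n → Fin n → ℝ :=
    fun r r' => lam (σ.symm r') r / lam (σ.symm r') r' with hw_def
  have hw : ∀ a b, 0 < w a b := fun a b => div_pos (hlam _ _) (hlam _ _)
  -- the key combinatorial fact: simple cycles in the tight graph have weight ≤ 1
  have Hcyc : ∀ (x : Fin n) (B : List (Fin n)), (x :: B).Nodup →
      List.Chain' arc (x :: B ++ [x]) → pv w (x :: B ++ [x]) ≤ 1 := by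
    intro x B hnd hch
    set L : List (Fin n) := x :: B with hL
    have hmpos : 0 < L.length := by simp [hL]
    set e : Equiv.Perm (Fin n) := (L.formPerm)⁻¹ with he_def
    have hfix : ∀ s, s ∉ L → e s = s := by
      intro s hs
      have h1 : L.formPerm s = s := List.formPerm_apply_of_notMem hs
      calc e s = e (L.formPerm s) := by rw [h1]
        _ = s := Equiv.symm_apply_apply _ _
    have hE : ∀ i j (hi : i < L.length) (hj : j < L.length), (i + 1) % L.length = j →
        e (L[j]'hj) = L[i]'hi := by
      intro i j hi hj hij
      subst hij
      have h2 := List.formPerm_apply_getElem L hnd i hi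
      rw [← h2]
      exact Equiv.symm_apply_apply _ _
    have hch' := List.isChain_iff_getElem.mp hch
    have hA : ∀ i j (hi : i < L.length) (hj : j < L.length), (i + 1) % L.length = j →
        arc (L[i]'hi) (L[j]'hj) := by
      intro i j hi hj hij
      have hi' : i + 1 < (L ++ [x]).length := by simp; omega
      have h1 := hch' i hi'
      rcases Nat.lt_or_ge (i+1) L.length with hlt | hge
      · have hmod : (i+1) % L.length = i+1 := Nat.mod_eq_of_lt hlt
        have hj' : j = i + 1 := by omega
        subst hj'
        simpa [List.getElem_append, hi, hlt] using h1
      · have hieq : i + 1 = L.length := by omega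
        have hj' : j = 0 := by rw [← hij, hieq, Nat.mod_self]
        subst hj'
        have hx0 : L[0]'hj = x := by simp [hL]
        rw [hx0]
        simpa [List.getElem_append, hi, hieq] using h1
    have hkey : ∀ s (hs : s ∈ L), arc (e s) s := by
      intro s hs
      obtain ⟨j, hj, rfl⟩ := List.mem_iff_getElem.mp hs
      rcases Nat.eq_zero_or_pos j with rfl | hjpos
      · have hi : L.length - 1 < L.length := by omega
        have hij : (L.length - 1 + 1) % L.length = 0 := by
          rw [Nat.sub_add_cancel hmpos]
          exact Nat.mod_self _
        rw [hE (L.length - 1) 0 hi hj hij]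
        exact hA _ _ hi hj hij
      · have hi : j - 1 < L.length := by omega
        have hij : (j - 1 + 1) % L.length = j := by
          rw [Nat.sub_add_cancel hjpos]
          exact Nat.mod_eq_of_lt hj
        rw [hE (j-1) j hi hj hij]
        exact hA _ _ hi hj hij
    set τ : Equiv.Perm (Fin n) := σ.trans e with hτ_def
    have hτ : ∀ a, v a (τ a) (p (τ a)) = v a (σ a) (p (σ a)) := by
      intro a
      by_cases hmem : σ a ∈ L
      · have hk := hkey (σ a) hmem
        have h2 : τ a = e (σ a) := rfl
        rw [h2]
        rw [harc_def] at hk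
        simp only [Equiv.symm_apply_apply] at hk
        exact hk
      · have h2 : τ a = σ a := hfix _ hmem
        rw [h2]
    have hτEF : ∀ a r, v a r (p r) ≤ v a (τ a) (p (τ a)) := fun a r => by
      rw [hτ a]; exact hσEF a r
    have hprod := hσmax τ hτEF
    have hF : (∏ a, lam a (τ a)) = ∏ s, lam (σ.symm s) (e s) := by
      calc (∏ a, lam a (τ a)) = ∏ a, lam (σ.symm (σ a)) (e (σ a)) :=
            Finset.prod_congr rfl fun a _ => by simp [hτ_def]
        _ = ∏ s, lam (σ.symm s) (e s) := Equiv.prod_comp σ (fun s => lam (σ.symm s) (e s))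
    have hG : (∏ a, lam a (σ a)) = ∏ s, lam (σ.symm s) s := by
      calc (∏ a, lam a (σ a)) = ∏ a, lam (σ.symm (σ a)) (σ a) :=
            Finset.prod_congr rfl fun a _ => by simp
        _ = ∏ s, lam (σ.symm s) s := Equiv.prod_comp σ (fun s => lam (σ.symm s) s)
    have hFG : (∏ s, lam (σ.symm s) (e s)) ≤ ∏ s, lam (σ.symm s) s := by
      rw [← hF, ← hG]; exact hprod
    -- the cycle weight equals a quotient of matching weights
    have htail : ∀ (i : ℕ) (hi : i < L.length),
        (B ++ [x])[i]'(by simp [hL] at hi ⊢; omega) =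
          L[(i+1) % L.length]'(Nat.mod_lt _ hmpos) := by
      intro i hi
      rcases Nat.lt_or_ge (i+1) L.length with hlt | hge
      · have hmod : (i+1) % L.length = i+1 := Nat.mod_eq_of_lt hlt
        have hBlt : i < B.length := by simp [hL] at hlt; omega
        simp only [hL, List.length_cons] at hmod
        simp [List.getElem_append, hBlt, hmod, hL]
      · have hieq : i + 1 = L.length := by omega
        have hBeq : i = B.length := by simp [hL] at hieq; omega
        have hmod : (i+1) % L.length = 0 := by rw [hieq, Nat.mod_self]
        simp only [hL, List.length_cons] at hmod
        simp [List.getElem_append, hBeq, hmod, hL]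
    have hzip_eq : (L ++ [x]).zip (B ++ [x]) = (B ++ [x]).map (fun s => (e s, s)) := by
      apply List.ext_getElem
      · simp [hL]
      · intro i h1 h2
        have hiL : i < L.length := by simp [hL] at h1 ⊢; omega
        rw [List.getElem_zip, List.getElem_map]
        have hfst : (L ++ [x])[i]'(by simp; omega) = L[i]'hiL :=
          List.getElem_append_left hiL
        have hsnd := htail i hiL
        refine Prod.ext ?_ rfl
        simp only [hfst, hsnd]
        exact (hE i ((i+1) % L.length) hiL (Nat.mod_lt _ hmpos) rfl).symm
    have hval : pv w (L ++ [x]) = ((B ++ [x]).map (fun s => w (e s) s)).prod := by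
      rw [pv_zip]
      rw [show (L ++ [x]).tail = B ++ [x] by simp [hL]]
      rw [hzip_eq, List.map_map]
      rfl
    have hperm : ((B ++ [x]).map (fun s => w (e s) s)).prod
        = (L.map (fun s => w (e s) s)).prod :=
      ((List.perm_append_singleton x B).map _).prod_eq
    have htofin : (L.map (fun s => w (e s) s)).prod = ∏ s ∈ L.toFinset, w (e s) s :=
      (List.prod_toFinset _ hnd).symm
    have hgoal_eq : pv w (L ++ [x]) = ∏ s ∈ L.toFinset, w (e s) s := by
      rw [hval, hperm, htofin]
    rw [show (x :: B ++ [x] : List (Fin n)) = L ++ [x] from rfl, hgoal_eq]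
    set T := L.toFinset with hT_def
    have hTprod : (∏ s ∈ T, w (e s) s) =
        (∏ s ∈ T, lam (σ.symm s) (e s)) / (∏ s ∈ T, lam (σ.symm s) s) := by
      rw [← Finset.prod_div_distrib]
    rw [hTprod, div_le_one (Finset.prod_pos fun s _ => hlam _ _)]
    have hcompl : (∏ s ∈ Tᶜ, lam (σ.symm s) (e s)) = ∏ s ∈ Tᶜ, lam (σ.symm s) s :=
      Finset.prod_congr rfl fun s hs => by
        rw [hfix s (by simpa [hT_def, List.mem_toFinset] using Finset.mem_compl.mp hs)]
    have h1 := Finset.prod_mul_prod_compl T (fun s => lam (σ.symm s) (e s))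
    have h2 := Finset.prod_mul_prod_compl T (fun s => lam (σ.symm s) s)
    have hpos : 0 < ∏ s ∈ Tᶜ, lam (σ.symm s) s := Finset.prod_pos fun s _ => hlam _ _
    have hfinal := hFG
    rw [← h1, ← h2, hcompl] at hfinal
    exact le_of_mul_le_mul_right hfinal hpos
  -- get the potential function
  obtain ⟨y, hy1, hyarc⟩ := exists_potential hw Hcyc
  set Y : ℝ := Finset.univ.sup' Finset.univ_nonempty y with hY_def
  have hY : ∀ r, y r ≤ Y := fun r => Finset.le_sup' y (Finset.mem_univ r)
  have hY1 : (1 : ℝ) ≤ Y := (hy1 r0).trans (hY r0)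
  have hYpos : 0 < Y := lt_of_lt_of_le one_pos hY1
  -- δ₀
  set g : Fin n × Fin n → ℝ := fun ar =>
    if v ar.1 ar.2 (p ar.2) = v ar.1 (σ ar.1) (p (σ ar.1)) then η
    else (v ar.1 (σ ar.1) (p (σ ar.1)) - v ar.1 ar.2 (p ar.2)) / lam ar.1 ar.2 with hg_def
  set δ₀ : ℝ := Finset.univ.inf' Finset.univ_nonempty g with hδ₀_def
  have hgpos : ∀ ar : Fin n × Fin n, 0 < g ar := by
    intro ar
    rw [hg_def]
    dsimp only
    split
    · exact hη
    · rename_i hne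
      have hlt := lt_of_le_of_ne (hσEF ar.1 ar.2) hne
      exact div_pos (sub_pos.mpr hlt) (hlam _ _)
  have hδ₀pos : 0 < δ₀ := by
    rw [hδ₀_def, Finset.lt_inf'_iff]
    exact fun ar _ => hgpos ar
  have hδ₀η : δ₀ ≤ η := by
    have h1 : δ₀ ≤ g (r0, σ r0) := Finset.inf'_le g (Finset.mem_univ (r0, σ r0))
    have h2 : g (r0, σ r0) = η := by rw [hg_def]; simp
    rw [← h2]; exact h1
  refine ⟨δ₀, hδ₀pos, ?_⟩
  intro δ hδpos hδle
  set d : Fin n → ℝ := fun s => δ * (y s / Y) with hd_def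
  have hdpos : ∀ s, 0 < d s := fun s =>
    mul_pos hδpos (div_pos (lt_of_lt_of_le one_pos (hy1 s)) hYpos)
  have hdδ : ∀ s, d s ≤ δ := fun s => by
    rw [hd_def]
    dsimp only
    calc δ * (y s / Y) ≤ δ * 1 := by
          apply mul_le_mul_of_nonneg_left _ hδpos.le
          rw [div_le_one hYpos]; exact hY s
      _ = δ := mul_one δ
  have hdη : ∀ s, d s ≤ η := fun s => (hdδ s).trans (hδle.trans hδ₀η)
  refine ⟨fun s => p s - d s, fun r => ⟨by show p r - δ ≤ p r - d r; linarith [hdδ r],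
    by show p r - d r < p r; linarith [hdpos r]⟩, ?_⟩
  intro a r
  show v a r (p r - d r) ≤ v a (σ a) (p (σ a) - d (σ a))
  have hval : ∀ (b s : Fin n), v b s (p s - d s) = v b s (p s) + lam b s * d s := by
    intro b s
    rw [hlin b s (p s - d s) (by linarith [hdη s]) (by linarith [hdpos s])]
    ring_nf
  rw [hval a r, hval a (σ a)]
  by_cases ht : v a r (p r) = v a (σ a) (p (σ a))
  · have harc' : arc r (σ a) := by
      rw [harc_def]
      dsimp only
      rw [Equiv.symm_apply_apply]
      exact ht
    have h2 := hyarc r (σ a) harc'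
    have hw' : w r (σ a) = lam a r / lam a (σ a) := by
      rw [hw_def]; dsimp only; rw [Equiv.symm_apply_apply]
    rw [hw'] at h2
    have h3 : y r * lam a r ≤ y (σ a) * lam a (σ a) := by
      rw [← mul_div_assoc, div_le_iff₀ (hlam a (σ a))] at h2
      exact h2
    have h5 : lam a r * d r ≤ lam a (σ a) * d (σ a) := by
      rw [hd_def]
      dsimp only
      have hc : 0 ≤ δ / Y := le_of_lt (div_pos hδpos hYpos)
      calc lam a r * (δ * (y r / Y)) = (δ / Y) * (y r * lam a r) := by ring
        _ ≤ (δ / Y) * (y (σ a) * lam a (σ a)) := mul_le_mul_of_nonneg_left h3 hc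
        _ = lam a (σ a) * (δ * (y (σ a) / Y)) := by ring
    linarith [h5, ht.le, ht.ge]
  · have hlt : v a r (p r) < v a (σ a) (p (σ a)) := lt_of_le_of_ne (hσEF a r) ht
    have hδg : δ₀ ≤ (v a (σ a) (p (σ a)) - v a r (p r)) / lam a r := by
      have h1 : δ₀ ≤ g (a, r) := Finset.inf'_le g (Finset.mem_univ (a, r))
      have h2 : g (a, r) = (v a (σ a) (p (σ a)) - v a r (p r)) / lam a r := by
        rw [hg_def]; exact if_neg ht
      rwa [h2] at h1
    have h3 : lam a r * d r ≤ v a (σ a) (p (σ a)) - v a r (p r) := by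
      have hda : d r ≤ (v a (σ a) (p (σ a)) - v a r (p r)) / lam a r :=
        (hdδ r).trans (hδle.trans hδg)
      calc lam a r * d r ≤ lam a r * ((v a (σ a) (p (σ a)) - v a r (p r)) / lam a r) :=
            mul_le_mul_of_nonneg_left hda (hlam a r).le
        _ = v a (σ a) (p (σ a)) - v a r (p r) := by
            rw [mul_comm, div_mul_cancel₀ _ (hlam a r).ne']
    have h4 : 0 ≤ lam a (σ a) * d (σ a) := le_of_lt (mul_pos (hlam _ _) (hdpos _))
    linarith
end

section
/- Lemma 6.1 (a),(b): Let (π, p) and (σ, q) be two envy-free solutions of a rent-division instance in which every utility function v a r : ℝ → ℝ is strictly decreasing. Then for every agent a: (a) if p (π a) ≥ q (π a) then p (σ a) ≥ q (σ a); and (b) if p (π a) ≤ q (π a) then p (σ a) ≤ q (σ a). -/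
/-- Strict version: if room π a strictly dropped in price, so did room σ a. -/
lemma price_comparison_strict
    (n : ℕ) (v : Fin n → Fin n → ℝ → ℝ)
    (hanti : ∀ a r, StrictAnti (v a r))
    (π σ : Equiv.Perm (Fin n)) (p q : Fin n → ℝ)
    (hπEF : ∀ a r, v a r (p r) ≤ v a (π a) (p (π a)))
    (hσEF : ∀ a r, v a r (q r) ≤ v a (σ a) (q (σ a)))
    (a : Fin n) (h : q (π a) < p (π a)) : q (σ a) < p (σ a) := by
  have h2 : v a (π a) (p (π a)) < v a (π a) (q (π a)) := hanti a (π a) h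
  have key : v a (σ a) (p (σ a)) < v a (σ a) (q (σ a)) := by
    calc v a (σ a) (p (σ a)) ≤ v a (π a) (p (π a)) := hπEF a (σ a)
      _ < v a (π a) (q (π a)) := h2
      _ ≤ v a (σ a) (q (σ a)) := hσEF a (π a)
  exact (hanti a (σ a)).lt_iff_gt.mp key

/-- Lemma 6.1 (a),(b): price comparisons between two envy-free solutions. -/
theorem price_comparison_ab
    (n : ℕ) (v : Fin n → Fin n → ℝ → ℝ)
    (hanti : ∀ a r, StrictAnti (v a r))
    (π σ : Equiv.Perm (Fin n)) (p q : Fin n → ℝ)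
    (hπEF : ∀ a r, v a r (p r) ≤ v a (π a) (p (π a)))
    (hσEF : ∀ a r, v a r (q r) ≤ v a (σ a) (q (σ a)))
    (a : Fin n) :
    (q (π a) ≤ p (π a) → q (σ a) ≤ p (σ a)) ∧
    (p (π a) ≤ q (π a) → p (σ a) ≤ q (σ a)) := by
  constructor
  · intro h
    by_contra hc
    push_neg at hc
    have h1 : v a (σ a) (q (σ a)) < v a (σ a) (p (σ a)) := hanti a (σ a) hc
    have h2 : v a (π a) (q (π a)) ≥ v a (π a) (p (π a)) := (hanti a (π a)).antitone h
    linarith [hπEF a (σ a), hσEF a (π a)]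
  · -- counting argument: f := σ ∘ π⁻¹ maps S = {r | q r < p r} into itself,
    -- hence (being injective on a finite set) permutes S, so it preserves the complement.
    intro h
    by_contra hc
    push_neg at hc
    set S : Finset (Fin n) := Finset.univ.filter (fun r => q r < p r) with hS
    set f : Fin n → Fin n := fun r => σ (π.symm r) with hf
    have hfinj : Function.Injective f := by
      intro x y hxy
      simpa using π.symm.injective (σ.injective hxy)
    have hmaps : ∀ r ∈ S, f r ∈ S := by
      intro r hr
      simp only [hS, Finset.mem_filter, Finset.mem_univ, true_and] at hr ⊢
      have := price_comparison_strict n v hanti π σ p q hπEF hσEF (π.symm r)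
        (by simpa using hr)
      simpa [hf] using this
    have himg : S.image f = S := by
      apply Finset.eq_of_subset_of_card_le
      · intro x hx
        obtain ⟨y, hy, rfl⟩ := Finset.mem_image.mp hx
        exact hmaps y hy
      · rw [Finset.card_image_of_injective _ hfinj]
    have hσa : σ a ∈ S := by
      simp only [hS, Finset.mem_filter, Finset.mem_univ, true_and]
      exact hc
    have : σ a ∈ S.image f := by rw [himg]; exact hσa
    obtain ⟨y, hy, hfy⟩ := Finset.mem_image.mp this
    have : y = π a := by
      have : f (π a) = σ a := by simp [hf]
      exact hfinj (hfy.trans this.symm)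
    subst this
    simp only [hS, Finset.mem_filter, Finset.mem_univ, true_and] at hy
    linarith
end

section
/- Lemma 6.1 (c): Let (π, p) and (σ, q) be two envy-free solutions of a rent-division instance in which every utility function v a r : ℝ → ℝ is strictly decreasing. If for some agent a we have p (π a) ≤ q (π a), and room r' is tight for agent a under (π, p), i.e., π a ≠ r' and v a (π a) (p (π a)) = v a r' (p r'), then p r' ≤ q r'. -/
/-- Lemma 6.1 (c): price comparison for tight edges. -/
theorem price_comparison_tight
    (n : ℕ) (v : Fin n → Fin n → ℝ → ℝ)
    (hanti : ∀ a r, StrictAnti (v a r))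
    (π σ : Equiv.Perm (Fin n)) (p q : Fin n → ℝ)
    (hπEF : ∀ a r, v a r (p r) ≤ v a (π a) (p (π a)))
    (hσEF : ∀ a r, v a r (q r) ≤ v a (σ a) (q (σ a)))
    (a : Fin n) (r' : Fin n)
    (hle : p (π a) ≤ q (π a))
    (hne : π a ≠ r')
    (htight : v a (π a) (p (π a)) = v a r' (p r')) :
    p r' ≤ q r' := by
  by_contra h
  push_neg at h
  -- h : q r' < p r'
  -- Step: any agent whose π-room dropped strictly has its σ-room dropped strictly.
  have step : ∀ c : Fin n, q (π c) < p (π c) → q (σ c) < p (σ c) := by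
    intro c hc
    have h1 : v c (σ c) (p (σ c)) ≤ v c (π c) (p (π c)) := hπEF c (σ c)
    have h2 : v c (π c) (q (π c)) ≤ v c (σ c) (q (σ c)) := hσEF c (π c)
    have h3 : v c (π c) (p (π c)) < v c (π c) (q (π c)) := hanti c (π c) hc
    have h4 : v c (σ c) (p (σ c)) < v c (σ c) (q (σ c)) :=
      lt_of_le_of_lt h1 (lt_of_lt_of_le h3 h2)
    exact (hanti c (σ c)).lt_iff_gt.mp h4
  -- Agent a strictly gains via the tight room r', so σ a's price dropped strictly.
  have hsa : q (σ a) < p (σ a) := by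
    have h1 : v a (σ a) (p (σ a)) ≤ v a (π a) (p (π a)) := hπEF a (σ a)
    have h2 : v a r' (q r') ≤ v a (σ a) (q (σ a)) := hσEF a r'
    have h3 : v a r' (p r') < v a r' (q r') := hanti a r' h
    have h4 : v a (σ a) (p (σ a)) < v a (σ a) (q (σ a)) := by
      calc v a (σ a) (p (σ a)) ≤ v a (π a) (p (π a)) := h1
        _ = v a r' (p r') := htight
        _ < v a r' (q r') := h3
        _ ≤ v a (σ a) (q (σ a)) := h2
    exact (hanti a (σ a)).lt_iff_gt.mp h4
  have hpa : ¬ q (π a) < p (π a) := not_lt.mpr hle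
  -- Counting argument on the set of rooms whose price strictly dropped.
  set T : Finset (Fin n) := Finset.univ.filter (fun r => q r < p r) with hT
  have hsaT : σ a ∈ T := by simp [hT, hsa]
  have hmaps : ∀ r ∈ T, (π.symm.trans σ) r ∈ T.erase (σ a) := by
    intro r hr
    have hrT : q r < p r := by simpa [hT] using hr
    have hπ : π (π.symm r) = r := π.apply_symm_apply r
    have hmem : σ (π.symm r) ∈ T := by
      have := step (π.symm r) (by rw [hπ]; exact hrT)
      simp [hT, this]
    have hne2 : σ (π.symm r) ≠ σ a := by
      intro hcontra
      have : π.symm r = a := σ.injective hcontra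
      have : r = π a := by rw [← hπ, this]
      exact hpa (this ▸ hrT)
    exact Finset.mem_erase.mpr ⟨hne2, hmem⟩
  have hinj : Set.InjOn (π.symm.trans σ) T := fun x _ y _ hxy =>
    (π.symm.trans σ).injective hxy
  have hcard : T.card ≤ (T.erase (σ a)).card :=
    Finset.card_le_card_of_injOn _ hmaps hinj
  have hlt : (T.erase (σ a)).card < T.card :=
    Finset.card_erase_lt_of_mem hsaT
  exact absurd hcard (not_le.mpr hlt)
end

section
/- Componentwise-minimum lemma (proved inside Lemma 4.3): Let v : Fin n → Fin n → ℝ → ℝ be utilities such that each function v a r : ℝ → ℝ is antitone (monotone nonincreasing), and let π be a permutation of Fin n. If both (π, p) and (π, p') are envy-free solutions, then (π, q) is also an envy-free solution, where q r := min (p r) (p' r) for every room r. -/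
/-- Componentwise-minimum lemma (proved inside Lemma 4.3): the componentwise
minimum of two envy-free price vectors for the same allocation is envy free. -/
theorem min_prices_envy_free
    (n : ℕ) (v : Fin n → Fin n → ℝ → ℝ)
    (hanti : ∀ a r, Antitone (v a r))
    (π : Equiv.Perm (Fin n)) (p p' : Fin n → ℝ)
    (hEF : ∀ a r, v a r (p r) ≤ v a (π a) (p (π a)))
    (hEF' : ∀ a r, v a r (p' r) ≤ v a (π a) (p' (π a))) :
    ∀ a r, v a r (min (p r) (p' r)) ≤ v a (π a) (min (p (π a)) (p' (π a))) := by
  intro a r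
  rcases le_total (p r) (p' r) with h | h
  · rw [min_eq_left h]
    exact (hEF a r).trans (hanti a (π a) (min_le_left _ _))
  · rw [min_eq_right h]
    exact (hEF' a r).trans (hanti a (π a) (min_le_right _ _))
end

section
/- Lemma 7.4 (Characterization of E_p): Let v satisfy the standing assumptions and let (π, p) be an envy-free solution with p r ≥ 0 for every room r. Say that room t is tight for agent a if π a ≠ t and v a (π a) (p (π a)) = v a t (p t), and define a step relation on rooms by Step s t ↔ room t is tight for agent π⁻¹ s. Then for every room r the following are equivalent: (i) p r ≤ q r for every envy-free solution (σ, q) with q r' ≥ 0 for all rooms r' (that is, r belongs to E_p, the set of rooms whose price is already the minimum possible over nonnegative envy-free prices); (ii) there exists a room z with p z = 0 such that r is reachable from z, i.e., the reflexive-transitive closure of Step relates z to r. -/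
/-- A function `f : ℝ → ℝ` is piecewise linear: there are finitely many
breakpoints `b 0 < … < b t` such that `f` is affine on `(-∞, b 0]`, on each
`[b i, b (i+1)]`, and on `[b t, ∞)`. -/
def PiecewiseLinear (f : ℝ → ℝ) : Prop :=
  ∃ (t : ℕ) (b : Fin (t + 1) → ℝ), StrictMono b ∧
    (∃ m c : ℝ, ∀ x ≤ b 0, f x = m * x + c) ∧
    (∀ i : Fin t, ∃ m c : ℝ,
      ∀ x ∈ Set.Icc (b i.castSucc) (b i.succ), f x = m * x + c) ∧
    (∃ m c : ℝ, ∀ x, b (Fin.last t) ≤ x → f x = m * x + c)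


namespace RentAux
open List Equiv



variable {α : Type*}

/-- Product of weights along adjacent pairs of a list. -/
def pprod (c : α → α → ℝ) : List α → ℝ
  | [] => 1
  | [_] => 1
  | x :: y :: tl => c x y * pprod c (y :: tl)

@[simp] lemma pprod_nil (c : α → α → ℝ) : pprod c [] = 1 := rfl
@[simp] lemma pprod_singleton (c : α → α → ℝ) (x : α) : pprod c [x] = 1 := rfl
lemma pprod_cons_cons (c : α → α → ℝ) (x y : α) (tl : List α) :
    pprod c (x :: y :: tl) = c x y * pprod c (y :: tl) := rfl

lemma pprod_cons (c : α → α → ℝ) (x : α) {l : List α} (h : l ≠ []) :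
    pprod c (x :: l) = c x (l.head h) * pprod c l := by
  cases l with
  | nil => exact absurd rfl h
  | cons y tl => rfl

lemma pprod_pos {c : α → α → ℝ} (hc : ∀ s t, 0 < c s t) : ∀ l : List α, 0 < pprod c l
  | [] => one_pos
  | [_] => one_pos
  | x :: y :: tl => by
      rw [pprod_cons_cons]
      exact mul_pos (hc x y) (pprod_pos hc (y :: tl))

lemma pprod_append_singleton (c : α → α → ℝ) :
    ∀ (l : List α) (h : l ≠ []) (x : α),
      pprod c (l ++ [x]) = pprod c l * c (l.getLast h) x
  | [], h, x => absurd rfl h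
  | [a], _, x => by simp [pprod_cons_cons]
  | a :: b :: tl, _, x => by
      rw [cons_append, cons_append, pprod_cons_cons, ← cons_append,
        pprod_append_singleton c (b :: tl) (cons_ne_nil _ _) x, pprod_cons_cons,
        getLast_cons (cons_ne_nil _ _)]
      ring

lemma pprod_split (c : α → α → ℝ) :
    ∀ (l1 : List α) (x : α) (l2 : List α),
      pprod c (l1 ++ x :: l2) = pprod c (l1 ++ [x]) * pprod c (x :: l2)
  | [], x, l2 => by simp
  | a :: l1, x, l2 => by
      have h1 : l1 ++ x :: l2 ≠ [] := by simp
      have h2 : l1 ++ [x] ≠ [] := by simp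
      rw [cons_append, cons_append, pprod_cons c a h1, pprod_cons c a h2,
        pprod_split c l1 x l2]
      have : (l1 ++ x :: l2).head h1 = (l1 ++ [x]).head h2 := by
        cases l1 <;> simp
      rw [this]; ring

lemma pprod_congr {c c' : α → α → ℝ} :
    ∀ {l : List α}, (∀ s t, s ∈ l → t ∈ l.tail → c s t = c' s t) → pprod c l = pprod c' l
  | [], _ => rfl
  | [_], _ => rfl
  | x :: y :: tl, h => by
      rw [pprod_cons_cons, pprod_cons_cons,
        h x y mem_cons_self mem_cons_self,
        pprod_congr (fun s t hs ht => h s t (mem_cons_of_mem _ hs) (mem_cons_of_mem _ ht))]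

lemma pprod_inv (c : α → α → ℝ) :
    ∀ (l : List α), pprod (fun s t => (c s t)⁻¹) l = (pprod c l)⁻¹
  | [] => by simp
  | [_] => by simp
  | x :: y :: tl => by
      rw [pprod_cons_cons, pprod_cons_cons, mul_inv, pprod_inv c (y :: tl)]

section FormPerm
variable [DecidableEq α]

lemma prod_map_formPerm (F : α → α → ℝ) :
    ∀ (l : List α) (h : l ≠ []), l.Nodup →
      (l.map (fun s => F s (l.formPerm s))).prod
        = pprod F l * F (l.getLast h) (l.head h)
  | [], h, _ => absurd rfl h
  | [x], _, _ => by
      simp [pprod]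
  | x :: y :: tl, _, hnd => by
      have hx : x ∉ y :: tl := by
        simpa using (nodup_cons.1 hnd).1
      have hnd' : (y :: tl).Nodup := (nodup_cons.1 hnd).2
      have hhead : (x :: y :: tl).formPerm x = y := formPerm_apply_head x y tl hnd
      have happ : ∀ s ∈ (y :: tl), (x :: y :: tl).formPerm s
          = Equiv.swap x y ((y :: tl).formPerm s) := by
        intro s _
        rw [formPerm_cons_cons, Equiv.Perm.mul_apply]
      have hmapeq : ((y :: tl).map (fun s => F s ((x :: y :: tl).formPerm s)))
          = ((y :: tl).map (fun s => (fun s t => F s (Equiv.swap x y t)) s ((y :: tl).formPerm s))) := by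
        apply map_congr_left
        intro s hs
        rw [happ s hs]
      have hIH := prod_map_formPerm (fun s t => F s (Equiv.swap x y t)) (y :: tl)
          (cons_ne_nil _ _) hnd'
      have hpc : pprod (fun s t => F s (Equiv.swap x y t)) (y :: tl) = pprod F (y :: tl) := by
        apply pprod_congr
        intro s t _ ht
        have ht' : t ∈ tl := ht
        have htx : t ≠ x := fun h => hx (h ▸ mem_cons_of_mem _ ht')
        have hty : t ≠ y := fun h => (nodup_cons.1 hnd').1 (h ▸ ht')
        rw [Equiv.swap_apply_of_ne_of_ne htx hty]
      have hlast : (x :: y :: tl).getLast (cons_ne_nil _ _)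
          = (y :: tl).getLast (cons_ne_nil _ _) := getLast_cons (cons_ne_nil _ _)
      rw [map_cons, prod_cons, hhead, hmapeq, hIH, hpc, pprod_cons_cons, hlast]
      simp [Equiv.swap_apply_right]
      ring

lemma formPerm_edges {R : α → α → Prop} (l : List α) (hne : l ≠ []) (hnd : l.Nodup)
    (hch : l.Chain' R) (hcl : R (l.getLast hne) (l.head hne)) :
    ∀ x ∈ l, R x (l.formPerm x) := by
  intro x hx
  obtain ⟨i, hi, rfl⟩ := List.mem_iff_getElem.1 hx
  rcases lt_or_eq_of_le (Nat.succ_le_of_lt hi) with h1 | h1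
  · rw [formPerm_apply_lt_getElem l hnd i h1]
    have h2 := List.isChain_iff_getElem.1 hch i (by omega)
    simpa using h2
  · have hlast : l[i] = l.getLast hne := by
      rw [List.getLast_eq_getElem]
      congr 1
      omega
    have hhead : l.head hne = l[0] := by
      rw [List.head_eq_getElem]
    rw [hlast]
    cases l with
    | nil => exact absurd rfl hne
    | cons a as =>
        have h2 : (a :: as).formPerm ((a :: as).getLast hne) = a :=
          List.formPerm_apply_getLast a as
        rw [h2]
        exact hcl

end FormPerm
section Potential

variable [Fintype α] [DecidableEq α]

/-- A list containing every nodup list over a fintype. -/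
noncomputable def allNodup (α : Type*) [Fintype α] [DecidableEq α] : List (List α) :=
  (Finset.univ.toList (α := α)).sublists.flatMap List.permutations

lemma mem_allNodup {l : List α} (h : l.Nodup) : l ∈ allNodup α := by
  classical
  set u := Finset.univ.toList (α := α) with hu
  have hund : u.Nodup := Finset.nodup_toList _
  set l' := u.filter (fun x => decide (x ∈ l)) with hl'
  have hsub : l' <+ u := filter_sublist
  have hnd' : l'.Nodup := hund.sublist hsub
  have hperm : l ~ l' := by
    rw [List.perm_ext_iff_of_nodup h hnd']
    intro a
    simp [hl', hu, Finset.mem_toList]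
  refine List.mem_flatMap.2 ⟨l', List.mem_sublists.2 hsub, ?_⟩
  exact List.mem_permutations.2 hperm

lemma nodup_of_mem_allNodup {l : List α} (h : l ∈ allNodup α) : l.Nodup := by
  classical
  obtain ⟨l', hl', hperm⟩ := List.mem_flatMap.1 h
  have : l ~ l' := List.mem_permutations.1 hperm
  exact this.nodup_iff.2 ((Finset.nodup_toList _).sublist (List.mem_sublists.1 hl'))

theorem exists_potential (E : α → α → Prop) (c : α → α → ℝ)
    (hc : ∀ s t, 0 < c s t) (hirr : ∀ s t, E s t → s ≠ t)
    (hnbc : ∀ (l : List α) (h : l ≠ []), l.Nodup → l.Chain' E →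
      E (l.getLast h) (l.head h) → 1 ≤ pprod c l * c (l.getLast h) (l.head h)) :
    ∃ d : α → ℝ, (∀ t, 0 < d t) ∧ (∀ t, d t ≤ 1) ∧
      ∀ s t, E s t → d t ≤ c s t * d s := by
  classical
  -- candidate values at t : products of simple E-paths ending at t, together with 1
  set cand : α → Finset ℝ := fun t =>
    insert 1 ((((allNodup α).filter
      (fun l => decide (l ≠ [] ∧ l.Chain' E ∧ l.getLast? = some t))).map (pprod c)).toFinset)
    with hcand
  have hne : ∀ t, (cand t).Nonempty := fun t => ⟨1, Finset.mem_insert_self _ _⟩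
  set d : α → ℝ := fun t => (cand t).min' (hne t) with hd
  have hmem_cand : ∀ (t : α) (l : List α), l ∈ allNodup α → l ≠ [] → l.Chain' E →
      l.getLast? = some t → pprod c l ∈ cand t := by
    intro t l h1 h2 h3 h4
    refine Finset.mem_insert_of_mem ?_
    rw [List.mem_toFinset]
    exact List.mem_map.2 ⟨l, List.mem_filter.2 ⟨h1, by simp [h2, h3, h4]⟩, rfl⟩
  have hd_le : ∀ (t : α) (x : ℝ), x ∈ cand t → d t ≤ x := fun t x hx =>
    Finset.min'_le _ _ hx
  have hd1 : ∀ t, d t ≤ 1 := fun t => hd_le t 1 (Finset.mem_insert_self _ _)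
  have hdpos : ∀ t, 0 < d t := by
    intro t
    have hm : d t ∈ cand t := Finset.min'_mem (cand t) (hne t)
    rcases Finset.mem_insert.1 hm with h | h
    · rw [h]; exact one_pos
    · rw [List.mem_toFinset] at h
      obtain ⟨l, _, hl2⟩ := List.mem_map.1 h
      rw [← hl2]
      exact pprod_pos hc l
  refine ⟨d, hdpos, hd1, ?_⟩
  intro s t hEst
  have hst : s ≠ t := hirr s t hEst
  have hm : d s ∈ cand s := Finset.min'_mem (cand s) (hne s)
  rcases Finset.mem_insert.1 hm with h | h
  · -- d s = 1 ; use the path [s, t]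
    have hpath : pprod c [s, t] ∈ cand t := by
      apply hmem_cand t [s, t] (mem_allNodup (by simp [hst])) (by simp)
      · simp [List.Chain', List.isChain_cons_cons, hEst]
      · simp
    have : pprod c [s, t] = c s t := by simp [pprod_cons_cons, pprod]
    have h2 := hd_le t _ hpath
    rw [this] at h2
    rw [h]
    simpa using h2
  · rw [List.mem_toFinset] at h
    obtain ⟨P, hPmem, hPval⟩ := List.mem_map.1 h
    obtain ⟨hPall, hPprops⟩ := List.mem_filter.1 hPmem
    have hPnd : P.Nodup := nodup_of_mem_allNodup hPall
    have hPprops' : P ≠ [] ∧ P.Chain' E ∧ P.getLast? = some s := by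
      simpa using hPprops
    obtain ⟨hPne, hPch, hPlast?⟩ := hPprops'
    have hPlast : P.getLast hPne = s := by
      have := List.getLast?_eq_getLast (l := P) hPne
      rw [this] at hPlast?
      exact Option.some.inj hPlast?
    by_cases ht : t ∈ P
    · -- split P = P1 ++ t :: P2 ; cycle (t :: P2), new path P1 ++ [t]
      obtain ⟨P1, P2, rfl⟩ := List.append_of_mem ht
      have hP2ne : P2 ≠ [] := by
        rintro rfl
        apply hst
        rw [← hPlast]
        simp [List.getLast_append]
      have hsuffix : (t :: P2) <:+ (P1 ++ t :: P2) := suffix_append P1 (t :: P2)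
      have hCnd : (t :: P2).Nodup := hPnd.sublist hsuffix.sublist
      have hCch : (t :: P2).Chain' E := hPch.suffix hsuffix
      have hClast : (t :: P2).getLast (cons_ne_nil _ _) = s := by
        rw [← hPlast]
        exact (List.getLast_append_of_ne_nil _ _).symm
      have hChead : (t :: P2).head (cons_ne_nil _ _) = t := rfl
      have hcycle := hnbc (t :: P2) (cons_ne_nil _ _) hCnd hCch
        (by rw [hClast, hChead]; exact hEst)
      rw [hClast, hChead] at hcycle
      -- the path Q = P1 ++ [t]
      have hQeq : P1 ++ t :: P2 = (P1 ++ [t]) ++ P2 := by simp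
      have hQprefix : (P1 ++ [t]) <+: (P1 ++ t :: P2) := ⟨P2, hQeq.symm⟩
      have hQnd : (P1 ++ [t]).Nodup := hPnd.sublist hQprefix.sublist
      have hQch : (P1 ++ [t]).Chain' E := hPch.prefix hQprefix
      have hQlast : (P1 ++ [t]).getLast? = some t := by simp
      have hQmem : pprod c (P1 ++ [t]) ∈ cand t :=
        hmem_cand t _ (mem_allNodup hQnd) (by simp) hQch hQlast
      have hdQ := hd_le t _ hQmem
      have hsplit : pprod c (P1 ++ t :: P2)
          = pprod c (P1 ++ [t]) * pprod c (t :: P2) := pprod_split c P1 t P2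
      have hCpos : 0 < pprod c (t :: P2) := pprod_pos hc _
      have hQpos : 0 < pprod c (P1 ++ [t]) := pprod_pos hc _
      -- d t ≤ pprod Q = pprod P / pprod C ≤ c s t * pprod P = c s t * d s
      rw [← hPval, hsplit]
      calc d t ≤ pprod c (P1 ++ [t]) := hdQ
        _ ≤ c s t * (pprod c (P1 ++ [t]) * pprod c (t :: P2)) := by nlinarith
    · -- extend P by t
      have hQnd : (P ++ [t]).Nodup := by
        rw [List.nodup_append]
        exact ⟨hPnd, by simp, by intro a ha b hb; simp at hb; subst hb; rintro rfl; exact ht ha⟩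
      have hQch : (P ++ [t]).Chain' E := by
        rw [List.Chain', List.isChain_append]
        refine ⟨hPch, by simp, ?_⟩
        intro x hx y hy
        rw [hPlast?] at hx
        simp at hx hy
        rw [← hx, ← hy]
        exact hEst
      have hQmem : pprod c (P ++ [t]) ∈ cand t :=
        hmem_cand t _ (mem_allNodup hQnd) (by simp) hQch (by simp)
      have hdQ := hd_le t _ hQmem
      rw [pprod_append_singleton c P hPne t, hPlast] at hdQ
      rw [← hPval]
      linarith [hdQ]
  
end Potential


lemma exists_left_slope {f : ℝ → ℝ} (hplf : PiecewiseLinear f) (hanti : StrictAnti f)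
    (y : ℝ) : ∃ L η : ℝ, 0 < L ∧ 0 < η ∧
      ∀ ε : ℝ, 0 ≤ ε → ε ≤ η → f (y - ε) = f y + L * ε := by
  obtain ⟨t, b, hb, ⟨m0, c0, h0⟩, hmid, ⟨mL, cL, hL⟩⟩ := hplf
  have key : ∀ m c η : ℝ, 0 < η → (∀ x, y - η ≤ x → x ≤ y → f x = m * x + c) →
      ∃ L η' : ℝ, 0 < L ∧ 0 < η' ∧
        ∀ ε : ℝ, 0 ≤ ε → ε ≤ η' → f (y - ε) = f y + L * ε := by
    intro m c η hη hx
    have hfy : f y = m * y + c := hx y (by linarith) le_rfl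
    have hval : ∀ ε : ℝ, 0 ≤ ε → ε ≤ η → f (y - ε) = f y + (-m) * ε := by
      intro ε h1 h2
      have := hx (y - ε) (by linarith) (by linarith)
      rw [this, hfy]; ring
    have hLpos : 0 < -m := by
      have h1 := hval η (le_of_lt hη) le_rfl
      have h2 : f y < f (y - η) := hanti (by linarith)
      nlinarith
    exact ⟨-m, η, hLpos, hη, hval⟩
  by_cases hy0 : y ≤ b 0
  · exact key m0 c0 1 one_pos (fun x _ hxy => h0 x (le_trans hxy hy0))
  by_cases hyL : b (Fin.last t) < y
  · exact key mL cL (y - b (Fin.last t)) (by linarith)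
      (fun x hx1 _ => hL x (by linarith))
  push_neg at hy0 hyL
  -- now b 0 < y ≤ b (last)
  have hJne : (Finset.univ.filter (fun j : Fin (t + 1) => y ≤ b j)).Nonempty :=
    ⟨Fin.last t, by simp [hyL]⟩
  set j := (Finset.univ.filter (fun j : Fin (t + 1) => y ≤ b j)).min' hJne with hj
  have hjmem := Finset.min'_mem _ hJne
  rw [← hj] at hjmem
  have hjy : y ≤ b j := (Finset.mem_filter.1 hjmem).2
  have hj0 : j ≠ 0 := by
    intro h
    rw [h] at hjy
    linarith
  obtain ⟨i, hi⟩ := Fin.eq_succ_of_ne_zero hj0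
  rw [hi] at hjy
  have hlt : b i.castSucc < y := by
    by_contra h
    push_neg at h
    have hmem : i.castSucc ∈ Finset.univ.filter (fun j : Fin (t + 1) => y ≤ b j) := by
      simp [h]
    have h2 := Finset.min'_le _ _ hmem
    rw [← hj, hi] at h2
    exact absurd h2 (not_le.2 Fin.castSucc_lt_succ)
  obtain ⟨m, c, hm⟩ := hmid i
  exact key m c (y - b i.castSucc) (by linarith)
    (fun x hx1 hx2 => hm x ⟨by linarith, le_trans hx2 hjy⟩)




set_option maxHeartbeats 800000 in
theorem bwdmain
    (n : ℕ) (v : Fin n → Fin n → ℝ → ℝ)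
    (hanti : ∀ a r, StrictAnti (v a r))
    (π : Equiv.Perm (Fin n)) (p : Fin n → ℝ)
    (hEF : ∀ a r, v a r (p r) ≤ v a (π a) (p (π a)))
    (r : Fin n)
    (h : ∃ z : Fin n, p z = 0 ∧
        Relation.ReflTransGen
          (fun s t : Fin n =>
            π (π.symm s) ≠ t ∧
            v (π.symm s) (π (π.symm s)) (p (π (π.symm s))) =
              v (π.symm s) t (p t))
          z r) :
    (∀ (σ : Equiv.Perm (Fin n)) (q : Fin n → ℝ),
        (∀ a r', v a r' (q r') ≤ v a (σ a) (q (σ a))) →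
        (∀ r', 0 ≤ q r') → p r ≤ q r) := by
  obtain ⟨z, hz0, hzr⟩ := h
  intro σ q hEFq hq0
  -- propagation under the room permutation G = π ∘ σ⁻¹
  have hA : ∀ b : Fin n, p (σ b) ≤ q (σ b) → p (π b) ≤ q (π b) := by
    intro b hb
    have h1 : v b (π b) (q (π b)) ≤ v b (σ b) (q (σ b)) := hEFq b (π b)
    have h2 : v b (σ b) (q (σ b)) ≤ v b (σ b) (p (σ b)) := (hanti b (σ b)).antitone hb
    have h3 : v b (σ b) (p (σ b)) ≤ v b (π b) (p (π b)) := hEF b (σ b)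
    exact ((hanti b (π b)).le_iff_ge).1 (le_trans h1 (le_trans h2 h3))
  set G : Equiv.Perm (Fin n) := π * σ⁻¹ with hG
  have hGstep : ∀ s : Fin n, p s ≤ q s → p (G s) ≤ q (G s) := by
    intro s hs
    have : G s = π (σ.symm s) := rfl
    rw [this]
    apply hA
    simpa using hs
  have hGiter : ∀ (k : ℕ) (s : Fin n), p s ≤ q s → p ((G ^ k) s) ≤ q ((G ^ k) s) := by
    intro k
    induction k with
    | zero => intro s hs; simpa using hs
    | succ k ih =>
        intro s hs
        have : (G ^ (k + 1)) s = (G ^ k) (G s) := by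
          rw [pow_succ]
          rfl
        rw [this]
        exact ih (G s) (hGstep s hs)
  have hGinv : ∀ s : Fin n, p s ≤ q s → p (σ (π.symm s)) ≤ q (σ (π.symm s)) := by
    intro s hs
    have hpos : 0 < orderOf G := orderOf_pos G
    have hpow : G ^ orderOf G = 1 := pow_orderOf_eq_one G
    have hinv : G ^ (orderOf G - 1) = G⁻¹ := by
      apply eq_inv_of_mul_eq_one_left
      rw [← pow_succ]
      rw [Nat.sub_add_cancel hpos]
      exact hpow
    have hGinvs : G⁻¹ s = σ (π.symm s) := by
      rw [hG]
      simp [mul_inv_rev]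
    have := hGiter (orderOf G - 1) s hs
    rw [hinv, hGinvs] at this
    exact this
  have hstep : ∀ s u : Fin n, p s ≤ q s →
      (π (π.symm s) ≠ u ∧
        v (π.symm s) (π (π.symm s)) (p (π (π.symm s))) = v (π.symm s) u (p u)) →
      p u ≤ q u := by
    intro s u hs hsu
    obtain ⟨hne, heq⟩ := hsu
    set a := π.symm s with ha
    have hπa : π a = s := Equiv.apply_symm_apply π s
    rw [hπa] at heq
    have hσa : p (σ a) ≤ q (σ a) := hGinv s hs
    have h1 : v a u (q u) ≤ v a (σ a) (q (σ a)) := hEFq a u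
    have h2 : v a (σ a) (q (σ a)) ≤ v a (σ a) (p (σ a)) := (hanti a (σ a)).antitone hσa
    have h3 : v a (σ a) (p (σ a)) ≤ v a (π a) (p (π a)) := hEF a (σ a)
    rw [hπa] at h3
    have h4 : v a u (q u) ≤ v a u (p u) := by
      rw [← heq]
      exact le_trans h1 (le_trans h2 h3)
    exact ((hanti a u).le_iff_ge).1 h4
  induction hzr with
  | refl => rw [hz0]; exact hq0 z
  | tail h1 h2 ih => exact hstep _ _ ih h2


section
open Finset

set_option maxHeartbeats 1000000 in
theorem fwdmain
    (n : ℕ) (v : Fin n → Fin n → ℝ → ℝ)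
    (hanti : ∀ a r, StrictAnti (v a r))
    (hpl : ∀ a r, PiecewiseLinear (v a r))
    (π : Equiv.Perm (Fin n)) (p : Fin n → ℝ)
    (hEF : ∀ a r, v a r (p r) ≤ v a (π a) (p (π a)))
    (hp : ∀ r, 0 ≤ p r) (r : Fin n)
    (hno : ¬ (∃ z : Fin n, p z = 0 ∧
        Relation.ReflTransGen
          (fun s t : Fin n =>
            π (π.symm s) ≠ t ∧
            v (π.symm s) (π (π.symm s)) (p (π (π.symm s))) =
              v (π.symm s) t (p t))
          z r)) :
    ∃ (σ : Equiv.Perm (Fin n)) (q : Fin n → ℝ),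
      (∀ a r', v a r' (q r') ≤ v a (σ a) (q (σ a))) ∧
      (∀ r', 0 ≤ q r') ∧ q r < p r := by
  classical
  set Step : Fin n → Fin n → Prop := fun s t =>
    π (π.symm s) ≠ t ∧ v (π.symm s) (π (π.symm s)) (p (π (π.symm s))) = v (π.symm s) t (p t)
    with hStep
  set D : Set (Fin n) := {s | Relation.ReflTransGen Step s r} with hD
  have hDr : r ∈ D := Relation.ReflTransGen.refl
  have hDpos : ∀ t ∈ D, 0 < p t := by
    intro t ht
    rcases lt_or_eq_of_le (hp t) with h | h
    · exact h
    · exact absurd ⟨t, h.symm, ht⟩ hno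
  have hDclosed : ∀ s t : Fin n, Step s t → t ∈ D → s ∈ D := fun s t h1 h2 =>
    Relation.ReflTransGen.head h1 h2
  -- left slopes
  have hslope : ∀ a t : Fin n, ∃ Lv ηv : ℝ, 0 < Lv ∧ 0 < ηv ∧
      ∀ ε, 0 ≤ ε → ε ≤ ηv → v a t (p t - ε) = v a t (p t) + Lv * ε :=
    fun a t => RentAux.exists_left_slope (hpl a t) (hanti a t) (p t)
  choose L η hLpos hηpos hlin using hslope
  -- admissible assignments and the potential Φ
  set S : Set (Equiv.Perm (Fin n)) := {σ | (∀ a t, v a t (p t) ≤ v a (σ a) (p (σ a)))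
    ∧ ∀ a, π a ∉ D → σ a = π a} with hS
  have hπS : π ∈ S := ⟨hEF, fun a _ => rfl⟩
  set Φ : Equiv.Perm (Fin n) → ℝ := fun σ => ∏ a, L a (σ a) with hΦ
  obtain ⟨σh, hσhmem, hσhmax⟩ :
      ∃ σh ∈ Finset.univ.filter (fun σ : Equiv.Perm (Fin n) => σ ∈ S),
        ∀ σ' ∈ Finset.univ.filter (fun σ : Equiv.Perm (Fin n) => σ ∈ S), Φ σ' ≤ Φ σh := by
    apply Finset.exists_max_image
    exact ⟨π, by simp [hπS]⟩
  have hσhS : σh ∈ S := (Finset.mem_filter.1 hσhmem).2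
  -- membership transfer between π and σh
  have hcard : ∀ τ : Equiv.Perm (Fin n),
      (Finset.univ.filter (fun a => τ a ∈ D)).card
        = (Finset.univ.filter (fun t => t ∈ D)).card := by
    intro τ
    apply Finset.card_bij (fun a _ => τ a)
    · intro a ha; simp only [Finset.mem_filter, Finset.mem_univ, true_and] at ha ⊢; exact ha
    · intro a _ b _ h; exact τ.injective h
    · intro t ht
      simp only [Finset.mem_filter, Finset.mem_univ, true_and] at ht
      exact ⟨τ.symm t, by simp only [Finset.mem_filter, Finset.mem_univ, true_and,
        Equiv.apply_symm_apply]; exact ht, by simp⟩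
  have hsubset : Finset.univ.filter (fun a => σh a ∈ D)
      ⊆ Finset.univ.filter (fun a => π a ∈ D) := by
    intro a ha
    simp only [Finset.mem_filter, Finset.mem_univ, true_and] at ha ⊢
    by_contra h
    rw [hσhS.2 a h] at ha
    exact h ha
  have hfeq : Finset.univ.filter (fun a => σh a ∈ D)
      = Finset.univ.filter (fun a => π a ∈ D) :=
    Finset.eq_of_subset_of_card_le hsubset (by rw [hcard, hcard])
  have hiff : ∀ a, σh a ∈ D ↔ π a ∈ D := by
    intro a
    constructor
    · intro h
      have : a ∈ Finset.univ.filter (fun a => π a ∈ D) := by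
        rw [← hfeq]; simp [h]
      simpa using this
    · intro h
      have : a ∈ Finset.univ.filter (fun a => σh a ∈ D) := by
        rw [hfeq]; simp [h]
      simpa using this
  have hout : ∀ a, σh a ∉ D → σh a = π a := by
    intro a h
    exact hσhS.2 a (fun h' => h ((hiff a).2 h'))
  -- tight graph within D and weights
  set E : Fin n → Fin n → Prop := fun s t => s ∈ D ∧ t ∈ D ∧ s ≠ t ∧
    v (σh.symm s) t (p t) = v (σh.symm s) s (p s) with hE
  set c : Fin n → Fin n → ℝ := fun s t => L (σh.symm s) s / L (σh.symm s) t with hc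
  have hcpos : ∀ s t, 0 < c s t := fun s t => div_pos (hLpos _ _) (hLpos _ _)
  have hirr : ∀ s t, E s t → s ≠ t := fun s t h => h.2.2.1
  have hΦpos : ∀ τ, 0 < Φ τ := fun τ => Finset.prod_pos (fun a _ => hLpos a (τ a))
  -- no bad cycles, by maximality of Φ at σh
  have hnbc : ∀ (l : List (Fin n)) (h : l ≠ []), l.Nodup → l.Chain' E →
      E (l.getLast h) (l.head h) →
      1 ≤ RentAux.pprod c l * c (l.getLast h) (l.head h) := by
    intro l hlne hlnd hlch hlcl
    have hedge : ∀ x ∈ l, E x (l.formPerm x) :=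
      RentAux.formPerm_edges l hlne hlnd hlch hlcl
    have hlD : ∀ x ∈ l, x ∈ D := fun x hx => (hedge x hx).1
    set σ' : Equiv.Perm (Fin n) := l.formPerm * σh with hσ'
    have hσ'app : ∀ a, σ' a = l.formPerm (σh a) := fun a => rfl
    have hσ'S : σ' ∈ S := by
      constructor
      · intro a t
        by_cases hmem : σh a ∈ l
        · have he := (hedge (σh a) hmem).2.2.2
          rw [Equiv.symm_apply_apply] at he
          rw [hσ'app, he]
          exact hσhS.1 a t
        · rw [hσ'app, List.formPerm_apply_of_notMem hmem]
          exact hσhS.1 a t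
      · intro a ha
        have h1 : σh a = π a := hσhS.2 a ha
        have h2 : σh a ∉ l := fun hmem => ha (h1 ▸ hlD _ hmem)
        rw [hσ'app, List.formPerm_apply_of_notMem h2, h1]
    have hle : Φ σ' ≤ Φ σh := hσhmax σ' (by simp [hσ'S])
    set F : Fin n → Fin n → ℝ := fun s t => L (σh.symm s) t / L (σh.symm s) s with hF
    have hFpos : ∀ s t, 0 < F s t := fun s t => div_pos (hLpos _ _) (hLpos _ _)
    have key1 : ∏ s ∈ l.toFinset, F s (l.formPerm s)
        = RentAux.pprod F l * F (l.getLast hlne) (l.head hlne) := by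
      rw [List.prod_toFinset _ hlnd]
      exact RentAux.prod_map_formPerm F l hlne hlnd
    have key2 : ∏ s, F s (l.formPerm s) = ∏ s ∈ l.toFinset, F s (l.formPerm s) := by
      symm
      apply Finset.prod_subset (Finset.subset_univ _)
      intro x _ hx
      rw [List.formPerm_apply_of_notMem (fun h => hx (List.mem_toFinset.2 h))]
      exact div_self (ne_of_gt (hLpos _ _))
    have key3a : ∏ s, L (σh.symm s) (l.formPerm s) = Φ σ' := by
      rw [hΦ]
      rw [← Equiv.prod_comp σh (fun s => L (σh.symm s) (l.formPerm s))]
      apply Finset.prod_congr rfl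
      intro a _
      rw [Equiv.symm_apply_apply, hσ'app]
    have key3b : ∏ s, L (σh.symm s) s = Φ σh := by
      rw [hΦ]
      rw [← Equiv.prod_comp σh (fun s => L (σh.symm s) s)]
      apply Finset.prod_congr rfl
      intro a _
      rw [Equiv.symm_apply_apply]
    have key3 : ∏ s, F s (l.formPerm s) = Φ σ' / Φ σh := by
      rw [← key3a, ← key3b, ← Finset.prod_div_distrib]
    have hX : RentAux.pprod F l * F (l.getLast hlne) (l.head hlne) = Φ σ' / Φ σh := by
      rw [← key1, ← key2, key3]
    have hXle1 : RentAux.pprod F l * F (l.getLast hlne) (l.head hlne) ≤ 1 := by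
      rw [hX]
      exact div_le_one_of_le₀ hle (le_of_lt (hΦpos σh))
    have hcF : c = fun s t => (F s t)⁻¹ := by
      funext s t
      rw [hc, hF]
      dsimp only
      rw [inv_div]
    have hpc : RentAux.pprod c l = (RentAux.pprod F l)⁻¹ := by
      rw [hcF]
      exact RentAux.pprod_inv F l
    rw [hpc, hcF]
    dsimp only
    rw [← mul_inv]
    exact (one_le_inv_iff₀).2 ⟨mul_pos (RentAux.pprod_pos hFpos l) (hFpos _ _), hXle1⟩
  obtain ⟨d, hdpos, hd1, hdedge⟩ := RentAux.exists_potential E c hcpos hirr hnbc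
  -- choice of ε
  set B : Fin n × Fin n → ℝ := fun x =>
    if x.2 ∈ D then
      min (η x.1 x.2) (min (p x.2)
        (if v x.1 x.2 (p x.2) = v x.1 (σh x.1) (p (σh x.1)) then 1
         else (v x.1 (σh x.1) (p (σh x.1)) - v x.1 x.2 (p x.2)) / L x.1 x.2))
    else 1 with hB
  have hBpos : ∀ x, 0 < B x := by
    rintro ⟨a, t⟩
    rw [hB]
    dsimp only
    split_ifs with h1 h2
    · exact lt_min (hηpos a t) (lt_min (hDpos t h1) one_pos)
    · refine lt_min (hηpos a t) (lt_min (hDpos t h1) ?_)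
      apply div_pos _ (hLpos a t)
      have h3 := hσhS.1 a t
      rcases lt_or_eq_of_le h3 with h4 | h4
      · linarith
      · exact absurd h4 h2
    · exact one_pos
  have huniv_ne : (Finset.univ : Finset (Fin n × Fin n)).Nonempty :=
    ⟨(r, r), Finset.mem_univ _⟩
  set ε : ℝ := min 1 (Finset.univ.inf' huniv_ne B) with hε
  have hεpos : 0 < ε := by
    refine lt_min one_pos ?_
    rw [Finset.lt_inf'_iff]
    exact fun x _ => hBpos x
  have hε1 : ε ≤ 1 := min_le_left _ _
  have hεB : ∀ a t, ε ≤ B (a, t) := fun a t =>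
    le_trans (min_le_right _ _) (Finset.inf'_le _ (Finset.mem_univ _))
  have hεη : ∀ a t, t ∈ D → ε ≤ η a t := by
    intro a t ht
    have h1 := hεB a t
    rw [hB] at h1
    simp only [ht, if_pos] at h1
    exact le_trans h1 (min_le_left _ _)
  have hεp : ∀ t, t ∈ D → ε ≤ p t := by
    intro t ht
    have h1 := hεB t t
    rw [hB] at h1
    simp only [ht, if_pos] at h1
    exact le_trans h1 (le_trans (min_le_right _ _) (min_le_left _ _))
  have hεgap : ∀ a t, t ∈ D → v a t (p t) ≠ v a (σh a) (p (σh a)) →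
      ε * L a t ≤ v a (σh a) (p (σh a)) - v a t (p t) := by
    intro a t ht hne
    have h1 := hεB a t
    rw [hB] at h1
    simp only [ht, if_pos] at h1
    have h2 : ε ≤ if v a t (p t) = v a (σh a) (p (σh a)) then (1:ℝ)
        else (v a (σh a) (p (σh a)) - v a t (p t)) / L a t :=
      le_trans h1 (le_trans (min_le_right _ _) (min_le_right _ _))
    rw [if_neg hne] at h2
    rw [← le_div_iff₀ (hLpos a t)]
    exact h2
  -- the perturbed prices
  set dd : Fin n → ℝ := fun t => if t ∈ D then d t else 0 with hdd
  set q : Fin n → ℝ := fun t => p t - ε * dd t with hq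
  have hdd0 : ∀ t, 0 ≤ dd t := by
    intro t
    rw [hdd]
    dsimp only
    split_ifs with h
    · exact le_of_lt (hdpos t)
    · exact le_rfl
  have hqle : ∀ t, q t ≤ p t := by
    intro t
    rw [hq]
    dsimp only
    nlinarith [hεpos, hdd0 t]
  have hqD : ∀ t, t ∈ D → q t = p t - ε * d t := by
    intro t ht
    rw [hq, hdd]
    simp [ht]
  have hεd_nonneg : ∀ t, 0 ≤ ε * d t := fun t =>
    mul_nonneg (le_of_lt hεpos) (le_of_lt (hdpos t))
  have hεd_le_ε : ∀ t, ε * d t ≤ ε := by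
    intro t
    nlinarith [hd1 t, hdpos t, hεpos]
  have hlinq : ∀ a t, t ∈ D → v a t (q t) = v a t (p t) + L a t * (ε * d t) := by
    intro a t ht
    rw [hqD t ht]
    exact hlin a t (ε * d t) (hεd_nonneg t) (le_trans (hεd_le_ε t) (hεη a t ht))
  refine ⟨σh, q, ?_, ?_, ?_⟩
  · -- envy-freeness of (σh, q)
    intro a t
    have hown : v a (σh a) (p (σh a)) ≤ v a (σh a) (q (σh a)) :=
      (hanti a (σh a)).antitone (hqle _)
    by_cases htD : t ∈ D
    · by_cases hts : t = σh a
      · rw [hts]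
      by_cases htight : v a t (p t) = v a (σh a) (p (σh a))
      · -- tight pair: σh a must be in D, giving a tight edge constraint
        have hsD : σh a ∈ D := by
          by_contra hs
          have hπa : σh a = π a := hout a hs
          have hstep : Step (σh a) t := by
            rw [hStep]
            have hsymm : π.symm (σh a) = a := by rw [hπa]; exact π.symm_apply_apply a
            have hππ : π (π.symm (σh a)) = σh a := Equiv.apply_symm_apply π (σh a)
            constructor
            · rw [hππ]; exact fun h => hts h.symm
            · rw [hsymm, ← hπa]; exact htight.symm
          exact hs (hDclosed _ _ hstep htD)
        have hedge : E (σh a) t := by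
          rw [hE]
          refine ⟨hsD, htD, fun h => hts h.symm, ?_⟩
          rw [Equiv.symm_apply_apply]
          rw [htight]
        have hdineq := hdedge _ _ hedge
        rw [hc] at hdineq
        dsimp only at hdineq
        rw [Equiv.symm_apply_apply] at hdineq
        have hmul : L a t * d t ≤ L a (σh a) * d (σh a) := by
          have hLt := hLpos a t
          rw [div_mul_eq_mul_div, le_div_iff₀ hLt] at hdineq
          nlinarith
        rw [hlinq a t htD, hlinq a (σh a) hsD, htight]
        nlinarith [mul_le_mul_of_nonneg_left hmul hεpos.le]
      · -- strict gap
        have h1 := hεgap a t htD htight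
        rw [hlinq a t htD]
        have h2 : L a t * (ε * d t) ≤ ε * L a t := by
          nlinarith [mul_le_mul_of_nonneg_left (hd1 t) (mul_nonneg hεpos.le (hLpos a t).le)]
        have h3 : v a t (p t) + L a t * (ε * d t) ≤ v a (σh a) (p (σh a)) := by
          linarith
        exact le_trans h3 hown
    · have hqt : q t = p t := by
        rw [hq, hdd]
        simp [htD]
      rw [hqt]
      exact le_trans (hσhS.1 a t) hown
  · -- nonnegativity of q
    intro t
    by_cases htD : t ∈ D
    · rw [hqD t htD]
      have h1 : ε * d t ≤ p t := le_trans (hεd_le_ε t) (hεp t htD)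
      linarith
    · rw [hq, hdd]
      simp [htD]
      exact hp t
  · -- strict decrease at r
    rw [hqD r hDr]
    nlinarith [hεpos, hdpos r]

end
end RentAux

/-- Lemma 7.4 (Characterization of `E_p`): under the standing assumptions,
for an envy-free solution `(π, p)` with nonnegative prices, the price of room
`r` is minimum possible (over all nonnegative envy-free prices) iff `r` is
reachable, via tight edges, from a room of price zero. -/
theorem characterization_of_Ep
    (n : ℕ) (v : Fin n → Fin n → ℝ → ℝ)
    (hcont : ∀ a r, Continuous (v a r))
    (hanti : ∀ a r, StrictAnti (v a r))
    (hpl : ∀ a r, PiecewiseLinear (v a r))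
    (hnonneg : ∀ a r, 0 ≤ v a r 0)
    (π : Equiv.Perm (Fin n)) (p : Fin n → ℝ)
    (hEF : ∀ a r, v a r (p r) ≤ v a (π a) (p (π a)))
    (hp : ∀ r, 0 ≤ p r) (r : Fin n) :
    (∀ (σ : Equiv.Perm (Fin n)) (q : Fin n → ℝ),
        (∀ a r', v a r' (q r') ≤ v a (σ a) (q (σ a))) →
        (∀ r', 0 ≤ q r') → p r ≤ q r)
    ↔ (∃ z : Fin n, p z = 0 ∧
        Relation.ReflTransGen
          (fun s t : Fin n =>
            π (π.symm s) ≠ t ∧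
            v (π.symm s) (π (π.symm s)) (p (π (π.symm s))) =
              v (π.symm s) t (p t))
          z r) := by
  constructor
  · intro hmin
    by_contra hno
    obtain ⟨σ, q, h1, h2, h3⟩ := RentAux.fwdmain n v hanti hpl π p hEF hp r hno
    exact absurd (hmin σ q h1 h2) (not_le.2 h3)
  · intro h
    exact RentAux.bwdmain n v hanti π p hEF r h
end

section
/- Existence of optimal envy-free prices (Sun–Yang; alternate constructive proof via Theorem 3.5): For every rent-division instance satisfying the standing assumptions there exists an envy-free solution (π*, p*) with p* r ≥ 0 for all rooms r such that for every envy-free solution (σ, q) with q r ≥ 0 for all rooms r, one has p* r ≤ q r for every room r. -/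
open Filter Topology Function

namespace SunYangProof

variable {n : ℕ}

/-- A strictly decreasing piecewise linear function goes below any target. -/
lemma pl_below {f : ℝ → ℝ} (hf : StrictAnti f) (hpl : PiecewiseLinear f) (C : ℝ) :
    ∃ X, f X < C := by
  obtain ⟨t, b, -, -, -, m, c, htail⟩ := hpl
  set B := b (Fin.last t) with hB
  have h1 : f B = m * B + c := htail B le_rfl
  have h2 : f (B + 1) = m * (B + 1) + c := htail (B + 1) (by linarith)
  have hlt : f (B + 1) < f B := hf (by linarith)
  have hm : m < 0 := by
    have hexp : m * (B + 1) = m * B + m := by ring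
    linarith
  obtain ⟨X, hX1, hX2⟩ : ∃ X, B ≤ X ∧ (C - c) / m < X :=
    ⟨max B ((C - c) / m) + 1,
      le_trans (le_max_left _ _) (le_add_of_nonneg_right zero_le_one),
      lt_of_le_of_lt (le_max_right _ _) (lt_add_of_pos_right _ zero_lt_one)⟩
  refine ⟨X, ?_⟩
  rw [htail _ hX1]
  have h3 := (div_lt_iff_of_neg hm).mp hX2
  have hcomm : X * m = m * X := by ring
  linarith

/-- Frequent inequality passes to limits. -/
lemma freq_le_limit {f g : ℕ → ℝ} {x y : ℝ} (hf : Tendsto f atTop (𝓝 x))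
    (hg : Tendsto g atTop (𝓝 y)) (h : ∃ᶠ k in atTop, f k ≤ g k) : x ≤ y := by
  by_contra hlt
  push_neg at hlt
  have hpos : 0 < x - y := by linarith
  have hd : Tendsto (fun k => f k - g k) atTop (𝓝 (x - y)) := hf.sub hg
  have hev : ∀ᶠ k in atTop, 0 < f k - g k := hd.eventually (eventually_gt_nhds hpos)
  obtain ⟨k, hk1, hk2⟩ := (h.and_eventually hev).exists
  linarith

/-- Closedness of envy-free solutions under limits with vanishing slack. -/
lemma closed_limit (v : Fin n → Fin n → ℝ → ℝ) (hcont : ∀ a r, Continuous (v a r))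
    {w : ℕ → Fin n → ℝ} {q : Fin n → ℝ} {σs : ℕ → Equiv.Perm (Fin n)} {ε : ℕ → ℝ}
    (hε : Tendsto ε atTop (𝓝 0))
    (hEF : ∀ k a r, v a r (w k r + ε k) ≤ v a (σs k a) (w k (σs k a)))
    (hq : ∀ r, Tendsto (fun k => w k r) atTop (𝓝 (q r))) :
    ∃ π : Equiv.Perm (Fin n), ∀ a r, v a r (q r) ≤ v a (π a) (q (π a)) := by
  obtain ⟨π, hπ⟩ := Finite.exists_infinite_fiber σs
  refine ⟨π, fun a r => ?_⟩
  have hfreq : ∃ᶠ k in atTop, σs k = π := by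
    rw [Nat.frequently_atTop_iff_infinite]
    have h := Set.infinite_coe_iff.mp hπ
    have he : σs ⁻¹' {π} = {k | σs k = π} := by ext k; simp
    rwa [he] at h
  have h1 : Tendsto (fun k => v a r (w k r + ε k)) atTop (𝓝 (v a r (q r))) := by
    have h0 : Tendsto (fun k => w k r + ε k) atTop (𝓝 (q r + 0)) := (hq r).add hε
    rw [add_zero] at h0
    exact ((hcont a r).tendsto _).comp h0
  have h2 : Tendsto (fun k => v a (π a) (w k (π a))) atTop (𝓝 (v a (π a) (q (π a)))) :=
    ((hcont a (π a)).tendsto _).comp (hq (π a))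
  refine freq_le_limit h1 h2 ?_
  refine hfreq.mono fun k hk => ?_
  have := hEF k a r
  rwa [hk] at this

/-- The pointwise min of two envy-free price vectors is envy-free. -/
lemma meet_mem (v : Fin n → Fin n → ℝ → ℝ) (hanti : ∀ a r, StrictAnti (v a r))
    {q q' : Fin n → ℝ} {σ τ : Equiv.Perm (Fin n)}
    (hq : ∀ a r, v a r (q r) ≤ v a (σ a) (q (σ a)))
    (hq' : ∀ a r, v a r (q' r) ≤ v a (τ a) (q' (τ a))) :
    ∃ π : Equiv.Perm (Fin n), ∀ a r,
      v a r (min (q r) (q' r)) ≤ v a (π a) (min (q (π a)) (q' (π a))) := by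
  classical
  set u : Fin n → ℝ := fun a => v a (σ a) (q (σ a)) with hu
  set u' : Fin n → ℝ := fun a => v a (τ a) (q' (τ a)) with hu'
  have key : ∀ a, u a < u' a → q' (τ a) < q (τ a) := by
    intro a h
    have h1 : v a (τ a) (q (τ a)) < v a (τ a) (q' (τ a)) := lt_of_le_of_lt (hq a (τ a)) h
    exact (StrictAnti.lt_iff_gt (hanti a (τ a))).mp h1
  have prop : ∀ a, u a < u' a → u (σ.symm (τ a)) < u' (σ.symm (τ a)) := by
    intro a h
    set b := σ.symm (τ a) with hb
    have hσb : σ b = τ a := σ.apply_symm_apply _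
    have h1 : u b = v b (τ a) (q (τ a)) := by rw [hu]; simp only [hσb]
    have h2 : v b (τ a) (q (τ a)) < v b (τ a) (q' (τ a)) := hanti b (τ a) (key a h)
    have h3 : v b (τ a) (q' (τ a)) ≤ u' b := hq' b (τ a)
    rw [h1]; exact lt_of_lt_of_le h2 h3
  set π0 : Fin n → Fin n := fun a => if u a < u' a then τ a else σ a with hπ0
  have hinj : Function.Injective π0 := by
    intro a b hab
    by_cases ha : u a < u' a <;> by_cases hb : u b < u' b <;>
      simp only [hπ0, ha, hb, if_true, if_false, if_pos, if_neg, not_false_iff] at hab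
    · exact τ.injective hab
    · exfalso
      have hbb : b = σ.symm (τ a) := by rw [hab]; simp
      exact hb (hbb ▸ prop a ha)
    · exfalso
      have haa : a = σ.symm (τ b) := by rw [← hab]; simp
      exact ha (haa ▸ prop b hb)
    · exact σ.injective hab
  refine ⟨Equiv.ofBijective π0 (Finite.injective_iff_bijective.mp hinj), fun a r => ?_⟩
  rw [Equiv.ofBijective_apply]
  by_cases ha : u a < u' a
  · have hπa : π0 a = τ a := by rw [hπ0]; simp [ha]
    rw [hπa]
    have hmin : min (q (τ a)) (q' (τ a)) = q' (τ a) := min_eq_right (le_of_lt (key a ha))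
    rw [hmin]
    rcases min_choice (q r) (q' r) with h | h <;> rw [h]
    · exact le_trans (hq a r) (le_of_lt ha)
    · exact hq' a r
  · push_neg at ha
    have hπa : π0 a = σ a := by rw [hπ0]; simp [not_lt.mpr ha]
    rw [hπa]
    have h1 : v a (σ a) (q (σ a)) ≤ v a (σ a) (min (q (σ a)) (q' (σ a))) :=
      (hanti a (σ a)).antitone (min_le_left _ _)
    rcases min_choice (q r) (q' r) with h | h <;> rw [h]
    · exact le_trans (hq a r) h1
    · exact le_trans (le_trans (hq' a r) ha) h1


section Auction

variable (v : Fin n → Fin n → ℝ → ℝ) (δ W1 B1 : ℝ)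

open Classical in
noncomputable def astep [Nonempty (Fin n)]
    (s : (Fin n → ℝ) × (Fin n → Option (Fin n))) :
    (Fin n → ℝ) × (Fin n → Option (Fin n)) :=
  if h : ∃ a, s.2 a = none then
    let a := h.choose
    let rB := (Finite.exists_max fun r => v a r (s.1 r + δ)).choose
    (Function.update s.1 rB (s.1 rB + δ),
      fun b => if b = a then some rB else if s.2 b = some rB then none else s.2 b)
  else s

/-- Auction invariant. -/
def AInv (s : (Fin n → ℝ) × (Fin n → Option (Fin n))) : Prop :=
  (∀ a b r, s.2 a = some r → s.2 b = some r → a = b) ∧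
  (∀ r, (∀ a, s.2 a ≠ some r) → s.1 r = 0) ∧
  (∀ a r, s.2 a = some r → ∀ r', v a r' (s.1 r' + δ) ≤ v a r (s.1 r)) ∧
  (∀ r, 0 ≤ s.1 r) ∧ (∀ r, s.1 r ≤ B1)

lemma astep_not [Nonempty (Fin n)] (s : (Fin n → ℝ) × (Fin n → Option (Fin n)))
    (h : ¬ ∃ a, s.2 a = none) : astep v δ s = s := dif_neg h

lemma astep_spec [Nonempty (Fin n)] (s : (Fin n → ℝ) × (Fin n → Option (Fin n)))
    (h : ∃ a, s.2 a = none) :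
    ∃ a rB, s.2 a = none ∧ (∀ r', v a r' (s.1 r' + δ) ≤ v a rB (s.1 rB + δ)) ∧
      astep v δ s = (Function.update s.1 rB (s.1 rB + δ),
        fun b => if b = a then some rB else if s.2 b = some rB then none else s.2 b) := by
  classical
  refine ⟨h.choose, (Finite.exists_max fun r => v h.choose r (s.1 r + δ)).choose,
    h.choose_spec, (Finite.exists_max fun r => v h.choose r (s.1 r + δ)).choose_spec, ?_⟩
  rw [astep, dif_pos h]

lemma astep_inv [Nonempty (Fin n)] (hanti : ∀ a r, StrictAnti (v a r))
    (hW : ∀ a r, W1 ≤ v a r 1) (hB : ∀ a r x, W1 ≤ v a r x → x ≤ B1)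
    (hδ : 0 < δ) (hδ1 : δ ≤ 1)
    {s : (Fin n → ℝ) × (Fin n → Option (Fin n))} (hs : AInv v δ B1 s) :
    AInv v δ B1 (astep v δ s) := by
  classical
  by_cases h : ∃ a, s.2 a = none
  swap
  · rw [astep_not v δ s h]; exact hs
  obtain ⟨a, rB, ha, hrB, heq⟩ := astep_spec v δ s h
  obtain ⟨h1, h2, h3, h4, h5⟩ := hs
  rw [heq]
  -- there is an unmatched room
  have hroom : ∃ r0, ∀ b, s.2 b ≠ some r0 := by
    by_contra hc
    push_neg at hc
    choose f hf using hc
    have hfinj : Function.Injective f := by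
      intro r r' hrr
      have h1' := hf r
      rw [hrr] at h1'
      have := h1'.symm.trans (hf r')
      exact Option.some_injective _ this
    obtain ⟨r, hr⟩ := Finite.injective_iff_surjective.mp hfinj a
    have := hf r
    rw [hr, ha] at this
    exact nomatch this
  obtain ⟨r0, hr0⟩ := hroom
  have hp0 : s.1 r0 = 0 := h2 r0 hr0
  have hWb : W1 ≤ v a rB (s.1 rB + δ) := by
    have hh := hrB r0
    rw [hp0] at hh
    have h01 : v a r0 1 ≤ v a r0 (0 + δ) := (hanti a r0).antitone (by linarith)
    exact le_trans (le_trans (hW a r0) h01) hh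
  have hBb : s.1 rB + δ ≤ B1 := hB a rB _ hWb
  have hup : ∀ r, s.1 r ≤ Function.update s.1 rB (s.1 rB + δ) r := by
    intro r
    by_cases hr : r = rB
    · subst hr; rw [Function.update_self]; linarith
    · rw [Function.update_of_ne hr]
  refine ⟨?_, ?_, ?_, ?_, ?_⟩
  · -- injectivity
    intro b b' r hb hb'
    dsimp only at hb hb'
    by_cases hba : b = a <;> by_cases hba' : b' = a
    · rw [hba, hba']
    · exfalso
      rw [if_pos hba] at hb
      rw [if_neg hba'] at hb'
      have hrb : r = rB := (Option.some_injective _ hb).symm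
      rw [hrb] at hb'
      by_cases hg : s.2 b' = some rB
      · rw [if_pos hg] at hb'; exact nomatch hb'
      · rw [if_neg hg] at hb'; exact hg hb'
    · exfalso
      rw [if_pos hba'] at hb'
      rw [if_neg hba] at hb
      have hrb : r = rB := (Option.some_injective _ hb').symm
      rw [hrb] at hb
      by_cases hg : s.2 b = some rB
      · rw [if_pos hg] at hb; exact nomatch hb
      · rw [if_neg hg] at hb; exact hg hb
    · rw [if_neg hba] at hb
      rw [if_neg hba'] at hb'
      by_cases hg : s.2 b = some rB
      · rw [if_pos hg] at hb; exact nomatch hb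
      · rw [if_neg hg] at hb
        by_cases hg' : s.2 b' = some rB
        · rw [if_pos hg'] at hb'; exact nomatch hb'
        · rw [if_neg hg'] at hb'
          exact h1 b b' r hb hb'
  · -- unmatched rooms have zero price
    intro r hr
    dsimp only at hr ⊢
    have hra : r ≠ rB := by
      intro hcon
      have := hr a
      rw [if_pos rfl, hcon] at this
      exact this rfl
    rw [Function.update_of_ne hra]
    refine h2 r ?_
    intro b hb
    by_cases hba : b = a
    · rw [hba, ha] at hb; exact nomatch hb
    · have := hr b
      rw [if_neg hba] at this
      by_cases hg : s.2 b = some rB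
      · rw [hb] at hg
        exact hra (Option.some_injective _ hg)
      · rw [if_neg hg] at this
        exact this hb
  · -- complementary slackness
    intro b r hb r'
    dsimp only at hb ⊢
    by_cases hba : b = a
    · subst hba
      rw [if_pos rfl] at hb
      have hrb : r = rB := (Option.some_injective _ hb).symm
      rw [hrb, Function.update_self]
      by_cases hr' : r' = rB
      · rw [hr', Function.update_self]
        exact (hanti b rB).antitone (by linarith)
      · rw [Function.update_of_ne hr']
        exact hrB r'
    · rw [if_neg hba] at hb
      have hbr : s.2 b = some r := by
        by_cases hg : s.2 b = some rB
        · rw [if_pos hg] at hb; exact nomatch hb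
        · rw [if_neg hg] at hb; exact hb
      have hrrB : r ≠ rB := by
        intro hcon
        rw [hcon] at hbr
        rw [if_pos hbr] at hb
        exact nomatch hb
      rw [Function.update_of_ne hrrB]
      have hstep : v b r' (Function.update s.1 rB (s.1 rB + δ) r' + δ) ≤ v b r' (s.1 r' + δ) :=
        (hanti b r').antitone (by linarith [hup r'])
      exact le_trans hstep (h3 b r hbr r')
  · -- nonneg
    intro r
    dsimp only
    by_cases hr : r = rB
    · rw [hr]; simp only [Function.update_self]; linarith [h4 rB]
    · simp only [Function.update_of_ne hr]; exact h4 r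
  · -- bound
    intro r
    dsimp only
    by_cases hr : r = rB
    · rw [hr]; simp only [Function.update_self]; exact hBb
    · simp only [Function.update_of_ne hr]; exact h5 r

lemma astep_sum [Nonempty (Fin n)] (s : (Fin n → ℝ) × (Fin n → Option (Fin n)))
    (h : ∃ a, s.2 a = none) :
    ∑ r, (astep v δ s).1 r = (∑ r, s.1 r) + δ := by
  classical
  obtain ⟨a, rB, -, -, heq⟩ := astep_spec v δ s h
  rw [heq]
  simp only
  rw [Finset.sum_update_of_mem (Finset.mem_univ rB),
    Finset.sum_eq_sum_sdiff_singleton_add (Finset.mem_univ rB) s.1]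
  ring

lemma auction_run [Nonempty (Fin n)] (hanti : ∀ a r, StrictAnti (v a r))
    (hW : ∀ a r, W1 ≤ v a r 1) (hB : ∀ a r x, W1 ≤ v a r x → x ≤ B1)
    (hB0 : 0 ≤ B1) (hδ : 0 < δ) (hδ1 : δ ≤ 1) :
    ∃ (σ : Equiv.Perm (Fin n)) (p : Fin n → ℝ),
      (∀ r, 0 ≤ p r) ∧ (∀ r, p r ≤ B1) ∧
      ∀ a r, v a r (p r + δ) ≤ v a (σ a) (p (σ a)) := by
  classical
  set s0 : (Fin n → ℝ) × (Fin n → Option (Fin n)) := (fun _ => 0, fun _ => none) with hs0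
  set sk : ℕ → (Fin n → ℝ) × (Fin n → Option (Fin n)) := fun k => (astep v δ)^[k] s0 with hsk
  have hinv : ∀ k, AInv v δ B1 (sk k) := by
    intro k
    induction k with
    | zero =>
      refine ⟨?_, ?_, ?_, ?_, ?_⟩
      · intro a b r hab
        exact absurd hab (by simp [hsk, hs0])
      · intro r _; simp [hsk, hs0]
      · intro a r hab
        exact absurd hab (by simp [hsk, hs0])
      · intro r; simp [hsk, hs0]
      · intro r; simpa [hsk, hs0] using hB0
    | succ k ih =>
      have : sk (k + 1) = astep v δ (sk k) := by
        rw [hsk]; exact Function.iterate_succ_apply' _ _ _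
      rw [this]
      exact astep_inv v δ W1 B1 hanti hW hB hδ hδ1 ih
  have hsum : ∀ k, (∀ j, j < k → ∃ a, (sk j).2 a = none) →
      ∑ r, (sk k).1 r = δ * k := by
    intro k
    induction k with
    | zero => simp [hsk, hs0]
    | succ k ih =>
      intro hj
      have hstep : sk (k + 1) = astep v δ (sk k) := by
        rw [hsk]; exact Function.iterate_succ_apply' _ _ _
      rw [hstep, astep_sum v δ _ (hj k (Nat.lt_succ_self k)),
        ih (fun j hjk => hj j (Nat.lt_succ_of_lt hjk))]
      push_cast
      ring
  obtain ⟨K, hK⟩ := exists_nat_gt ((n : ℝ) * B1 / δ)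
  have hterm : ∃ k, ¬ ∃ a, (sk k).2 a = none := by
    by_contra hc
    push_neg at hc
    have h1 := hsum K (fun j _ => hc j)
    have h2 : ∑ r, (sk K).1 r ≤ (n : ℝ) * B1 := by
      calc ∑ r, (sk K).1 r ≤ ∑ _r : Fin n, B1 :=
            Finset.sum_le_sum (fun r _ => (hinv K).2.2.2.2 r)
        _ = (n : ℝ) * B1 := by
            rw [Finset.sum_const, Finset.card_univ, Fintype.card_fin, nsmul_eq_mul]
    rw [h1] at h2
    rw [div_lt_iff₀ hδ] at hK
    linarith
  obtain ⟨k, hk⟩ := hterm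
  push_neg at hk
  obtain ⟨hI1, hI2, hI3, hI4, hI5⟩ := hinv k
  have hg : ∀ a, ∃ r, (sk k).2 a = some r := fun a => Option.ne_none_iff_exists'.mp (hk a)
  choose g hgs using hg
  have hginj : Function.Injective g := by
    intro a b hab
    exact hI1 a b (g a) (hgs a) (hab ▸ hgs b)
  refine ⟨Equiv.ofBijective g (Finite.injective_iff_bijective.mp hginj), (sk k).1,
    hI4, hI5, fun a r => ?_⟩
  rw [Equiv.ofBijective_apply]
  exact hI3 a (g a) (hgs a) r

end Auction


/-- Existence of a nonnegative envy-free solution. -/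
lemma exists_EF (v : Fin n → Fin n → ℝ → ℝ) (hn : 0 < n)
    (hcont : ∀ a r, Continuous (v a r))
    (hanti : ∀ a r, StrictAnti (v a r))
    (hpl : ∀ a r, PiecewiseLinear (v a r)) :
    ∃ (σ : Equiv.Perm (Fin n)) (p : Fin n → ℝ), (∀ r, 0 ≤ p r) ∧
      ∀ a r, v a r (p r) ≤ v a (σ a) (p (σ a)) := by
  classical
  haveI : Nonempty (Fin n) := ⟨⟨0, hn⟩⟩
  obtain ⟨x0, hx0⟩ := Finite.exists_min (fun x : Fin n × Fin n => v x.1 x.2 1)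
  set W1 := v x0.1 x0.2 1 with hW1
  have hW : ∀ a r, W1 ≤ v a r 1 := fun a r => hx0 (a, r)
  have hX : ∀ x : Fin n × Fin n, ∃ X, v x.1 x.2 X < W1 := fun x =>
    pl_below (hanti x.1 x.2) (hpl x.1 x.2) W1
  choose X hXs using hX
  obtain ⟨xm, hxm⟩ := Finite.exists_max X
  set B1 := max 0 (X xm) with hB1
  have hB0 : 0 ≤ B1 := le_max_left _ _
  have hB : ∀ a r x, W1 ≤ v a r x → x ≤ B1 := by
    intro a r x hx
    by_contra hc
    push_neg at hc
    have h1 : X (a, r) ≤ B1 := le_trans (hxm (a, r)) (le_max_right _ _)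
    have h2 : v a r x ≤ v a r (X (a, r)) :=
      (hanti a r).antitone (le_of_lt (lt_of_le_of_lt h1 hc))
    have h3 := hXs (a, r)
    simp only at h3
    linarith
  have happrox : ∀ k : ℕ, ∃ (σ : Equiv.Perm (Fin n)) (p : Fin n → ℝ),
      (∀ r, 0 ≤ p r) ∧ (∀ r, p r ≤ B1) ∧
      ∀ a r, v a r (p r + 1 / ((k : ℝ) + 1)) ≤ v a (σ a) (p (σ a)) := by
    intro k
    refine auction_run v (1 / ((k : ℝ) + 1)) W1 B1 hanti hW hB hB0 (by positivity) ?_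
    rw [div_le_one (by positivity)]
    have : (0 : ℝ) ≤ (k : ℝ) := Nat.cast_nonneg k
    linarith
  choose σs ps h0 hup hEF using happrox
  have hmem : ∀ k, ps k ∈ Set.Icc (0 : Fin n → ℝ) (fun _ => B1) := by
    intro k
    constructor
    · intro r; exact h0 k r
    · intro r; exact hup k r
  obtain ⟨q, hqmem, φ, hφ, hconv⟩ :=
    (isCompact_Icc : IsCompact (Set.Icc (0 : Fin n → ℝ) (fun _ => B1))).tendsto_subseq hmem
  have hqc : ∀ r, Tendsto (fun k => ps (φ k) r) atTop (𝓝 (q r)) := by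
    intro r
    exact tendsto_pi_nhds.mp hconv r
  have hδc : Tendsto (fun k => 1 / ((φ k : ℝ) + 1)) atTop (𝓝 0) :=
    tendsto_one_div_add_atTop_nhds_zero_nat.comp hφ.tendsto_atTop
  obtain ⟨π, hπ⟩ := closed_limit v hcont hδc (fun k a r => hEF (φ k) a r) hqc
  exact ⟨π, q, fun r => ge_of_tendsto' (hqc r) (fun k => h0 (φ k) r), hπ⟩

end SunYangProof

/-- Existence of optimal envy-free prices (Sun–Yang): there is an envy-free
solution with nonnegative prices whose price vector is componentwise minimal
among all nonnegative envy-free price vectors. -/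
theorem exists_optimal_envy_free_prices
    (n : ℕ) (v : Fin n → Fin n → ℝ → ℝ)
    (hcont : ∀ a r, Continuous (v a r))
    (hanti : ∀ a r, StrictAnti (v a r))
    (hpl : ∀ a r, PiecewiseLinear (v a r))
    (hnonneg : ∀ a r, 0 ≤ v a r 0) :
    ∃ (πs : Equiv.Perm (Fin n)) (ps : Fin n → ℝ),
      (∀ a r, v a r (ps r) ≤ v a (πs a) (ps (πs a))) ∧
      (∀ r, 0 ≤ ps r) ∧
      ∀ (σ : Equiv.Perm (Fin n)) (q : Fin n → ℝ),
        (∀ a r, v a r (q r) ≤ v a (σ a) (q (σ a))) →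
        (∀ r, 0 ≤ q r) →
        ∀ r, ps r ≤ q r := by
  classical
  open SunYangProof in
  rcases Nat.eq_zero_or_pos n with hn | hn
  · subst hn
    exact ⟨Equiv.refl _, fun _ => 0, fun a => a.elim0, fun r => r.elim0,
      fun σ q _ _ r => r.elim0⟩
  set Q : Set (Fin n → ℝ) :=
    {q | (∀ r, 0 ≤ q r) ∧ ∃ σ : Equiv.Perm (Fin n), ∀ a r, v a r (q r) ≤ v a (σ a) (q (σ a))}
    with hQ
  obtain ⟨σ0, p0, hp0, hEF0⟩ := SunYangProof.exists_EF v hn hcont hanti hpl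
  have hQne : p0 ∈ Q := ⟨hp0, σ0, hEF0⟩
  set ps : Fin n → ℝ := fun r => sInf ((fun q => q r) '' Q) with hps
  have hbdd : ∀ r, BddBelow ((fun q => q r) '' Q) := by
    intro r
    refine ⟨0, ?_⟩
    rintro x ⟨q, hq, rfl⟩
    exact hq.1 r
  have hne : ∀ r, ((fun q => q r) '' Q).Nonempty := fun r => ⟨p0 r, p0, hQne, rfl⟩
  have hmin : ∀ q ∈ Q, ∀ r, ps r ≤ q r := fun q hq r => csInf_le (hbdd r) ⟨q, hq, rfl⟩
  have hps0 : ∀ r, 0 ≤ ps r := by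
    intro r
    refine le_csInf (hne r) ?_
    rintro x ⟨q, hq, rfl⟩
    exact hq.1 r
  have hmeet : ∀ q ∈ Q, ∀ q' ∈ Q, (fun r => min (q r) (q' r)) ∈ Q := by
    rintro q ⟨hq0, σ, hσ⟩ q' ⟨hq'0, τ, hτ⟩
    obtain ⟨π, hπ⟩ := SunYangProof.meet_mem v hanti hσ hτ
    exact ⟨fun r => le_min (hq0 r) (hq'0 r), π, hπ⟩
  have hfold : ∀ w : Fin n → (Fin n → ℝ), (∀ r, w r ∈ Q) → ∃ z ∈ Q, ∀ r, z r ≤ w r r := by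
    intro w hw
    suffices h : ∀ l : List (Fin n), ∃ z ∈ Q, ∀ r ∈ l, z r ≤ w r r by
      obtain ⟨z, hz, hzr⟩ := h (List.finRange n)
      exact ⟨z, hz, fun r => hzr r (List.mem_finRange r)⟩
    intro l
    induction l with
    | nil => exact ⟨p0, hQne, by simp⟩
    | cons r l ih =>
      obtain ⟨z, hz, hzr⟩ := ih
      refine ⟨fun x => min (w r x) (z x), hmeet _ (hw r) _ hz, ?_⟩
      intro x hx
      rcases List.mem_cons.mp hx with h | h
      · subst h; exact min_le_left _ _
      · exact le_trans (min_le_right _ _) (hzr x h)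
  have hk : ∀ k : ℕ, ∃ z ∈ Q, ∀ r, z r ≤ ps r + 1 / ((k : ℝ) + 1) := by
    intro k
    have hwit : ∀ r : Fin n, ∃ q ∈ Q, q r < ps r + 1 / ((k : ℝ) + 1) := by
      intro r
      have hlt : ps r < ps r + 1 / ((k : ℝ) + 1) := by
        have : (0 : ℝ) < 1 / ((k : ℝ) + 1) := by positivity
        linarith
      obtain ⟨x, ⟨qq, hqq, rfl⟩, hxlt⟩ := exists_lt_of_csInf_lt (hne r) hlt
      exact ⟨qq, hqq, hxlt⟩
    choose w hw hwlt using hwit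
    obtain ⟨z, hz, hzr⟩ := hfold w hw
    exact ⟨z, hz, fun r => le_trans (hzr r) (le_of_lt (hwlt r))⟩
  choose zs hzs hzb using hk
  have hzt : ∀ r, Filter.Tendsto (fun k => zs k r) Filter.atTop (nhds (ps r)) := by
    intro r
    have hupp : Filter.Tendsto (fun k : ℕ => ps r + 1 / ((k : ℝ) + 1)) Filter.atTop
        (nhds (ps r)) := by
      have h1 : Filter.Tendsto (fun k : ℕ => 1 / ((k : ℝ) + 1)) Filter.atTop (nhds 0) :=
        tendsto_one_div_add_atTop_nhds_zero_nat
      have h2 := Filter.Tendsto.add (tendsto_const_nhds (x := ps r) (f := Filter.atTop)) h1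
      simpa using h2
    exact tendsto_of_tendsto_of_tendsto_of_le_of_le tendsto_const_nhds hupp
      (fun k => hmin _ (hzs k) r) (fun k => hzb k r)
  have hperm : ∀ k : ℕ, ∃ σ : Equiv.Perm (Fin n),
      ∀ a r, v a r (zs k r + (0 : ℝ)) ≤ v a (σ a) (zs k (σ a)) := by
    intro k
    obtain ⟨-, σ, hσ⟩ := hzs k
    exact ⟨σ, fun a r => by simpa using hσ a r⟩
  choose σs hσs using hperm
  obtain ⟨π, hπ⟩ := SunYangProof.closed_limit v hcont (ε := fun _ => (0 : ℝ))
    tendsto_const_nhds hσs hzt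
  refine ⟨π, ps, hπ, hps0, ?_⟩
  intro σ q hqEF hq0 r
  exact hmin q ⟨hq0, σ, hqEF⟩ r
end

section
/- Theorem 3.1 (existence content of the exact algorithm): Every rent-division instance satisfying the standing assumptions admits an envy-free solution (π, p) such that p r ≥ 0 for all rooms r and p ρ = 0 for at least one room ρ. -/
namespace RentHarmonyAux

open Filter Topology Finset

variable {n : ℕ}

noncomputable def den (v : Fin n → Fin n → ℝ → ℝ) (τ : ℝ) (p : Fin n → ℝ) (a : Fin n) : ℝ :=
  1 + ∑ r, Real.exp (v a r (p r) / τ)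

noncomputable def wt (v : Fin n → Fin n → ℝ → ℝ) (τ : ℝ) (p : Fin n → ℝ) (a r : Fin n) : ℝ :=
  Real.exp (v a r (p r) / τ) / den v τ p a

noncomputable def dem (v : Fin n → Fin n → ℝ → ℝ) (τ : ℝ) (p : Fin n → ℝ) (r : Fin n) : ℝ :=
  ∑ a, wt v τ p a r

noncomputable def Cst (v : Fin n → Fin n → ℝ → ℝ) (τ : ℝ) (p : Fin n → ℝ) (r a : Fin n) : ℝ :=
  1 + ∑ r' ∈ Finset.univ.erase r, Real.exp (v a r' (p r') / τ)

noncomputable def sOwn (v : Fin n → Fin n → ℝ → ℝ) (τ : ℝ) (p : Fin n → ℝ) (r : Fin n)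
    (x : ℝ) : ℝ :=
  ∑ a, Real.exp (v a r x / τ) / (Cst v τ p r a + Real.exp (v a r x / τ))

variable {v : Fin n → Fin n → ℝ → ℝ} {τ H : ℝ} {p q : Fin n → ℝ} {a r : Fin n}

lemma den_pos : 0 < den v τ p a := by
  unfold den; positivity

lemma den_ge_one : 1 ≤ den v τ p a := by
  unfold den
  have : 0 ≤ ∑ r, Real.exp (v a r (p r) / τ) :=
    Finset.sum_nonneg fun _ _ => (Real.exp_pos _).le
  linarith

lemma Cst_ge_one : 1 ≤ Cst v τ p r a := by
  unfold Cst
  have : 0 ≤ ∑ r' ∈ Finset.univ.erase r, Real.exp (v a r' (p r') / τ) :=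
    Finset.sum_nonneg fun _ _ => (Real.exp_pos _).le
  linarith

lemma Cst_pos : 0 < Cst v τ p r a := lt_of_lt_of_le one_pos Cst_ge_one

lemma den_eq (r : Fin n) :
    den v τ p a = Cst v τ p r a + Real.exp (v a r (p r) / τ) := by
  unfold den Cst
  rw [← Finset.add_sum_erase Finset.univ _ (Finset.mem_univ r)]
  ring

lemma exp_le_den (r' : Fin n) : Real.exp (v a r' (p r') / τ) ≤ den v τ p a := by
  unfold den
  have h := Finset.single_le_sum (f := fun s => Real.exp (v a s (p s) / τ))
    (fun s _ => (Real.exp_pos _).le) (Finset.mem_univ r')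
  linarith

lemma dem_eq_sOwn : dem v τ p r = sOwn v τ p r (p r) := by
  unfold dem wt sOwn
  exact Finset.sum_congr rfl fun a _ => by rw [den_eq (r := r)]

lemma wt_nonneg : 0 ≤ wt v τ p a r := by
  unfold wt
  have := den_pos (v := v) (τ := τ) (p := p) (a := a)
  positivity

lemma wt_le_one : wt v τ p a r ≤ 1 := by
  unfold wt
  rw [div_le_one den_pos]
  exact exp_le_den r

lemma dem_nonneg : 0 ≤ dem v τ p r :=
  Finset.sum_nonneg fun _ _ => wt_nonneg

lemma row_sum : ∑ r, wt v τ p a r + (den v τ p a)⁻¹ = 1 := by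
  unfold wt
  rw [← Finset.sum_div, inv_eq_one_div, ← add_div, div_eq_one_iff_eq den_pos.ne']
  unfold den; ring

lemma sum_dem_lt (hn : 0 < n) : ∑ r, dem v τ p r < n := by
  have h1 : ∑ r, dem v τ p r = ∑ a : Fin n, (1 - (den v τ p a)⁻¹) := by
    unfold dem
    rw [Finset.sum_comm]
    exact Finset.sum_congr rfl fun a _ => by
      have := row_sum (v := v) (τ := τ) (p := p) (a := a); linarith
  rw [h1]
  have h2 : ∀ a ∈ Finset.univ (α := Fin n), (1 : ℝ) - (den v τ p a)⁻¹ < 1 := by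
    intro a _
    have : 0 < (den v τ p a)⁻¹ := inv_pos.2 den_pos
    linarith
  calc ∑ a : Fin n, (1 - (den v τ p a)⁻¹) < ∑ _a : Fin n, (1 : ℝ) :=
        Finset.sum_lt_sum_of_nonempty ⟨⟨0, hn⟩, Finset.mem_univ _⟩ h2
    _ = n := by simp



lemma sOwn_cont (hcont : ∀ a r, Continuous (v a r)) :
    Continuous (sOwn v τ p r) := by
  unfold sOwn
  refine continuous_finset_sum _ fun a _ => ?_
  have he : Continuous (fun x => Real.exp (v a r x / τ)) :=
    Real.continuous_exp.comp ((hcont a r).div_const τ)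
  refine he.div (continuous_const.add he) fun x => ?_
  have h1 : (0:ℝ) < Cst v τ p r a := Cst_pos
  have h2 := Real.exp_pos (v a r x / τ)
  exact (by linarith : (0:ℝ) < Cst v τ p r a + Real.exp (v a r x / τ)).ne'

lemma sOwn_H_le (hH : ∀ a r, v a r H ≤ -1) (hτ : 0 < τ)
    (hτ' : τ ≤ (1 + Real.log (n + 1))⁻¹) :
    sOwn v τ p r H ≤ 1 := by
  have hlog : (0:ℝ) ≤ Real.log (n + 1) := Real.log_nonneg (le_add_of_nonneg_left (Nat.cast_nonneg n))
  have hτ0 : (0:ℝ) < (1 + Real.log (n + 1))⁻¹ := by positivity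
  have key : ∀ a : Fin n,
      Real.exp (v a r H / τ) / (Cst v τ p r a + Real.exp (v a r H / τ)) ≤ ((n:ℝ) + 1)⁻¹ := by
    intro a
    have h1 : v a r H / τ ≤ -(1 + Real.log (n + 1)) := by
      have hv : v a r H ≤ -1 := hH a r
      have hinv : 1 + Real.log (n + 1) ≤ 1 / τ := by
        have := one_div_le_one_div_of_le hτ hτ'
        rwa [one_div, inv_inv] at this
      calc v a r H / τ ≤ (-1) / τ := by gcongr
        _ = -(1 / τ) := by ring
        _ ≤ -(1 + Real.log (n + 1)) := by linarith
    have h2 : Real.exp (v a r H / τ) ≤ ((n:ℝ) + 1)⁻¹ := by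
      calc Real.exp (v a r H / τ) ≤ Real.exp (-(1 + Real.log (n + 1))) :=
            Real.exp_le_exp.2 h1
        _ = Real.exp (-1) * (Real.exp (Real.log ((n:ℝ) + 1)))⁻¹ := by
            rw [← Real.exp_neg, ← Real.exp_add]; ring_nf
        _ = Real.exp (-1) * ((n:ℝ) + 1)⁻¹ := by
            rw [Real.exp_log (by positivity)]
        _ ≤ 1 * ((n:ℝ) + 1)⁻¹ := by
            have : Real.exp (-1) ≤ 1 := Real.exp_le_one_iff.2 (by norm_num)
            gcongr
        _ = ((n:ℝ) + 1)⁻¹ := one_mul _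
    have h3 : 1 ≤ Cst v τ p r a + Real.exp (v a r H / τ) := by
      have := Real.exp_pos (v a r H / τ)
      have := Cst_ge_one (v := v) (τ := τ) (p := p) (r := r) (a := a)
      linarith
    calc Real.exp (v a r H / τ) / (Cst v τ p r a + Real.exp (v a r H / τ))
        ≤ Real.exp (v a r H / τ) := div_le_self (Real.exp_pos _).le h3
      _ ≤ ((n:ℝ) + 1)⁻¹ := h2
  calc sOwn v τ p r H ≤ ∑ _a : Fin n, ((n:ℝ) + 1)⁻¹ :=
        Finset.sum_le_sum fun a _ => key a
    _ = (n:ℝ) * ((n:ℝ) + 1)⁻¹ := by simp [mul_comm]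
    _ ≤ 1 := by
        rw [← le_div_iff₀ (by positivity : (0:ℝ) < ((n:ℝ)+1)⁻¹)]
        · rw [one_div, inv_inv]; linarith
  


noncomputable def Gm (v : Fin n → Fin n → ℝ → ℝ) (τ : ℝ) (p : Fin n → ℝ) (r : Fin n) : ℝ :=
  sInf {x : ℝ | 0 ≤ x ∧ sOwn v τ p r x ≤ 1}

section Gfacts

variable (hcont : ∀ a r, Continuous (v a r)) (hanti : ∀ a r, StrictAnti (v a r))
  (hH0 : 0 ≤ H) (hH : ∀ a r, v a r H ≤ -1) (hτ : 0 < τ)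
  (hτ' : τ ≤ (1 + Real.log (n + 1))⁻¹)

lemma Sset_bddBelow : BddBelow {x : ℝ | 0 ≤ x ∧ sOwn v τ p r x ≤ 1} :=
  ⟨0, fun _ hx => hx.1⟩

include hH0 hH hτ hτ' in
lemma H_mem_Sset : H ∈ {x : ℝ | 0 ≤ x ∧ sOwn v τ p r x ≤ 1} :=
  ⟨hH0, sOwn_H_le hH hτ hτ'⟩

include hcont in
lemma Sset_closed : IsClosed {x : ℝ | 0 ≤ x ∧ sOwn v τ p r x ≤ 1} := by
  have : {x : ℝ | 0 ≤ x ∧ sOwn v τ p r x ≤ 1}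
      = Set.Ici (0:ℝ) ∩ (sOwn v τ p r) ⁻¹' (Set.Iic 1) := rfl
  rw [this]
  exact isClosed_Ici.inter ((isClosed_Iic).preimage (sOwn_cont hcont))

include hcont hH0 hH hτ hτ' in
lemma Gm_mem : 0 ≤ Gm v τ p r ∧ sOwn v τ p r (Gm v τ p r) ≤ 1 :=
  (Sset_closed hcont).csInf_mem ⟨H, H_mem_Sset hH0 hH hτ hτ'⟩ Sset_bddBelow

include hH0 hH hτ hτ' in
lemma Gm_le_H : Gm v τ p r ≤ H :=
  csInf_le Sset_bddBelow (H_mem_Sset hH0 hH hτ hτ')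

lemma lt_Gm {x : ℝ} (hx0 : 0 ≤ x) (hx : x < Gm v τ p r) : 1 < sOwn v τ p r x := by
  by_contra hcon
  push_neg at hcon
  exact absurd (csInf_le Sset_bddBelow ⟨hx0, hcon⟩) (not_le.2 hx)

include hanti hτ in
lemma sOwn_mono (hpq : ∀ r', p r' ≤ q r') (x : ℝ) :
    sOwn v τ p r x ≤ sOwn v τ q r x := by
  unfold sOwn
  refine Finset.sum_le_sum fun a _ => ?_
  have hC : Cst v τ q r a ≤ Cst v τ p r a := by
    unfold Cst
    have : ∀ r' ∈ Finset.univ.erase r,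
        Real.exp (v a r' (q r') / τ) ≤ Real.exp (v a r' (p r') / τ) := by
      intro r' _
      have := (hanti a r').antitone (hpq r')
      exact Real.exp_le_exp.2 (by gcongr)
    have := Finset.sum_le_sum this
    linarith
  have h1 : 0 < Cst v τ q r a + Real.exp (v a r x / τ) := by
    have := Cst_pos (v := v) (τ := τ) (p := q) (r := r) (a := a)
    have := Real.exp_pos (v a r x / τ)
    linarith
  gcongr

include hanti hτ hH0 hH hτ' in
lemma Gm_mono (hpq : ∀ r', p r' ≤ q r') : Gm v τ p r ≤ Gm v τ q r := by
  refine csInf_le_csInf Sset_bddBelow ⟨H, H_mem_Sset hH0 hH hτ hτ'⟩ ?_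
  intro x hx
  exact ⟨hx.1, le_trans (sOwn_mono hanti hτ hpq x) hx.2⟩

include hcont hanti hH0 hH hτ hτ' in
lemma exists_softeq (hn : 0 < n) :
    ∃ p : Fin n → ℝ, (∀ r, 0 ≤ p r ∧ p r ≤ H) ∧ (∀ r, dem v τ p r ≤ 1) ∧
      (∀ r, 0 < p r → dem v τ p r = 1) ∧ ∃ ρ, p ρ = 0 := by
  classical
  set A : Set (Fin n → ℝ) :=
    {p | (∀ r, 0 ≤ p r ∧ p r ≤ H) ∧ ∀ r, p r ≤ Gm v τ p r} with hA
  have h0A : (fun _ => (0:ℝ)) ∈ A := by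
    refine ⟨fun r => ⟨le_refl _, hH0⟩, fun r => ?_⟩
    exact le_csInf ⟨H, H_mem_Sset hH0 hH hτ hτ'⟩ fun x hx => hx.1
  set q : Fin n → ℝ := fun r => sSup {y : ℝ | ∃ p ∈ A, p r = y} with hq
  have hbdd : ∀ r, BddAbove {y : ℝ | ∃ p ∈ A, p r = y} := by
    intro r
    exact ⟨H, fun y ⟨p, hp, hy⟩ => hy ▸ (hp.1 r).2⟩
  have hne : ∀ r, Set.Nonempty {y : ℝ | ∃ p ∈ A, p r = y} :=
    fun r => ⟨0, ⟨_, h0A, rfl⟩⟩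
  have hub : ∀ p ∈ A, ∀ r, p r ≤ q r :=
    fun p hp r => le_csSup (hbdd r) ⟨p, hp, rfl⟩
  have hq0 : ∀ r, 0 ≤ q r := fun r => hub _ h0A r
  have hqH : ∀ r, q r ≤ H := by
    intro r
    exact csSup_le (hne r) (fun y ⟨p, hp, hy⟩ => hy ▸ (hp.1 r).2)
  have hqG : ∀ r, q r ≤ Gm v τ q r := by
    intro r
    refine csSup_le (hne r) ?_
    rintro y ⟨p, hp, rfl⟩
    exact le_trans (hp.2 r) (Gm_mono hanti hH0 hH hτ hτ' (fun r' => hub p hp r'))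
  have hGA : (fun r => Gm v τ q r) ∈ A := by
    refine ⟨fun r => ⟨(Gm_mem hcont hH0 hH hτ hτ').1, Gm_le_H hH0 hH hτ hτ'⟩, fun r => ?_⟩
    exact Gm_mono hanti hH0 hH hτ hτ' hqG
  have heq : ∀ r, q r = Gm v τ q r :=
    fun r => le_antisymm (hqG r) (hub _ hGA r)
  refine ⟨q, fun r => ⟨hq0 r, hqH r⟩, ?_, ?_, ?_⟩
  · intro r
    rw [dem_eq_sOwn, heq r]
    exact (Gm_mem hcont hH0 hH hτ hτ').2
  · intro r hr
    have hle : dem v τ q r ≤ 1 := by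
      rw [dem_eq_sOwn, heq r]; exact (Gm_mem hcont hH0 hH hτ hτ').2
    have hge : 1 ≤ dem v τ q r := by
      rw [dem_eq_sOwn]
      have hnb : (𝓝[<] (q r)).NeBot := nhdsLT_neBot _
      have htd : Filter.Tendsto (sOwn v τ q r) (𝓝[<] q r) (𝓝 (sOwn v τ q r (q r))) :=
        ((sOwn_cont hcont).tendsto _).mono_left nhdsWithin_le_nhds
      refine ge_of_tendsto htd ?_
      filter_upwards [Ioo_mem_nhdsLT hr] with x hx
      exact (lt_Gm hx.1.le (heq r ▸ hx.2)).le
    linarith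
  · by_contra hno
    push_neg at hno
    have hall : ∀ r, dem v τ q r = 1 := by
      intro r
      have : 0 < q r := lt_of_le_of_ne (hq0 r) (Ne.symm (hno r))
      -- reuse the pos → dem = 1 argument
      have hle : dem v τ q r ≤ 1 := by
        rw [dem_eq_sOwn, heq r]; exact (Gm_mem hcont hH0 hH hτ hτ').2
      have hge : 1 ≤ dem v τ q r := by
        rw [dem_eq_sOwn]
        have hnb : (𝓝[<] (q r)).NeBot := nhdsLT_neBot _
        have htd : Filter.Tendsto (sOwn v τ q r) (𝓝[<] q r) (𝓝 (sOwn v τ q r (q r))) :=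
          ((sOwn_cont hcont).tendsto _).mono_left nhdsWithin_le_nhds
        refine ge_of_tendsto htd ?_
        filter_upwards [Ioo_mem_nhdsLT this] with x hx
        exact (lt_Gm hx.1.le (heq r ▸ hx.2)).le
      linarith
    have hsum := sum_dem_lt (v := v) (τ := τ) (p := q) hn
    rw [Finset.sum_congr rfl (fun r _ => hall r)] at hsum
    simp at hsum

end Gfacts

lemma exists_H (hanti : ∀ a r, StrictAnti (v a r))
    (hpl : ∀ a r, ∃ (t : ℕ) (b : Fin (t + 1) → ℝ), StrictMono b ∧
      (∃ m c : ℝ, ∀ x ≤ b 0, v a r x = m * x + c) ∧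
      (∀ i : Fin t, ∃ m c : ℝ,
        ∀ x ∈ Set.Icc (b i.castSucc) (b i.succ), v a r x = m * x + c) ∧
      (∃ m c : ℝ, ∀ x, b (Fin.last t) ≤ x → v a r x = m * x + c)) :
    ∃ H : ℝ, 0 ≤ H ∧ ∀ a r, v a r H ≤ -1 := by
  have hx : ∀ a r, ∃ x : ℝ, v a r x ≤ -1 := by
    intro a r
    obtain ⟨t, b, _hb, _h1, _h2, m, c, hlast⟩ := hpl a r
    have hm : m < 0 := by
      have h1 := hlast (b (Fin.last t)) le_rfl
      have h2 := hlast (b (Fin.last t) + 1) (by linarith)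
      have h3 : v a r (b (Fin.last t) + 1) < v a r (b (Fin.last t)) :=
        (hanti a r) (by linarith)
      rw [h1, h2] at h3; linarith
    refine ⟨max (b (Fin.last t)) ((-1 - c) / m), ?_⟩
    rw [hlast _ (le_max_left _ _)]
    have hxge : (-1 - c) / m ≤ max (b (Fin.last t)) ((-1 - c) / m) := le_max_right _ _
    have hmul : m * max (b (Fin.last t)) ((-1 - c) / m) ≤ m * ((-1 - c) / m) :=
      mul_le_mul_of_nonpos_left hxge hm.le
    have hcan : m * ((-1 - c) / m) = -1 - c := by
      rw [mul_comm]; exact div_mul_cancel₀ _ hm.ne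
    linarith
  choose x0 hx0 using hx
  refine ⟨∑ a, ∑ r, |x0 a r|, by positivity, fun a r => ?_⟩
  have h1 : x0 a r ≤ ∑ a, ∑ r, |x0 a r| := by
    have h2 : |x0 a r| ≤ ∑ r', |x0 a r'| :=
      Finset.single_le_sum (f := fun r' => |x0 a r'|) (fun _ _ => abs_nonneg _)
        (Finset.mem_univ r)
    have h3 : ∑ r', |x0 a r'| ≤ ∑ a, ∑ r, |x0 a r| :=
      Finset.single_le_sum (f := fun a => ∑ r, |x0 a r|)
        (fun _ _ => Finset.sum_nonneg fun _ _ => abs_nonneg _) (Finset.mem_univ a)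
    calc x0 a r ≤ |x0 a r| := le_abs_self _
      _ ≤ ∑ r', |x0 a r'| := h2
      _ ≤ _ := h3
  exact le_trans ((hanti a r).antitone h1) (hx0 a r)

end RentHarmonyAux


open Filter Topology in
theorem exists_envy_free_with_zero_price'
    (n : ℕ) (hn : 0 < n) (v : Fin n → Fin n → ℝ → ℝ)
    (hcont : ∀ a r, Continuous (v a r))
    (hanti : ∀ a r, StrictAnti (v a r))
    (hpl : ∀ a r, PiecewiseLinear (v a r))
    (hnonneg : ∀ a r, 0 ≤ v a r 0) :
    ∃ (π : Equiv.Perm (Fin n)) (p : Fin n → ℝ),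
      (∀ a r, v a r (p r) ≤ v a (π a) (p (π a))) ∧
      (∀ r, 0 ≤ p r) ∧
      ∃ ρ : Fin n, p ρ = 0 := by
  classical
  haveI : Nonempty (Fin n) := ⟨⟨0, hn⟩⟩
  obtain ⟨H, hH0, hH⟩ := RentHarmonyAux.exists_H (v := v) hanti (fun a r => hpl a r)
  set τ0 : ℝ := (1 + Real.log (n + 1))⁻¹ with hτ0def
  have hlog : (0:ℝ) ≤ Real.log (n + 1) :=
    Real.log_nonneg (le_add_of_nonneg_left (Nat.cast_nonneg n))
  have hτ0pos : 0 < τ0 := by rw [hτ0def]; positivity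
  set t : ℕ → ℝ := fun k => τ0 / (k + 1) with htdef
  have htpos : ∀ k, 0 < t k := fun k => by
    rw [htdef]; positivity
  have htle : ∀ k, t k ≤ τ0 := fun k => by
    rw [htdef]
    apply div_le_self hτ0pos.le
    have : (0:ℝ) ≤ (k:ℝ) := Nat.cast_nonneg k
    linarith
  have hex : ∀ k, ∃ p : Fin n → ℝ, (∀ r, 0 ≤ p r ∧ p r ≤ H) ∧
      (∀ r, RentHarmonyAux.dem v (t k) p r ≤ 1) ∧
      (∀ r, 0 < p r → RentHarmonyAux.dem v (t k) p r = 1) ∧ ∃ ρ, p ρ = 0 :=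
    fun k => RentHarmonyAux.exists_softeq hcont hanti hH0 hH (htpos k) (htle k) hn
  choose q hq1 hq2 hq3 hq4 using hex
  -- subsequence extraction
  have hqmem : ∀ k, q k ∈ Set.Icc (0 : Fin n → ℝ) (fun _ => H) := by
    intro k
    rw [Set.mem_Icc]
    constructor
    · intro r; exact (hq1 k r).1
    · intro r; exact (hq1 k r).2
  obtain ⟨pbar, hpbarmem, φ1, hφ1, hp1⟩ :=
    (isCompact_Icc (a := (0 : Fin n → ℝ)) (b := fun _ => H)).tendsto_subseq hqmem
  set W : ℕ → Fin n → Fin n → ℝ :=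
    fun k a r => RentHarmonyAux.wt v (t k) (q k) a r with hWdef
  have hWmem : ∀ j, W (φ1 j) ∈ Set.Icc (0 : Fin n → Fin n → ℝ) (fun _ _ => 1) := by
    intro j
    rw [Set.mem_Icc]
    constructor
    · intro a r; exact RentHarmonyAux.wt_nonneg
    · intro a r; exact RentHarmonyAux.wt_le_one
  obtain ⟨Mb, hMbmem, φ2, hφ2, hM2⟩ :=
    (isCompact_Icc (a := (0 : Fin n → Fin n → ℝ)) (b := fun _ _ => 1)).tendsto_subseq hWmem
  set D : ℕ → Fin n → ℝ := fun k a => (RentHarmonyAux.den v (t k) (q k) a)⁻¹ with hDdef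
  have hDmem : ∀ j, D (φ1 (φ2 j)) ∈ Set.Icc (0 : Fin n → ℝ) (fun _ => 1) := by
    intro j
    rw [Set.mem_Icc]
    constructor
    · intro a
      exact (inv_pos.2 RentHarmonyAux.den_pos).le
    · intro a
      show (RentHarmonyAux.den v (t (φ1 (φ2 j))) (q (φ1 (φ2 j))) a)⁻¹ ≤ (1:ℝ)
      have h1 := RentHarmonyAux.den_ge_one
        (v := v) (τ := t (φ1 (φ2 j))) (p := q (φ1 (φ2 j))) (a := a)
      have h2 := RentHarmonyAux.den_pos
        (v := v) (τ := t (φ1 (φ2 j))) (p := q (φ1 (φ2 j))) (a := a)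
      rw [inv_le_one_iff₀]
      right
      exact h1
  obtain ⟨db, hdbmem, φ3, hφ3, hd3⟩ :=
    (isCompact_Icc (a := (0 : Fin n → ℝ)) (b := fun _ => 1)).tendsto_subseq hDmem
  set ψ : ℕ → ℕ := fun j => φ1 (φ2 (φ3 j)) with hψdef
  have hψmono : StrictMono ψ := hφ1.comp (hφ2.comp hφ3)
  have hp : Tendsto (fun j => q (ψ j)) atTop (𝓝 pbar) :=
    hp1.comp ((hφ2.comp hφ3).tendsto_atTop)
  have hM : Tendsto (fun j => W (ψ j)) atTop (𝓝 Mb) := hM2.comp (hφ3.tendsto_atTop)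
  have hd : Tendsto (fun j => D (ψ j)) atTop (𝓝 db) := hd3
  have hpr : ∀ r, Tendsto (fun j => q (ψ j) r) atTop (𝓝 (pbar r)) :=
    fun r => (tendsto_pi_nhds.1 hp) r
  have hMar : ∀ a r, Tendsto (fun j => W (ψ j) a r) atTop (𝓝 (Mb a r)) :=
    fun a r => (tendsto_pi_nhds.1 ((tendsto_pi_nhds.1 hM) a)) r
  have hda : ∀ a, Tendsto (fun j => D (ψ j) a) atTop (𝓝 (db a)) :=
    fun a => (tendsto_pi_nhds.1 hd) a
  have hvr : ∀ a r, Tendsto (fun j => v a r (q (ψ j) r)) atTop (𝓝 (v a r (pbar r))) :=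
    fun a r => ((hcont a r).tendsto _).comp (hpr r)
  have hpbar0 : ∀ r, 0 ≤ pbar r := fun r => (Set.mem_Icc.1 hpbarmem).1 r
  have hMb0 : ∀ a r, 0 ≤ Mb a r := fun a r => (Set.mem_Icc.1 hMbmem).1 a r
  have hdb0 : ∀ a, 0 ≤ db a := fun a => (Set.mem_Icc.1 hdbmem).1 a
  -- exponential vanishing helper
  have hψR : Tendsto (fun j => ((ψ j : ℝ))) atTop atTop :=
    tendsto_natCast_atTop_atTop.comp hψmono.tendsto_atTop
  have hexp0 : ∀ c : ℝ, 0 < c →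
      Tendsto (fun j => Real.exp (-c / t (ψ j))) atTop (𝓝 0) := by
    intro c hc
    have h1 : Tendsto (fun j => (c / τ0) * ((ψ j : ℝ) + 1)) atTop atTop :=
      (tendsto_atTop_add_const_right atTop 1 hψR).const_mul_atTop (by positivity)
    have h2 : Tendsto (fun j => -((c / τ0) * ((ψ j : ℝ) + 1))) atTop atBot :=
      tendsto_neg_atTop_atBot.comp h1
    have h3 := Real.tendsto_exp_atBot.comp h2
    refine h3.congr fun j => ?_
    show Real.exp (-(c / τ0 * ((ψ j : ℝ) + 1))) = Real.exp (-c / t (ψ j))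
    have ht' : t (ψ j) = τ0 / ((ψ j : ℝ) + 1) := rfl
    congr 1
    rw [ht', div_div_eq_mul_div]
    ring
  have hvanish : ∀ (f : ℕ → ℝ) (L : ℝ) (c : ℝ), 0 < c → Tendsto f atTop (𝓝 L) →
      (∀ᶠ j in atTop, 0 ≤ f j) →
      (∀ᶠ j in atTop, f j ≤ Real.exp (-c / t (ψ j))) → L = 0 := by
    intro f L c hc hf h0 hb
    exact tendsto_nhds_unique hf (squeeze_zero' h0 hb (hexp0 c hc))
  -- support lemmas
  have hS1 : ∀ a r r', v a r (pbar r) < v a r' (pbar r') → Mb a r = 0 := by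
    intro a r r' hlt
    set η := v a r' (pbar r') - v a r (pbar r) with hηdef
    have hηpos : 0 < η := by rw [hηdef]; linarith
    have hdiff : Tendsto (fun j => v a r (q (ψ j) r) - v a r' (q (ψ j) r'))
        atTop (𝓝 (-η)) := by
      have h := (hvr a r).sub (hvr a r')
      have : v a r (pbar r) - v a r' (pbar r') = -η := by rw [hηdef]; ring
      rwa [this] at h
    have hev : ∀ᶠ j in atTop,
        v a r (q (ψ j) r) - v a r' (q (ψ j) r') ≤ -(η/2) := by
      have hlt2 : (-η) < -(η/2) := by linarith
      filter_upwards [hdiff.eventually_lt_const hlt2] with j hj using hj.le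
    refine hvanish _ _ (η/2) (by linarith) (hMar a r)
      (Eventually.of_forall fun j => RentHarmonyAux.wt_nonneg) ?_
    filter_upwards [hev] with j hj
    have hb1 : W (ψ j) a r ≤
        Real.exp ((v a r (q (ψ j) r) - v a r' (q (ψ j) r')) / t (ψ j)) := by
      have hden : Real.exp (v a r' (q (ψ j) r') / t (ψ j)) ≤
          RentHarmonyAux.den v (t (ψ j)) (q (ψ j)) a := RentHarmonyAux.exp_le_den r'
      have hpos : (0:ℝ) < Real.exp (v a r' (q (ψ j) r') / t (ψ j)) := Real.exp_pos _
      calc W (ψ j) a r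
          = Real.exp (v a r (q (ψ j) r) / t (ψ j)) /
            RentHarmonyAux.den v (t (ψ j)) (q (ψ j)) a := rfl
        _ ≤ Real.exp (v a r (q (ψ j) r) / t (ψ j)) /
            Real.exp (v a r' (q (ψ j) r') / t (ψ j)) := by
            gcongr
        _ = Real.exp ((v a r (q (ψ j) r) - v a r' (q (ψ j) r')) / t (ψ j)) := by
            rw [← Real.exp_sub, ← sub_div]
    refine le_trans hb1 (Real.exp_le_exp.2 ?_)
    have ht2 := htpos (ψ j)
    exact div_le_div_of_nonneg_right hj ht2.le
  have hS3 : ∀ a r', 0 < v a r' (pbar r') → db a = 0 := by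
    intro a r' hposv
    set η := v a r' (pbar r') with hηdef
    have hev : ∀ᶠ j in atTop, η/2 ≤ v a r' (q (ψ j) r') := by
      have hlt2 : η/2 < η := by linarith
      filter_upwards [(hvr a r').eventually_const_lt hlt2] with j hj using hj.le
    refine hvanish _ _ (η/2) (by linarith) (hda a)
      (Eventually.of_forall fun j => (inv_pos.2 RentHarmonyAux.den_pos).le) ?_
    filter_upwards [hev] with j hj
    have hden : Real.exp (v a r' (q (ψ j) r') / t (ψ j)) ≤
        RentHarmonyAux.den v (t (ψ j)) (q (ψ j)) a := RentHarmonyAux.exp_le_den r'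
    have hb1 : D (ψ j) a ≤ Real.exp (-(v a r' (q (ψ j) r') / t (ψ j))) := by
      rw [Real.exp_neg]
      exact inv_anti₀ (Real.exp_pos _) hden
    refine le_trans hb1 (Real.exp_le_exp.2 ?_)
    have ht2 := htpos (ψ j)
    rw [neg_div, neg_le_neg_iff]
    exact div_le_div_of_nonneg_right hj ht2.le
  -- a zero-priced room in the limit
  have hzero : ∃ ρ, pbar ρ = 0 := by
    by_contra hno
    push_neg at hno
    have hpos : ∀ r, 0 < pbar r := fun r => lt_of_le_of_ne (hpbar0 r) (Ne.symm (hno r))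
    have hev : ∀ᶠ j in atTop, ∀ r, 0 < q (ψ j) r := by
      rw [eventually_all]
      intro r
      exact (hpr r).eventually_const_lt (hpos r)
    obtain ⟨j, hj⟩ := hev.exists
    obtain ⟨ρ, hρ⟩ := hq4 (ψ j)
    exact absurd hρ (ne_of_gt (hj ρ))
  -- column sums
  have hcol_le : ∀ r, ∑ a, Mb a r ≤ 1 := by
    intro r
    have ht : Tendsto (fun j => ∑ a, W (ψ j) a r) atTop (𝓝 (∑ a, Mb a r)) :=
      tendsto_finset_sum _ (fun a _ => hMar a r)
    refine le_of_tendsto ht (Eventually.of_forall fun j => ?_)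
    exact hq2 (ψ j) r
  have hcol_eq : ∀ r, pbar r ≠ 0 → ∑ a, Mb a r = 1 := by
    intro r h0
    have hrpos : 0 < pbar r := lt_of_le_of_ne (hpbar0 r) (Ne.symm h0)
    have ht : Tendsto (fun j => ∑ a, W (ψ j) a r) atTop (𝓝 (∑ a, Mb a r)) :=
      tendsto_finset_sum _ (fun a _ => hMar a r)
    have hev : (fun j => ∑ a, W (ψ j) a r) =ᶠ[atTop] (fun _ => (1:ℝ)) := by
      filter_upwards [(hpr r).eventually_const_lt hrpos] with j hj
      exact hq3 (ψ j) r hj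
    have ht2 : Tendsto (fun _ : ℕ => (1:ℝ)) atTop (𝓝 (∑ a, Mb a r)) :=
      ht.congr' hev
    exact (tendsto_nhds_unique ht2 tendsto_const_nhds)
  -- row sums
  have hrow : ∀ a, ∑ r, Mb a r + db a = 1 := by
    intro a
    have ht : Tendsto (fun j => ∑ r, W (ψ j) a r + D (ψ j) a) atTop
        (𝓝 (∑ r, Mb a r + db a)) :=
      (tendsto_finset_sum _ fun r _ => hMar a r).add (hda a)
    have heq : ∀ j, ∑ r, W (ψ j) a r + D (ψ j) a = 1 :=
      fun j => RentHarmonyAux.row_sum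
    have ht2 : Tendsto (fun _ : ℕ => (1:ℝ)) atTop (𝓝 (∑ r, Mb a r + db a)) :=
      ht.congr heq
    exact tendsto_nhds_unique ht2 tendsto_const_nhds
  -- Hall's condition and matching
  have hrmaxex : ∀ a : Fin n, ∃ r0, ∀ r, v a r (pbar r) ≤ v a r0 (pbar r0) :=
    fun a => Finite.exists_max (fun r => v a r (pbar r))
  choose rmax hrmaxle using hrmaxex
  set E : Fin n → Finset (Fin n) := fun a =>
    Finset.univ.filter (fun r => v a r (pbar r) = v a (rmax a) (pbar (rmax a))) with hEdef
  have hEmem : ∀ a r, r ∈ E a ↔ v a r (pbar r) = v a (rmax a) (pbar (rmax a)) := by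
    intro a r; rw [hEdef]; simp
  have hsupp : ∀ a r, r ∉ E a → Mb a r = 0 := by
    intro a r hr
    rw [hEmem] at hr
    exact hS1 a r (rmax a) (lt_of_le_of_ne (hrmaxle a r) hr)
  have hdsupp : ∀ a, db a ≠ 0 → ∀ r, v a r (pbar r) ≤ 0 := by
    intro a hda0 r
    by_contra hposv
    push_neg at hposv
    exact hda0 (hS3 a r hposv)
  set Z : Finset (Fin n) := Finset.univ.filter (fun r => pbar r = 0) with hZdef
  have hHall : ∀ A : Finset (Fin n), A.card ≤ (A.biUnion E).card := by
    intro A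
    set N := A.biUnion E with hNdef
    have hEN : ∀ a ∈ A, E a ⊆ N := fun a ha => Finset.subset_biUnion_of_mem E ha
    have hrow' : ∀ a ∈ A, (1:ℝ) ≤ ∑ r ∈ N, Mb a r + db a := by
      intro a ha
      have h1 : ∑ r, Mb a r = ∑ r ∈ E a, Mb a r :=
        (Finset.sum_subset (Finset.subset_univ _) (fun r _ hr => hsupp a r hr)).symm
      have h2 : ∑ r ∈ E a, Mb a r ≤ ∑ r ∈ N, Mb a r :=
        Finset.sum_le_sum_of_subset_of_nonneg (hEN a ha) (fun r _ _ => hMb0 a r)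
      have h3 := hrow a
      rw [h1] at h3
      linarith
    have hcolA : ∀ r, ∑ a ∈ A, Mb a r ≤ 1 := fun r =>
      le_trans (Finset.sum_le_sum_of_subset_of_nonneg (Finset.subset_univ _)
        fun a _ _ => hMb0 a r) (hcol_le r)
    by_cases hD : ∀ a ∈ A, db a = 0
    · have hcard : (A.card : ℝ) ≤ ∑ r ∈ N, (∑ a ∈ A, Mb a r) := by
        calc (A.card:ℝ) = ∑ _a ∈ A, (1:ℝ) := by simp
          _ ≤ ∑ a ∈ A, ∑ r ∈ N, Mb a r := Finset.sum_le_sum (fun a ha => by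
              have := hrow' a ha
              rw [hD a ha] at this
              linarith)
          _ = ∑ r ∈ N, ∑ a ∈ A, Mb a r := Finset.sum_comm
      have hfinal : (A.card : ℝ) ≤ (N.card : ℝ) := by
        refine le_trans hcard (le_trans (Finset.sum_le_sum fun r _ => hcolA r) ?_)
        simp
      exact_mod_cast hfinal
    · push_neg at hD
      obtain ⟨a0, ha0A, ha0⟩ := hD
      have hZE : Z ⊆ E a0 := by
        intro r hr
        rw [hZdef, Finset.mem_filter] at hr
        rw [hEmem]
        have h1 : 0 ≤ v a0 r (pbar r) := by rw [hr.2]; exact hnonneg a0 r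
        have h2 : v a0 r (pbar r) ≤ v a0 (rmax a0) (pbar (rmax a0)) := hrmaxle a0 r
        have h3 : v a0 (rmax a0) (pbar (rmax a0)) ≤ 0 := hdsupp a0 ha0 (rmax a0)
        linarith
      have hZN : Z ⊆ N := subset_trans hZE (hEN a0 ha0A)
      have hDtot : ∑ a ∈ A, db a ≤ ∑ r ∈ Z, (1 - ∑ a, Mb a r) := by
        have h1 : ∑ a ∈ A, db a ≤ ∑ a, db a :=
          Finset.sum_le_sum_of_subset_of_nonneg (Finset.subset_univ _)
            (fun a _ _ => hdb0 a)
        have h3 : ∑ a : Fin n, (∑ r, Mb a r + db a) = (n:ℝ) := by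
          rw [Finset.sum_congr rfl (fun a _ => hrow a)]; simp
        rw [Finset.sum_add_distrib] at h3
        have h4 : ∑ a : Fin n, ∑ r, Mb a r = ∑ r, ∑ a, Mb a r := Finset.sum_comm
        have h5 : ∑ r : Fin n, ((1:ℝ) - ∑ a, Mb a r)
            = (n:ℝ) - ∑ r, ∑ a, Mb a r := by
          rw [Finset.sum_sub_distrib]; simp
        have h6 : ∑ r : Fin n, ((1:ℝ) - ∑ a, Mb a r)
            = ∑ r ∈ Z, ((1:ℝ) - ∑ a, Mb a r) := by
          symm
          apply Finset.sum_subset (Finset.subset_univ _)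
          intro r _ hrZ
          have hne0 : pbar r ≠ 0 := by
            intro h
            exact hrZ (by rw [hZdef]; simp [h])
          rw [hcol_eq r hne0]; ring
        rw [h6] at h5
        linarith
      have hcard : (A.card:ℝ) ≤ ∑ r ∈ N, (∑ a ∈ A, Mb a r)
          + ∑ r ∈ Z, (1 - ∑ a, Mb a r) := by
        calc (A.card:ℝ) = ∑ _a ∈ A, (1:ℝ) := by simp
          _ ≤ ∑ a ∈ A, (∑ r ∈ N, Mb a r + db a) := Finset.sum_le_sum hrow'
          _ = ∑ a ∈ A, ∑ r ∈ N, Mb a r + ∑ a ∈ A, db a := Finset.sum_add_distrib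
          _ = ∑ r ∈ N, ∑ a ∈ A, Mb a r + ∑ a ∈ A, db a := by rw [Finset.sum_comm]
          _ ≤ _ := by linarith
      have hsplit : ∑ r ∈ N, (∑ a ∈ A, Mb a r)
          = ∑ r ∈ N \ Z, (∑ a ∈ A, Mb a r) + ∑ r ∈ Z, (∑ a ∈ A, Mb a r) :=
        (Finset.sum_sdiff hZN).symm
      have hZsum : ∑ r ∈ Z, (∑ a ∈ A, Mb a r) + ∑ r ∈ Z, ((1:ℝ) - ∑ a, Mb a r)
          ≤ (Z.card : ℝ) := by
        rw [← Finset.sum_add_distrib]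
        calc ∑ r ∈ Z, ((∑ a ∈ A, Mb a r) + (1 - ∑ a, Mb a r))
            ≤ ∑ _r ∈ Z, (1:ℝ) := by
              refine Finset.sum_le_sum fun r _ => ?_
              have hsub : ∑ a ∈ A, Mb a r ≤ ∑ a, Mb a r :=
                Finset.sum_le_sum_of_subset_of_nonneg (Finset.subset_univ _)
                  (fun a _ _ => hMb0 a r)
              linarith
          _ = (Z.card : ℝ) := by simp
      have hNZ : ∑ r ∈ N \ Z, (∑ a ∈ A, Mb a r) ≤ ((N \ Z).card : ℝ) := by
        calc ∑ r ∈ N \ Z, (∑ a ∈ A, Mb a r) ≤ ∑ _r ∈ N \ Z, (1:ℝ) :=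
              Finset.sum_le_sum fun r _ => hcolA r
          _ = ((N \ Z).card : ℝ) := by simp
      have hfinal : (A.card:ℝ) ≤ ((N \ Z).card : ℝ) + (Z.card : ℝ) := by
        rw [hsplit] at hcard
        linarith
      have hcards : ((N \ Z).card : ℝ) + (Z.card : ℝ) = (N.card : ℝ) := by
        rw [← Nat.cast_add]
        norm_cast
        exact Finset.card_sdiff_add_card_eq_card hZN
      rw [hcards] at hfinal
      exact_mod_cast hfinal
  obtain ⟨f, hfinj, hfE⟩ :=
    (Finset.all_card_le_biUnion_card_iff_exists_injective E).1 hHall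
  have hfbij : Function.Bijective f := Finite.injective_iff_bijective.1 hfinj
  refine ⟨Equiv.ofBijective f hfbij, pbar, ?_, hpbar0, hzero⟩
  intro a r
  have h1 : v a (f a) (pbar (f a)) = v a (rmax a) (pbar (rmax a)) :=
    (hEmem a (f a)).1 (hfE a)
  show v a r (pbar r) ≤ v a (f a) (pbar (f a))
  rw [h1]
  exact hrmaxle a r

/-- Theorem 3.1 (existence content): under the standing assumptions there is
an envy-free solution with nonnegative prices in which some room has rent
zero. -/
theorem exists_envy_free_with_zero_price
    (n : ℕ) (hn : 0 < n) (v : Fin n → Fin n → ℝ → ℝ)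
    (hcont : ∀ a r, Continuous (v a r))
    (hanti : ∀ a r, StrictAnti (v a r))
    (hpl : ∀ a r, PiecewiseLinear (v a r))
    (hnonneg : ∀ a r, 0 ≤ v a r 0) :
    ∃ (π : Equiv.Perm (Fin n)) (p : Fin n → ℝ),
      (∀ a r, v a r (p r) ≤ v a (π a) (p (π a))) ∧
      (∀ r, 0 ≤ p r) ∧
      ∃ ρ : Fin n, p ρ = 0 := by
  exact exists_envy_free_with_zero_price' n hn v hcont hanti hpl hnonneg
end

section
/- Theorem 3.2 (existence content): For every ε > 0, every rent-division instance satisfying the standing assumptions admits an ε-envy-free solution (π, p) with p r ≥ 0 for every room r and v a (π a) (p (π a)) ≥ 0 for every agent a. -/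
/-- A solution `(π, p)` is `ε`-envy-free. -/
def EpsEF (n : ℕ) (ε : ℝ) (v : Fin n → Fin n → ℝ → ℝ)
    (π : Equiv.Perm (Fin n)) (p : Fin n → ℝ) : Prop :=
  ∀ a : Fin n,
    (0 ≤ v a (π a) (p (π a)) →
      ∀ r, v a r (p r) ≤ (1 + ε) * v a (π a) (p (π a))) ∧
    (v a (π a) (p (π a)) < 0 →
      ∀ r, (1 + ε) * v a r (p r) ≤ v a (π a) (p (π a)))

lemma glue_Iic {g : ℝ → ℝ} {a c : ℝ} (hac : a ≤ c)
    (h1 : MonotoneOn g (Set.Iic a)) (h2 : MonotoneOn g (Set.Icc a c)) :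
    MonotoneOn g (Set.Iic c) := by
  intro x hx y hy hxy
  rcases le_total y a with h | h
  · exact h1 (le_trans hxy h) h hxy
  rcases le_total a x with h' | h'
  · exact h2 ⟨h', hx⟩ ⟨h, hy⟩ hxy
  · exact le_trans (h1 h' Set.self_mem_Iic h') (h2 ⟨le_rfl, hac⟩ ⟨h, hy⟩ h)

lemma glue_all {g : ℝ → ℝ} {a : ℝ}
    (h1 : MonotoneOn g (Set.Iic a)) (h2 : MonotoneOn g (Set.Ici a)) :
    Monotone g := by
  intro x y hxy
  rcases le_total y a with h | h
  · exact h1 (le_trans hxy h) h hxy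
  rcases le_total a x with h' | h'
  · exact h2 h' (le_trans h' hxy) hxy
  · exact le_trans (h1 h' Set.self_mem_Iic h') (h2 (Set.mem_Ici.mpr le_rfl) h h)

lemma pl_slope_bound (f : ℝ → ℝ) (hpl : PiecewiseLinear f) :
    ∃ L : ℝ, 0 < L ∧ ∀ x y : ℝ, x ≤ y → f x - f y ≤ L * (y - x) := by
  obtain ⟨t, b, hb, ⟨m₀, c₀, h₀⟩, hmid, ⟨m₁, c₁, h₁⟩⟩ := hpl
  choose ms cs hms using hmid
  set L : ℝ := 1 + (max (-m₀) 0 + (max (-m₁) 0 + ∑ i : Fin t, max (-(ms i)) 0)) with hLdef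
  have hsum_nonneg : (0:ℝ) ≤ ∑ i : Fin t, max (-(ms i)) 0 :=
    Finset.sum_nonneg (fun i _ => le_max_right _ _)
  have hL0 : 0 < L := by
    have := le_max_right (-m₀) 0
    have := le_max_right (-m₁) 0
    simp only [hLdef]; linarith
  have hLm₀ : -m₀ ≤ L := by
    have := le_max_left (-m₀) 0
    have := le_max_right (-m₁) 0
    simp only [hLdef]; linarith
  have hLm₁ : -m₁ ≤ L := by
    have := le_max_right (-m₀) 0
    have := le_max_left (-m₁) 0
    simp only [hLdef]; linarith
  have hLms : ∀ i : Fin t, -(ms i) ≤ L := by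
    intro i
    have h1 : max (-(ms i)) 0 ≤ ∑ j : Fin t, max (-(ms j)) 0 :=
      Finset.single_le_sum (f := fun j => max (-(ms j)) 0)
        (fun j _ => le_max_right _ _) (Finset.mem_univ i)
    have := le_max_left (-(ms i)) 0
    have := le_max_right (-m₀) 0
    have := le_max_right (-m₁) 0
    simp only [hLdef]; linarith
  set g : ℝ → ℝ := fun x => f x + L * x with hgdef
  have hpiece : ∀ (m c : ℝ), -m ≤ L → ∀ s : Set ℝ,
      (∀ x ∈ s, f x = m * x + c) → MonotoneOn g s := by
    intro m c hm s hs x hx y hy hxy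
    simp only [hgdef]
    rw [hs x hx, hs y hy]
    nlinarith [mul_le_mul_of_nonneg_right (by linarith : (0:ℝ) ≤ m + L)
      (by linarith : (0:ℝ) ≤ y - x)]
  have hIic : ∀ i : ℕ, ∀ h : i < t + 1, MonotoneOn g (Set.Iic (b ⟨i, h⟩)) := by
    intro i
    induction i with
    | zero =>
      intro h
      exact hpiece m₀ c₀ hLm₀ _ (fun x hx => h₀ x hx)
    | succ i ih =>
      intro h
      have hi : i < t + 1 := by omega
      have hit : i < t := by omega
      have hle : b ⟨i, hi⟩ ≤ b ⟨i + 1, h⟩ := hb.monotone (by simp [Fin.mk_le_mk])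
      have h2 : MonotoneOn g (Set.Icc (b ⟨i, hi⟩) (b ⟨i + 1, h⟩)) := by
        have hmsᵢ := hms ⟨i, hit⟩
        have e1 : (⟨i, hit⟩ : Fin t).castSucc = (⟨i, hi⟩ : Fin (t+1)) := rfl
        have e2 : (⟨i, hit⟩ : Fin t).succ = (⟨i + 1, h⟩ : Fin (t+1)) := rfl
        rw [e1, e2] at hmsᵢ
        exact hpiece _ _ (hLms ⟨i, hit⟩) _ hmsᵢ
      exact glue_Iic hle (ih hi) h2
  have hmono : Monotone g := by
    have hlast : MonotoneOn g (Set.Iic (b (Fin.last t))) := hIic t (by omega)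
    have hright : MonotoneOn g (Set.Ici (b (Fin.last t))) :=
      hpiece m₁ c₁ hLm₁ _ (fun x hx => h₁ x hx)
    exact glue_all hlast hright
  refine ⟨L, hL0, fun x y hxy => ?_⟩
  have := hmono hxy
  simp only [hgdef] at this
  nlinarith

lemma pl_eventually_neg (f : ℝ → ℝ) (hanti : StrictAnti f) (hpl : PiecewiseLinear f) :
    ∃ X : ℝ, f X < 0 := by
  obtain ⟨t, b, hb, -, -, ⟨m, c, hm⟩⟩ := hpl
  set z := b (Fin.last t) with hz
  have h1 : f z = m * z + c := hm z le_rfl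
  have h2 : f (z + 1) = m * (z + 1) + c := hm (z + 1) (by linarith)
  have hmneg : m < 0 := by
    have := hanti (show z < z + 1 by linarith)
    rw [h1, h2] at this; linarith
  refine ⟨max z ((-1 - c) / m), ?_⟩
  have hX1 : z ≤ max z ((-1 - c) / m) := le_max_left _ _
  have hX2 : (-1 - c) / m ≤ max z ((-1 - c) / m) := le_max_right _ _
  rw [hm _ hX1]
  have hmul : m * max z ((-1 - c) / m) ≤ m * ((-1 - c) / m) :=
    mul_le_mul_of_nonpos_left hX2 (le_of_lt hmneg)
  have hne : m ≠ 0 := ne_of_lt hmneg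
  have : m * ((-1 - c) / m) = -1 - c := by field_simp
  linarith


section Auction
open Finset

variable {n : ℕ} {v : Fin n → Fin n → ℝ → ℝ}

lemma auction_aux
    (hcont : ∀ a r, Continuous (v a r))
    (hanti : ∀ a r, StrictAnti (v a r))
    (hnonneg : ∀ a r, 0 ≤ v a r 0)
    (C L η : ℝ) (hCneg : ∀ a r, v a r C < 0)
    (hL0 : 0 < L) (hL : ∀ a r x y, x ≤ y → v a r x - v a r y ≤ L * (y - x))
    (hη : 0 < η) :
    ∀ K : ℕ, ∀ (μ : Fin n → Option (Fin n)) (p : Fin n → ℝ),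
      (∀ a b r, μ a = some r → μ b = some r → a = b) →
      (∀ r, 0 ≤ p r ∧ p r ≤ C) →
      (∀ r, (∀ a, μ a ≠ some r) → p r = 0) →
      (∀ a r, μ a = some r → 0 ≤ v a r (p r) ∧
        ∀ r', v a r' (p r') ≤ v a r (p r) + η) →
      (⌈((n : ℝ) * C - ∑ r, p r) * L / η⌉.toNat * (n + 1) +
        (Finset.univ.filter (fun a => μ a = none)).card ≤ K) →
      ∃ (π : Equiv.Perm (Fin n)) (q : Fin n → ℝ),
        (∀ r, 0 ≤ q r ∧ q r ≤ C) ∧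
        (∀ a, 0 ≤ v a (π a) (q (π a))) ∧
        (∀ a r, v a r (q r) ≤ v a (π a) (q (π a)) + η) := by
  intro K
  induction K using Nat.strong_induction_on with
  | _ K IH =>
  intro μ p hinj hpC hfree hEF hK
  classical
  by_cases hall : ∀ a, μ a ≠ none
  · -- everyone matched : done
    have hsome : ∀ a, ∃ r, μ a = some r := by
      intro a
      cases h : μ a with
      | none => exact absurd h (hall a)
      | some r => exact ⟨r, rfl⟩
    choose f hf using hsome
    have hfinj : Function.Injective f := by
      intro a b hab
      exact hinj a b (f a) (hf a) (by rw [hab]; exact hf b)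
    have hbij : Function.Bijective f := Finite.injective_iff_bijective.mp hfinj
    refine ⟨Equiv.ofBijective f hbij, p, hpC, ?_, ?_⟩
    · intro a
      exact (hEF a (f a) (hf a)).1
    · intro a r
      exact (hEF a (f a) (hf a)).2 r
  · push_neg at hall
    obtain ⟨a, ha⟩ := hall
    haveI : Nonempty (Fin n) := ⟨a⟩
    -- there is an unoccupied room, of price 0
    have hunocc : ∃ w, ∀ b, μ b ≠ some w := by
      by_contra h
      push_neg at h
      choose g hg using h
      have hginj : Function.Injective g := by
        intro r s hrs
        have h1 := hg r
        have h2 := hg s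
        rw [hrs] at h1
        rw [h1] at h2
        exact Option.some_injective _ h2
      obtain ⟨r, hr⟩ := (Finite.injective_iff_surjective.mp hginj) a
      have := hg r
      rw [hr, ha] at this
      exact nomatch this
    obtain ⟨w, hw⟩ := hunocc
    have hpw : p w = 0 := hfree w hw
    obtain ⟨rs, -, hrs⟩ :=
      Finset.exists_max_image Finset.univ (fun r => v a r (p r)) ⟨a, Finset.mem_univ a⟩
    have hbest : ∀ r, v a r (p r) ≤ v a rs (p rs) := fun r => hrs r (Finset.mem_univ r)
    set best := v a rs (p rs) with hbestdef
    have hbest0 : 0 ≤ best := by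
      have : 0 ≤ v a w (p w) := by rw [hpw]; exact hnonneg a w
      exact le_trans this (hbest w)
    by_cases hcase : best ≤ η
    · -- Case B : take the free room at price 0
      set μ' := fun b => if b = a then some w else μ b with hμ'def
      have hμ'a : μ' a = some w := by simp [hμ'def]
      have hμ'b : ∀ b, b ≠ a → μ' b = μ b := by intro b hb; simp [hμ'def, hb]
      have hinj' : ∀ x y r, μ' x = some r → μ' y = some r → x = y := by
        intro x y r hx hy
        by_cases hxa : x = a <;> by_cases hya : y = a
        · rw [hxa, hya]
        · subst hxa
          rw [hμ'a] at hx
          rw [hμ'b y hya] at hy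
          exact absurd hy (by rw [← Option.some_injective _ hx]; exact hw y)
        · subst hya
          rw [hμ'a] at hy
          rw [hμ'b x hxa] at hx
          exact absurd hx (by rw [← Option.some_injective _ hy]; exact hw x)
        · rw [hμ'b x hxa] at hx
          rw [hμ'b y hya] at hy
          exact hinj x y r hx hy
      have hfree' : ∀ r, (∀ b, μ' b ≠ some r) → p r = 0 := by
        intro r hr
        apply hfree r
        intro b hb
        by_cases hba : b = a
        · subst hba; rw [ha] at hb; exact nomatch hb
        · exact hr b (by rw [hμ'b b hba]; exact hb)
      have hEF' : ∀ x r, μ' x = some r → 0 ≤ v x r (p r) ∧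
          ∀ r', v x r' (p r') ≤ v x r (p r) + η := by
        intro x r hx
        by_cases hxa : x = a
        · have hr : r = w := by
            rw [hxa, hμ'a] at hx
            exact (Option.some_injective _ hx).symm
          rw [hxa, hr]
          have h0 : 0 ≤ v a w (p w) := by rw [hpw]; exact hnonneg a w
          refine ⟨h0, fun r' => ?_⟩
          have := hbest r'
          linarith
        · rw [hμ'b x hxa] at hx
          exact hEF x r hx
      have hcard : (Finset.univ.filter (fun b => μ' b = none)).card <
          (Finset.univ.filter (fun b => μ b = none)).card := by
        apply Finset.card_lt_card
        constructor
        · intro b hb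
          simp only [Finset.mem_filter, Finset.mem_univ, true_and] at hb ⊢
          by_cases hba : b = a
          · subst hba; rw [hμ'a] at hb; exact nomatch hb
          · rw [← hμ'b b hba]; exact hb
        · intro hsub
          have hamem : a ∈ Finset.univ.filter (fun b => μ b = none) := by
            simp [ha]
          have := hsub hamem
          simp only [Finset.mem_filter, Finset.mem_univ, true_and, hμ'a] at this
          exact nomatch this
      refine IH (⌈((n : ℝ) * C - ∑ r, p r) * L / η⌉.toNat * (n + 1) +
          (Finset.univ.filter (fun b => μ' b = none)).card) (by omega)
        μ' p hinj' hpC hfree' hEF' le_rfl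
    · -- Case A : raise the price of the best room
      push_neg at hcase
      have hbestpos : 0 < best := lt_trans hη hcase
      have hpleC : p rs ≤ C := (hpC rs).2
      have hCneg' : v a rs C < 0 := hCneg a rs
      have hmem : best - η ∈ Set.Icc (v a rs C) (v a rs (p rs)) :=
        ⟨by linarith, by linarith⟩
      obtain ⟨q, hqIcc, hqval⟩ :=
        intermediate_value_Icc' hpleC (hcont a rs).continuousOn hmem
      have hq0 : 0 ≤ q := le_trans (hpC rs).1 hqIcc.1
      have hqC : q ≤ C := hqIcc.2
      have hqgt : p rs < q := by
        by_contra h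
        push_neg at h
        have := (hanti a rs).antitone h
        rw [hqval] at this
        linarith
      have hstep : η / L ≤ q - p rs := by
        have h1 := hL a rs (p rs) q (le_of_lt hqgt)
        rw [hqval] at h1
        rw [div_le_iff₀ hL0]
        have : (q - p rs) * L = L * (q - p rs) := by ring
        linarith
      set p' := Function.update p rs q with hp'def
      have hp'rs : p' rs = q := Function.update_self rs q p
      have hp'other : ∀ r, r ≠ rs → p' r = p r := by
        intro r hr; exact Function.update_of_ne hr q p
      set μ' := fun b => if b = a then some rs
        else if μ b = some rs then none else μ b with hμ'def
      have hμ'a : μ' a = some rs := by simp [hμ'def]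
      have hμ'b : ∀ b, b ≠ a → μ b ≠ some rs → μ' b = μ b := by
        intro b h1 h2; simp [hμ'def, h1, h2]
      have hμ'char : ∀ x r, x ≠ a → μ' x = some r → (μ x = some r ∧ r ≠ rs) := by
        intro x r hxa hx
        simp only [hμ'def, if_neg hxa] at hx
        by_cases h2 : μ x = some rs
        · rw [if_pos h2] at hx; exact nomatch hx
        · rw [if_neg h2] at hx
          refine ⟨hx, ?_⟩
          intro hrrs
          rw [hrrs] at hx
          exact h2 hx
      have hinj' : ∀ x y r, μ' x = some r → μ' y = some r → x = y := by
        intro x y r hx hy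
        by_cases hxa : x = a <;> by_cases hya : y = a
        · rw [hxa, hya]
        · subst hxa
          rw [hμ'a] at hx
          have hr : r = rs := Option.some_injective _ hx.symm
          obtain ⟨hy', hne⟩ := hμ'char y r hya hy
          exact absurd hr hne
        · subst hya
          rw [hμ'a] at hy
          have hr : r = rs := Option.some_injective _ hy.symm
          obtain ⟨hx', hne⟩ := hμ'char x r hxa hx
          exact absurd hr hne
        · obtain ⟨hx', -⟩ := hμ'char x r hxa hx
          obtain ⟨hy', -⟩ := hμ'char y r hya hy
          exact hinj x y r hx' hy'
      have hpC' : ∀ r, 0 ≤ p' r ∧ p' r ≤ C := by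
        intro r
        by_cases hr : r = rs
        · subst hr; rw [hp'rs]; exact ⟨hq0, hqC⟩
        · rw [hp'other r hr]; exact hpC r
      have hfree' : ∀ r, (∀ b, μ' b ≠ some r) → p' r = 0 := by
        intro r hr
        have hrrs : r ≠ rs := by
          intro h; subst h; exact hr a hμ'a
        rw [hp'other r hrrs]
        apply hfree r
        intro b hb
        by_cases hba : b = a
        · subst hba; rw [ha] at hb; exact nomatch hb
        · by_cases h2 : μ b = some rs
          · rw [h2] at hb
            exact hrrs (Option.some_injective _ hb).symm
          · exact hr b (by rw [hμ'b b hba h2]; exact hb)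
      have hEF' : ∀ x r, μ' x = some r → 0 ≤ v x r (p' r) ∧
          ∀ r', v x r' (p' r') ≤ v x r (p' r) + η := by
        intro x r hx
        by_cases hxa : x = a
        · have hr : r = rs := by
            rw [hxa, hμ'a] at hx
            exact (Option.some_injective _ hx).symm
          rw [hxa, hr, hp'rs, hqval]
          refine ⟨by linarith, fun r' => ?_⟩
          by_cases hr' : r' = rs
          · rw [hr', hp'rs, hqval]; linarith
          · rw [hp'other r' hr']
            have := hbest r'
            linarith
        · obtain ⟨hx', hne⟩ := hμ'char x r hxa hx
          obtain ⟨h0, henvy⟩ := hEF x r hx'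
          rw [hp'other r hne]
          refine ⟨h0, fun r' => ?_⟩
          by_cases hr' : r' = rs
          · rw [hr', hp'rs]
            have h2 : v x rs q ≤ v x rs (p rs) := (hanti x rs).antitone (le_of_lt hqgt)
            exact le_trans h2 (henvy rs)
          · rw [hp'other r' hr']
            exact henvy r'
      -- measure decreases
      have hsum' : ∑ r, p' r = (∑ r, p r) + (q - p rs) := by
        rw [hp'def, Finset.sum_update_of_mem (Finset.mem_univ rs)]
        rw [Finset.sum_eq_sum_sdiff_singleton_add (Finset.mem_univ rs) p]
        ring
      have hsumle : ∑ r, p' r ≤ (n : ℝ) * C := by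
        have h1 : ∀ r ∈ Finset.univ, p' r ≤ C := fun r _ => (hpC' r).2
        have h2 := Finset.sum_le_card_nsmul Finset.univ p' C h1
        rwa [Finset.card_univ, Fintype.card_fin, nsmul_eq_mul] at h2
      have hT'0 : 0 ≤ ((n : ℝ) * C - ∑ r, p' r) * L / η :=
        div_nonneg (mul_nonneg (by linarith) hL0.le) hη.le
      have hT'T : ((n : ℝ) * C - ∑ r, p' r) * L / η ≤
          ((n : ℝ) * C - ∑ r, p r) * L / η - 1 := by
        have h1 : η ≤ (q - p rs) * L := (div_le_iff₀ hL0).mp hstep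
        have h2 : (1 : ℝ) ≤ (q - p rs) * L / η := (one_le_div hη).mpr h1
        have h3 : ((n : ℝ) * C - ∑ r, p' r) * L / η =
            ((n : ℝ) * C - ∑ r, p r) * L / η - (q - p rs) * L / η := by
          rw [hsum']; ring
        linarith
      have hceil : ⌈((n : ℝ) * C - ∑ r, p' r) * L / η⌉ ≤
          ⌈((n : ℝ) * C - ∑ r, p r) * L / η⌉ - 1 := by
        have := Int.ceil_le_ceil hT'T
        rwa [Int.ceil_sub_one] at this
      have hceil0 : 0 ≤ ⌈((n : ℝ) * C - ∑ r, p' r) * L / η⌉ := Int.ceil_nonneg hT'0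
      have hM : ⌈((n : ℝ) * C - ∑ r, p' r) * L / η⌉.toNat + 1 ≤
          ⌈((n : ℝ) * C - ∑ r, p r) * L / η⌉.toNat := by omega
      have hunm' : (Finset.univ.filter (fun b => μ' b = none)).card ≤ n := by
        calc (Finset.univ.filter (fun b => μ' b = none)).card
            ≤ Finset.univ.card := Finset.card_filter_le _ _
          _ = n := by rw [Finset.card_univ, Fintype.card_fin]
      set M1' := ⌈((n : ℝ) * C - ∑ r, p' r) * L / η⌉.toNat with hM1'
      set M1 := ⌈((n : ℝ) * C - ∑ r, p r) * L / η⌉.toNat with hM1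
      have hmeas : M1' * (n + 1) +
          (Finset.univ.filter (fun b => μ' b = none)).card < K := by
        have e1 : (M1' + 1) * (n + 1) ≤ M1 * (n + 1) :=
          Nat.mul_le_mul_right _ hM
        have e2 : (M1' + 1) * (n + 1) = M1' * (n + 1) + (n + 1) := by ring
        omega
      exact IH (M1' * (n + 1) +
          (Finset.univ.filter (fun b => μ' b = none)).card) hmeas
        μ' p' hinj' hpC' hfree' hEF' le_rfl

end Auction

-- wrapper + main theorem (to append after a.lean defs and b.lean auction)
section Main
open Filter Topology Finset

lemma auction_run {n : ℕ} {v : Fin n → Fin n → ℝ → ℝ}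
    (hcont : ∀ a r, Continuous (v a r))
    (hanti : ∀ a r, StrictAnti (v a r))
    (hnonneg : ∀ a r, 0 ≤ v a r 0)
    (C L η : ℝ) (hC0 : 0 ≤ C) (hCneg : ∀ a r, v a r C < 0)
    (hL0 : 0 < L) (hL : ∀ a r x y, x ≤ y → v a r x - v a r y ≤ L * (y - x))
    (hη : 0 < η) :
    ∃ (π : Equiv.Perm (Fin n)) (q : Fin n → ℝ),
      (∀ r, 0 ≤ q r ∧ q r ≤ C) ∧
      (∀ a, 0 ≤ v a (π a) (q (π a))) ∧
      (∀ a r, v a r (q r) ≤ v a (π a) (q (π a)) + η) := by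
  classical
  refine auction_aux hcont hanti hnonneg C L η hCneg hL0 hL hη
    (⌈((n : ℝ) * C - ∑ _r : Fin n, (0 : ℝ)) * L / η⌉.toNat * (n + 1) +
      (Finset.univ.filter (fun a : Fin n => (none : Option (Fin n)) = none)).card)
    (fun _ => none) (fun _ => 0) ?_ ?_ ?_ ?_ le_rfl
  · intro a b r h
    exact nomatch h
  · intro r
    exact ⟨le_rfl, hC0⟩
  · intro r _
    rfl
  · intro a r h
    exact nomatch h


/-- Theorem 3.2 (existence content): for any `ε > 0`, under the standing
assumptions there is an `ε`-envy-free solution with nonnegative prices and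
nonnegative utilities for all agents. -/
theorem exists_eps_envy_free_nonneg
    (n : ℕ) (v : Fin n → Fin n → ℝ → ℝ)
    (hcont : ∀ a r, Continuous (v a r))
    (hanti : ∀ a r, StrictAnti (v a r))
    (hpl : ∀ a r, PiecewiseLinear (v a r))
    (hnonneg : ∀ a r, 0 ≤ v a r 0)
    (ε : ℝ) (hε : 0 < ε) :
    ∃ (π : Equiv.Perm (Fin n)) (p : Fin n → ℝ),
      EpsEF n ε v π p ∧
      (∀ r, 0 ≤ p r) ∧
      (∀ a, 0 ≤ v a (π a) (p (π a))) := by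
  classical
  -- global one-sided Lipschitz constant
  have hLex := fun a r => pl_slope_bound (v a r) (hpl a r)
  choose Lf hLf using hLex
  set L : ℝ := 1 + ∑ a : Fin n, ∑ r : Fin n, max (Lf a r) 0 with hLdef
  have hsnnL : (0:ℝ) ≤ ∑ a : Fin n, ∑ r : Fin n, max (Lf a r) 0 :=
    Finset.sum_nonneg fun a _ => Finset.sum_nonneg fun r _ => le_max_right _ _
  have hL0 : 0 < L := by simp only [hLdef]; linarith
  have hLge : ∀ a r, Lf a r ≤ L := by
    intro a r
    have e1 : max (Lf a r) 0 ≤ ∑ r' : Fin n, max (Lf a r') 0 :=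
      Finset.single_le_sum (f := fun r' => max (Lf a r') 0)
        (fun j _ => le_max_right _ _) (Finset.mem_univ r)
    have e2 : ∑ r' : Fin n, max (Lf a r') 0 ≤
        ∑ a' : Fin n, ∑ r' : Fin n, max (Lf a' r') 0 :=
      Finset.single_le_sum (f := fun a' => ∑ r' : Fin n, max (Lf a' r') 0)
        (fun j _ => Finset.sum_nonneg fun _ _ => le_max_right _ _) (Finset.mem_univ a)
    have e3 := le_max_left (Lf a r) 0
    simp only [hLdef]; linarith
  have hL : ∀ a r x y, x ≤ y → v a r x - v a r y ≤ L * (y - x) := by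
    intro a r x y hxy
    calc v a r x - v a r y ≤ Lf a r * (y - x) := (hLf a r).2 x y hxy
      _ ≤ L * (y - x) := mul_le_mul_of_nonneg_right (hLge a r) (by linarith)
  -- a price level where everyone's value is negative
  have hXex := fun a r => pl_eventually_neg (v a r) (hanti a r) (hpl a r)
  choose Xf hXf using hXex
  set C : ℝ := 1 + ∑ a : Fin n, ∑ r : Fin n, max (Xf a r) 0 with hCdef
  have hsnnC : (0:ℝ) ≤ ∑ a : Fin n, ∑ r : Fin n, max (Xf a r) 0 :=
    Finset.sum_nonneg fun a _ => Finset.sum_nonneg fun r _ => le_max_right _ _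
  have hC0 : 0 ≤ C := by simp only [hCdef]; linarith
  have hCgt : ∀ a r, Xf a r < C := by
    intro a r
    have e1 : max (Xf a r) 0 ≤ ∑ r' : Fin n, max (Xf a r') 0 :=
      Finset.single_le_sum (f := fun r' => max (Xf a r') 0)
        (fun j _ => le_max_right _ _) (Finset.mem_univ r)
    have e2 : ∑ r' : Fin n, max (Xf a r') 0 ≤
        ∑ a' : Fin n, ∑ r' : Fin n, max (Xf a' r') 0 :=
      Finset.single_le_sum (f := fun a' => ∑ r' : Fin n, max (Xf a' r') 0)
        (fun j _ => Finset.sum_nonneg fun _ _ => le_max_right _ _) (Finset.mem_univ a)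
    have e3 := le_max_left (Xf a r) 0
    simp only [hCdef]; linarith
  have hCneg : ∀ a r, v a r C < 0 :=
    fun a r => lt_trans (hanti a r (hCgt a r)) (hXf a r)
  -- approximate solutions at scale 1/(k+1)
  have key : ∀ k : ℕ, ∃ (π : Equiv.Perm (Fin n)) (p : Fin n → ℝ),
      (∀ r, 0 ≤ p r ∧ p r ≤ C) ∧
      (∀ a, 0 ≤ v a (π a) (p (π a))) ∧
      (∀ a r, v a r (p r) ≤ v a (π a) (p (π a)) + 1 / ((k : ℝ) + 1)) := by
    intro k
    refine auction_run hcont hanti hnonneg C L (1 / ((k : ℝ) + 1)) hC0 hCneg hL0 hL ?_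
    positivity
  -- pass to the limit
  choose πs ps h1 h2 h3 using key
  obtain ⟨π, hπ⟩ := Finite.exists_infinite_fiber πs
  have hinf : (πs ⁻¹' {π}).Infinite := Set.infinite_coe_iff.mp hπ
  choose nxt hnxt1 hnxt2 using fun m => hinf.exists_gt m
  obtain ⟨m0, hm0⟩ := hinf.nonempty
  set e : ℕ → ℕ := fun k => Nat.rec m0 (fun _ prev => nxt prev) k with hedef
  have heS : ∀ k, πs (e k) = π := by
    intro k
    induction k with
    | zero => exact hm0
    | succ k ih => exact hnxt1 (e k)
  have hemono : StrictMono e := strictMono_nat_of_lt_succ (fun k => hnxt2 (e k))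
  have hmemseq : ∀ k, ps (e k) ∈ Set.Icc (0 : Fin n → ℝ) (fun _ => C) := by
    intro k
    rw [Set.mem_Icc]
    exact ⟨fun r => (h1 (e k) r).1, fun r => (h1 (e k) r).2⟩
  obtain ⟨plim, hplim, φ, hφ, htend⟩ := (isCompact_Icc (a := (0 : Fin n → ℝ))
    (b := fun _ => C)).tendsto_subseq hmemseq
  have hco : ∀ r, Tendsto (fun k => ps (e (φ k)) r) atTop (𝓝 (plim r)) :=
    fun r => (tendsto_pi_nhds.mp htend) r
  have hεtend : Tendsto (fun k => 1 / ((e (φ k) : ℝ) + 1)) atTop (𝓝 0) :=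
    tendsto_one_div_add_atTop_nhds_zero_nat.comp (hemono.comp hφ).tendsto_atTop
  have hown : ∀ a, Tendsto (fun k => v a (π a) (ps (e (φ k)) (π a))) atTop
      (𝓝 (v a (π a) (plim (π a)))) :=
    fun a => ((hcont a (π a)).tendsto _).comp (hco (π a))
  have hulim : ∀ a, 0 ≤ v a (π a) (plim (π a)) := by
    intro a
    refine ge_of_tendsto' (hown a) (fun k => ?_)
    have := h2 (e (φ k)) a
    rwa [heS] at this
  have henvy : ∀ a r, v a r (plim r) ≤ v a (π a) (plim (π a)) := by
    intro a r
    have hvalr : Tendsto (fun k => v a r (ps (e (φ k)) r)) atTop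
        (𝓝 (v a r (plim r))) := ((hcont a r).tendsto _).comp (hco r)
    have h5 : Tendsto (fun k => v a (π a) (ps (e (φ k)) (π a)) +
        1 / ((e (φ k) : ℝ) + 1)) atTop (𝓝 (v a (π a) (plim (π a)) + 0)) :=
      (hown a).add hεtend
    rw [add_zero] at h5
    refine le_of_tendsto_of_tendsto' hvalr h5 (fun k => ?_)
    have := h3 (e (φ k)) a r
    rwa [heS] at this
  refine ⟨π, plim, ?_, fun r => (Set.mem_Icc.mp hplim).1 r, hulim⟩
  intro a
  constructor
  · intro h0 r
    calc v a r (plim r) ≤ v a (π a) (plim (π a)) := henvy a r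
      _ ≤ (1 + ε) * v a (π a) (plim (π a)) :=
        le_mul_of_one_le_left (hulim a) (by linarith)
  · intro hneg
    exact absurd hneg (not_lt.mpr (hulim a))

end Main
end

section
/- Theorem 3.3 (existence content, fixed total rent): For every ε > 0 and every real number C, every rent-division instance satisfying the standing assumptions admits a permutation π and a price vector p : Fin n → ℝ (possibly with negative entries) such that (π, p) is an ε-envy-free solution and ∑_{r} p r = C. -/
open Finset Filter Topology
namespace RentAux

variable {ι : Type*} [Fintype ι]

noncomputable def Gval (f : ι → ℝ) (j : ℕ) : ℝ :=
  if h : ((univ : Finset ι).powersetCard j).Nonempty then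
    ((univ : Finset ι).powersetCard j).inf' h (fun S => ∑ i ∈ S, f i) else 0

lemma Gval_def (f : ι → ℝ) {j : ℕ} (hj : j ≤ Fintype.card ι) :
    Gval f j = ((univ : Finset ι).powersetCard j).inf'
      (Finset.powersetCard_nonempty.2 (by simpa using hj)) (fun S => ∑ i ∈ S, f i) := by
  rw [Gval, dif_pos]

lemma Gval_le (f : ι → ℝ) {j : ℕ} (hj : j ≤ Fintype.card ι) {S : Finset ι}
    (hS : S.card = j) : Gval f j ≤ ∑ i ∈ S, f i := by
  rw [Gval_def f hj]
  exact Finset.inf'_le _ (Finset.mem_powersetCard.2 ⟨S.subset_univ, hS⟩)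

lemma exists_Gval_eq (f : ι → ℝ) {j : ℕ} (hj : j ≤ Fintype.card ι) :
    ∃ S : Finset ι, S.card = j ∧ Gval f j = ∑ i ∈ S, f i := by
  rw [Gval_def f hj]
  obtain ⟨S, hS, hval⟩ := Finset.exists_mem_eq_inf' _ (fun S => ∑ i ∈ S, f i)
  exact ⟨S, (Finset.mem_powersetCard.1 hS).2, hval⟩

lemma Gval_one_le (f : ι → ℝ) (hι : 0 < Fintype.card ι) (i : ι) : Gval f 1 ≤ f i := by
  simpa using Gval_le f hι (S := {i}) (Finset.card_singleton i)

lemma le_Gval (f : ι → ℝ) {D : ℝ} (hD : ∀ i, D ≤ f i) {j : ℕ} (hj : j ≤ Fintype.card ι) :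
    (j : ℝ) * D ≤ Gval f j := by
  obtain ⟨S, hcard, hval⟩ := exists_Gval_eq f hj
  rw [hval]
  calc (j : ℝ) * D = ∑ _i ∈ S, D := by rw [Finset.sum_const, hcard, nsmul_eq_mul]
  _ ≤ ∑ i ∈ S, f i := Finset.sum_le_sum (fun i _ => hD i)

/-- L1: if all values are `≥ D` and at least `j` of them equal `D`, the min `j`-sum is `j*D`. -/
lemma Gval_eq_mul (f : ι → ℝ) {D : ℝ} (hD : ∀ i, D ≤ f i) {j : ℕ}
    {A : Finset ι} (hA : ∀ i ∈ A, f i = D) (hcard : j ≤ A.card) :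
    Gval f j = (j : ℝ) * D := by
  have hj : j ≤ Fintype.card ι := hcard.trans (by simpa using A.card_le_univ)
  obtain ⟨S, hSA, hScard⟩ := Finset.exists_subset_card_eq hcard
  refine le_antisymm ?_ (le_Gval f hD hj)
  calc Gval f j ≤ ∑ i ∈ S, f i := Gval_le f hj hScard
  _ = ∑ _i ∈ S, D := Finset.sum_congr rfl (fun i hi => hA i (hSA hi))
  _ = (j : ℝ) * D := by rw [Finset.sum_const, hScard, nsmul_eq_mul]

/-- L2: if all values are `≥ D` and fewer than `j` equal `D`, the min `j`-sum exceeds `j*D`. -/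
lemma mul_lt_Gval (f : ι → ℝ) {D : ℝ} (hD : ∀ i, D ≤ f i) {j : ℕ}
    {A : Finset ι} (hA : ∀ i, f i = D → i ∈ A) (hcard : A.card < j)
    (hj : j ≤ Fintype.card ι) : (j : ℝ) * D < Gval f j := by
  obtain ⟨S, hScard, hval⟩ := exists_Gval_eq f hj
  have : ¬ S ⊆ A := fun hsub => absurd (Finset.card_le_card hsub) (by omega)
  obtain ⟨i0, hi0S, hi0A⟩ := Finset.not_subset.1 this
  have hi0 : D < f i0 := lt_of_le_of_ne (hD i0) (fun h => hi0A (hA i0 h.symm))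
  rw [hval]
  calc (j : ℝ) * D = ∑ _i ∈ S, D := by rw [Finset.sum_const, hScard, nsmul_eq_mul]
  _ < ∑ i ∈ S, f i := Finset.sum_lt_sum (fun i _ => hD i) ⟨i0, hi0S, hi0⟩



section Stages
variable {X : Type*} [TopologicalSpace X] [T2Space X]

/-- Iterated argmax sets: `stages S0 G (j+1)` is the set of maximizers of `G (j+1)`
over `stages S0 G j`. -/
def stages (S0 : Set X) (G : ℕ → X → ℝ) : ℕ → Set X
  | 0 => S0
  | j+1 => {x ∈ stages S0 G j | ∀ y ∈ stages S0 G j, G (j+1) y ≤ G (j+1) x}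

lemma stages_mono (S0 : Set X) (G : ℕ → X → ℝ) {i j : ℕ} (h : i ≤ j) :
    stages S0 G j ⊆ stages S0 G i := by
  induction j with
  | zero => simp_all
  | succ j ih =>
    rcases Nat.lt_or_ge i (j+1) with h' | h'
    · exact fun x hx => ih (by omega) hx.1
    · have : i = j + 1 := by omega
      subst this; exact fun x hx => hx

lemma stages_compact_nonempty (S0 : Set X) (G : ℕ → X → ℝ)
    (h0 : IsCompact S0) (hne : S0.Nonempty) (hG : ∀ j, Continuous (G j)) :
    ∀ j, IsCompact (stages S0 G j) ∧ (stages S0 G j).Nonempty := by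
  intro j
  induction j with
  | zero => exact ⟨h0, hne⟩
  | succ j ih =>
    obtain ⟨hcomp, hne'⟩ := ih
    obtain ⟨x0, hx0, hmax⟩ := hcomp.exists_isMaxOn hne' (hG (j+1)).continuousOn
    have hx0' : x0 ∈ stages S0 G (j+1) := ⟨hx0, fun y hy => hmax hy⟩
    have heq : stages S0 G (j+1) =
        stages S0 G j ∩ (G (j+1)) ⁻¹' {G (j+1) x0} := by
      ext x
      constructor
      · rintro ⟨hxj, hxmax⟩
        exact ⟨hxj, le_antisymm (hmax hxj) (hxmax x0 hx0)⟩
      · rintro ⟨hxj, hxeq⟩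
        exact ⟨hxj, fun y hy => (hmax hy).trans (le_of_eq (Set.mem_preimage.1 hxeq).symm)⟩
    constructor
    · rw [heq]
      exact hcomp.inter_right (isClosed_singleton.preimage (hG (j+1)))
    · exact ⟨x0, hx0'⟩

/-- If `y` ties the optimum on levels `1..k` and strictly beats it on level `k+1`,
contradiction. -/
lemma stages_beat (S0 : Set X) (G : ℕ → X → ℝ) {N : ℕ} {x : X}
    (hx : x ∈ stages S0 G N) {y : X} (hy : y ∈ S0) {k : ℕ} (hk : k < N)
    (heq : ∀ i, 1 ≤ i → i ≤ k → G i y = G i x)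
    (hlt : G (k+1) x < G (k+1) y) : False := by
  have hymem : ∀ i, i ≤ k → y ∈ stages S0 G i := by
    intro i hi
    induction i with
    | zero => exact hy
    | succ i ih =>
      refine ⟨ih (by omega), fun z hz => ?_⟩
      have hxi : x ∈ stages S0 G (i+1) := stages_mono S0 G (by omega) hx
      exact (hxi.2 z hz).trans (heq (i+1) (by omega) hi).ge
  have hxk : x ∈ stages S0 G (k+1) := stages_mono S0 G (by omega) hx
  exact absurd (hxk.2 y (hymem k le_rfl)) (not_le.2 hlt)

end Stages

section Discrete

lemma continuous_of_discrete_prod {P Y Z : Type*} [TopologicalSpace P] [DiscreteTopology P]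
    [TopologicalSpace Y] [TopologicalSpace Z] {f : P × Y → Z}
    (h : ∀ a, Continuous fun y => f (a, y)) : Continuous f := by
  rw [continuous_iff_continuousAt]
  rintro ⟨a, y⟩
  unfold ContinuousAt
  rw [nhds_prod_eq, nhds_discrete]
  have h2 : Tendsto (fun q : P × Y => q.2) (pure a ×ˢ 𝓝 y) (𝓝 y) :=
    tendsto_snd (f := (pure a : Filter P)) (g := 𝓝 y)
  have h1 := Filter.Tendsto.comp ((h a).continuousAt (x := y)) h2
  refine h1.congr' ?_
  have hmem : {q : P × Y | q.1 = a} ∈ (pure a ×ˢ 𝓝 y : Filter (P × Y)) := by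
    have := Filter.prod_mem_prod (s := {a}) (t := (Set.univ : Set Y))
      (f := (pure a : Filter P)) (g := 𝓝 y) (Filter.mem_pure.mpr rfl) Filter.univ_mem
    exact Filter.mem_of_superset this (by rintro ⟨p, q⟩ ⟨hp, -⟩; exact hp)
  filter_upwards [hmem] with q hq
  show f (a, q.2) = f q
  rw [show ((a : P), q.2) = q by rw [← hq]]

end Discrete

section Cycle

lemma exists_cycle {α : Type*} [Finite α] (R : α → α → Prop) (g : α → α) (A : Set α)
    (hg : ∀ a ∈ A, g a ∈ A) (hR : ∀ a ∈ A, R a (g a)) {a0 : α} (ha0 : a0 ∈ A) :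
    ∃ L : List α, L ≠ [] ∧ L.Nodup ∧
      ∀ (i : ℕ) (h : i < L.length),
        R (L[i]) (L[(i+1) % L.length]'(Nat.mod_lt _ (by omega))) := by
  classical
  set f : ℕ → α := fun t => g^[t] a0 with hf
  have hfA : ∀ t, f t ∈ A := by
    intro t
    induction t with
    | zero => exact ha0
    | succ t ih => show g^[t+1] a0 ∈ A; rw [Function.iterate_succ_apply']; exact hg _ ih
  have hfs : ∀ t, f (t+1) = g (f t) := fun t => Function.iterate_succ_apply' g t a0
  have hex : ∃ j, ∃ i, i < j ∧ f i = f j := by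
    obtain ⟨i, j, hne, heq⟩ := Finite.exists_ne_map_eq_of_infinite f
    rcases Nat.lt_or_ge i j with h | h
    · exact ⟨j, i, h, heq⟩
    · exact ⟨i, j, by omega, heq.symm⟩
  set j0 := Nat.find hex with hj0
  obtain ⟨i0, hi0, heq0⟩ := Nat.find_spec hex
  set m := j0 - i0 with hm
  have hmpos : 0 < m := by omega
  refine ⟨(List.range m).map (fun t => f (i0 + t)), ?_, ?_, ?_⟩
  · simp [hmpos.ne']
  · refine List.Nodup.map_on ?_ (List.nodup_range)
    intro s hs t ht hst
    simp only [List.mem_range] at hs ht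
    by_contra hne
    rcases Nat.lt_or_ge s t with h | h
    · exact Nat.find_min hex (m := i0 + t) (by omega) ⟨i0 + s, by omega, hst⟩
    · have h' : t < s := by omega
      exact Nat.find_min hex (m := i0 + s) (by omega) ⟨i0 + t, by omega, hst.symm⟩
  · intro i hi
    have hlen : ((List.range m).map (fun t => f (i0 + t))).length = m := by simp
    simp only [hlen] at hi ⊢
    have hget : ∀ (s : ℕ) (hs : s < m),
        ((List.range m).map (fun t => f (i0 + t)))[s]'(by simpa [hlen]) = f (i0 + s) := by
      intro s hs; simp
    rw [hget i hi, hget ((i+1) % m) (Nat.mod_lt _ hmpos)]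
    have key : f (i0 + (i+1) % m) = f (i0 + i + 1) := by
      rcases Nat.lt_or_ge (i+1) m with h | h
      · rw [Nat.mod_eq_of_lt h]; ring_nf
      · have : i + 1 = m := by omega
        rw [this, Nat.mod_self]
        have : i0 + i + 1 = j0 := by omega
        rw [this, Nat.add_zero, heq0]
    rw [key, show i0 + i + 1 = (i0 + i) + 1 from rfl, hfs]
    exact hR _ (hfA _)

end Cycle


lemma exists_Gval_one_eq {ι : Type*} [Fintype ι] (f : ι → ℝ) (hι : 0 < Fintype.card ι) :
    ∃ i, Gval f 1 = f i := by
  obtain ⟨S, hS1, hval⟩ := exists_Gval_eq f hι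
  obtain ⟨i, rfl⟩ := Finset.card_eq_one.1 hS1
  exact ⟨i, by simpa using hval⟩


set_option maxHeartbeats 1000000 in
theorem exists_envy_free (n : ℕ) (hn : 0 < n) (v : Fin n → Fin n → ℝ → ℝ)
    (hcont : ∀ a r, Continuous (v a r)) (hanti : ∀ a r, StrictAnti (v a r))
    (hbot : ∀ y : ℝ, ∃ Z : ℝ, 0 ≤ Z ∧ ∀ a r x, Z ≤ x → v a r x < y) (C : ℝ) :
    ∃ (π : Equiv.Perm (Fin n)) (p : Fin n → ℝ),
      (∀ a r, v a r (p r) ≤ v a (π a) (p (π a))) ∧ (∑ r, p r) = C := by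
  classical
  by_cases hn1 : n = 1
  · subst hn1
    refine ⟨1, fun _ => C, fun a r => ?_, by simp⟩
    have h1 : r = (1 : Equiv.Perm (Fin 1)) a := Subsingleton.elim _ _
    rw [h1]
  have hn2 : 2 ≤ n := by omega
  haveI : NeZero n := ⟨hn.ne'⟩
  letI : TopologicalSpace (Equiv.Perm (Fin n)) := ⊥
  haveI : DiscreteTopology (Equiv.Perm (Fin n)) := ⟨rfl⟩
  set slk : (Equiv.Perm (Fin n) × (Fin n → ℝ)) → (Fin n × Fin n) → ℝ :=
    fun x t => v t.1 (x.1 t.1) (x.2 (x.1 t.1)) - v t.1 t.2 (x.2 t.2) with hslk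
  have hTcard : Fintype.card (Fin n × Fin n) = n * n := by simp
  have hTpos : 0 < Fintype.card (Fin n × Fin n) := by rw [hTcard]; positivity
  have hslkc : ∀ (π : Equiv.Perm (Fin n)) (t : Fin n × Fin n),
      Continuous fun p : Fin n → ℝ => slk (π, p) t := by
    intro π t
    simp only [hslk]
    exact ((hcont t.1 (π t.1)).comp (continuous_apply (π t.1))).sub
      ((hcont t.1 t.2).comp (continuous_apply t.2))
  set G : ℕ → (Equiv.Perm (Fin n) × (Fin n → ℝ)) → ℝ := fun j x => Gval (slk x) j with hG
  have hGc : ∀ j, Continuous (G j) := by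
    intro j
    apply continuous_of_discrete_prod
    intro π
    show Continuous fun p => Gval (slk (π, p)) j
    by_cases hj : (((Finset.univ : Finset (Fin n × Fin n))).powersetCard j).Nonempty
    · simp only [Gval, dif_pos hj]
      exact Continuous.finset_inf'_apply hj
        (fun S _ => continuous_finset_sum _ (fun t _ => hslkc π t))
    · simp only [Gval, dif_neg hj]; exact continuous_const
  have hTne : (Finset.univ : Finset (Fin n × Fin n)).Nonempty := Finset.univ_nonempty
  set γ : ℝ := Finset.univ.inf' hTne
    (fun t : Fin n × Fin n => v t.1 t.1 (C / n) - v t.1 t.2 (C / n)) with hγ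
  set β : ℝ := Finset.univ.inf' hTne (fun t : Fin n × Fin n => v t.1 t.2 (C / n)) with hβ
  obtain ⟨Z, hZ0, hZ⟩ := hbot (γ + β)
  set M : ℝ := n * (Z + |C|) + 2 with hM
  have hnR : (1 : ℝ) ≤ (n : ℝ) := by exact_mod_cast hn
  have hMZ : Z ≤ M - 1 := by nlinarith [abs_nonneg C]
  have hMC : |C| ≤ M - 1 := by nlinarith [abs_nonneg C]
  have hMCn : |C / n| ≤ M - 1 := by
    rw [abs_div, abs_of_nonneg (by positivity : (0:ℝ) ≤ (n:ℝ))]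
    have : |C| / n ≤ |C| := by
      apply div_le_self (abs_nonneg C) hnR
    linarith
  set K : Set (Fin n → ℝ) := {p | (∑ r, p r) = C ∧ ∀ r, |p r| ≤ M} with hK
  have hKc : IsCompact K := by
    have heq : K = (Set.univ.pi fun _ : Fin n => Set.Icc (-M) M) ∩ {p | (∑ r, p r) = C} := by
      ext p
      simp only [hK, Set.mem_inter_iff, Set.mem_setOf_eq, Set.mem_pi, Set.mem_univ,
        Set.mem_Icc, forall_true_left, ← abs_le]
      tauto
    rw [heq]
    exact (isCompact_univ_pi fun _ => isCompact_Icc).inter_right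
      (isClosed_eq (continuous_finset_sum _ fun r _ => continuous_apply r) continuous_const)
  have hunif : (fun _ : Fin n => C / n) ∈ K := by
    constructor
    · rw [Finset.sum_const, Finset.card_univ, Fintype.card_fin, nsmul_eq_mul]
      field_simp
    · intro r; exact hMCn.trans (by linarith)
  set S0 : Set (Equiv.Perm (Fin n) × (Fin n → ℝ)) := Set.univ ×ˢ K with hS0
  have hS0c : IsCompact S0 := isCompact_univ.prod hKc
  have hS0ne : S0.Nonempty := ⟨(1, fun _ => C / n), Set.mem_prod.2 ⟨trivial, hunif⟩⟩
  obtain ⟨⟨π₀, p₀⟩, hx⟩ := (stages_compact_nonempty S0 G hS0c hS0ne hGc (n * n)).2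
  have hp₀K : p₀ ∈ K := (Set.mem_prod.1 (stages_mono S0 G (Nat.zero_le _) hx)).2
  set D : ℝ := G 1 (π₀, p₀) with hD
  have hNN1 : 1 ≤ n * n := by nlinarith
  have hDle : ∀ t, D ≤ slk (π₀, p₀) t := fun t => Gval_one_le _ hTpos t
  have hDmax : ∀ y ∈ S0, G 1 y ≤ D :=
    fun y hy => (stages_mono S0 G hNN1 hx).2 y hy
  have hγD : γ ≤ D := by
    have h1 : G 1 (1, fun _ : Fin n => C / n) ≤ D :=
      hDmax _ (Set.mem_prod.2 ⟨trivial, hunif⟩)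
    obtain ⟨t, ht⟩ := exists_Gval_one_eq (slk (1, fun _ : Fin n => C / n)) hTpos
    have h2 : γ ≤ slk (1, fun _ : Fin n => C / n) t := by
      simp only [hslk, Equiv.Perm.one_apply]
      exact Finset.inf'_le _ (Finset.mem_univ t)
    calc γ ≤ slk (1, fun _ : Fin n => C / n) t := h2
    _ = G 1 (1, fun _ : Fin n => C / n) := ht.symm
    _ ≤ D := h1
  -- all coordinates of p₀ stay strictly inside the box
  have hbound : ∀ r, |p₀ r| ≤ M - 1 := by
    intro r0
    by_contra hcon
    push_neg at hcon
    have hsum : ∑ r, p₀ r = C := hp₀K.1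
    have step1 : ∃ rmax, Z ≤ p₀ rmax := by
      rcases le_or_gt 0 (p₀ r0) with hpos | hneg
      · refine ⟨r0, ?_⟩
        rw [abs_of_nonneg hpos] at hcon
        linarith
      · have hr0 : p₀ r0 < -(M - 1) := by
          rw [abs_of_neg hneg] at hcon; linarith
        by_contra hall
        push_neg at hall
        have hsum' : ∑ r ∈ Finset.univ.erase r0, p₀ r = C - p₀ r0 := by
          rw [Finset.sum_erase_eq_sub (Finset.mem_univ r0), hsum]
        have hle : ∑ r ∈ Finset.univ.erase r0, p₀ r ≤ ((n : ℝ) - 1) * Z := by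
          calc ∑ r ∈ Finset.univ.erase r0, p₀ r
              ≤ ∑ _r ∈ Finset.univ.erase r0, Z :=
                Finset.sum_le_sum fun r _ => (hall r).le
          _ = ((Finset.univ.erase r0).card : ℝ) * Z := by
              rw [Finset.sum_const, nsmul_eq_mul]
          _ = ((n : ℝ) - 1) * Z := by
              rw [Finset.card_erase_of_mem (Finset.mem_univ r0), Finset.card_univ,
                Fintype.card_fin, Nat.cast_sub hn, Nat.cast_one]
        nlinarith [abs_nonneg C, neg_abs_le C]
    obtain ⟨rmax, hrmax⟩ := step1
    have step2 : ∃ rmin, p₀ rmin ≤ C / n := by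
      by_contra hall
      push_neg at hall
      have hlt : (C : ℝ) < ∑ r, p₀ r := by
        have h1 : (C : ℝ) = ∑ _r : Fin n, C / n := by
          rw [Finset.sum_const, Finset.card_univ, Fintype.card_fin, nsmul_eq_mul]
          field_simp
        rw [h1]
        exact Finset.sum_lt_sum_of_nonempty Finset.univ_nonempty fun r _ => hall r
      rw [hsum] at hlt
      exact lt_irrefl _ hlt
    obtain ⟨rmin, hrmin⟩ := step2
    set a : Fin n := π₀.symm rmax with ha
    have hpair : slk (π₀, p₀) (a, rmin) < γ := by
      have hπa : π₀ a = rmax := Equiv.apply_symm_apply π₀ rmax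
      have h1 : v a (π₀ a) (p₀ (π₀ a)) < γ + β := by
        rw [hπa]; exact hZ a rmax _ hrmax
      have h2 : β ≤ v a rmin (p₀ rmin) := by
        calc β ≤ v a rmin (C / n) := Finset.inf'_le _ (Finset.mem_univ (a, rmin))
        _ ≤ v a rmin (p₀ rmin) := (hanti a rmin).antitone hrmin
      simp only [hslk]
      linarith
    exact absurd (hDle (a, rmin)) (not_le.2 (lt_of_lt_of_le hpair hγD))
  -- the heart: D ≥ 0
  have hD0 : 0 ≤ D := by
    by_contra hDneg
    push_neg at hDneg
    set tight : Fin n × Fin n → Prop := fun t => slk (π₀, p₀) t = D with htight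
    have htown : ∀ a, ¬ tight (a, π₀ a) := by
      intro a h
      simp only [htight, hslk, sub_self] at h
      linarith
    have hex_t : ∃ t, tight t := by
      obtain ⟨t, ht⟩ := exists_Gval_one_eq (slk (π₀, p₀)) hTpos
      exact ⟨t, ht.symm⟩
    set E : Fin n → Fin n → Prop := fun a b => tight (a, π₀ b) with hE
    set Env : Fin n → Prop := fun a => ∃ b, E a b with hEnvdef
    have hEnv1 : ∃ a, Env a := by
      obtain ⟨⟨a, r⟩, ht⟩ := hex_t
      exact ⟨a, ⟨π₀.symm r, by simpa only [hE, Equiv.apply_symm_apply] using ht⟩⟩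
    -- the lexicographic-improvement contradiction engine
    have contra : ∀ y, y ∈ S0 →
        (∀ t, slk (π₀, p₀) t ≤ slk y t ∨ (D < slk (π₀, p₀) t ∧ D < slk y t)) →
        (∃ t0, tight t0 ∧ D < slk y t0) → False := by
      rintro y hyS0 hH1 ⟨t0, ht0, ht0'⟩
      have hOldD : ∀ t, D ≤ slk (π₀, p₀) t := hDle
      have hNewD : ∀ t, D ≤ slk y t := by
        intro t
        rcases hH1 t with h | h
        · exact (hOldD t).trans h
        · exact h.2.le
      set T0 : Finset (Fin n × Fin n) :=
        Finset.univ.filter (fun t => slk (π₀, p₀) t = D ∧ slk y t = D) with hT0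
      set AOld : Finset (Fin n × Fin n) :=
        Finset.univ.filter (fun t => slk (π₀, p₀) t = D) with hAOldd
      have hsub : T0 ⊆ AOld := by
        intro t ht
        exact Finset.mem_filter.2 ⟨Finset.mem_univ _, (Finset.mem_filter.1 ht).2.1⟩
      have ht0A : t0 ∈ AOld := Finset.mem_filter.2 ⟨Finset.mem_univ _, ht0⟩
      have ht0T : t0 ∉ T0 := by
        intro h
        exact absurd (Finset.mem_filter.1 h).2.2 (ne_of_gt ht0')
      have hklt : T0.card < AOld.card :=
        Finset.card_lt_card (HasSubset.Subset.ssubset_of_ne hsub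
          (fun hEq => ht0T (hEq ▸ ht0A)))
      have hANew : ∀ t, slk y t = D → t ∈ T0 := by
        intro t h
        rcases hH1 t with h' | h'
        · exact Finset.mem_filter.2 ⟨Finset.mem_univ _,
            le_antisymm (h ▸ h') (hOldD t), h⟩
        · exact absurd h (ne_of_gt h'.2)
      set k := T0.card with hk
      have hAcard : AOld.card ≤ n * n := by
        calc AOld.card ≤ Fintype.card (Fin n × Fin n) := Finset.card_le_univ _
        _ = n * n := hTcard
      have hiy : ∀ i, 1 ≤ i → i ≤ k → G i y = G i (π₀, p₀) := by
        intro i h1 hik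
        have hyval : G i y = (i : ℝ) * D :=
          Gval_eq_mul (slk y) hNewD (A := T0)
            (fun t ht => (Finset.mem_filter.1 ht).2.2) hik
        have hxval : G i (π₀, p₀) = (i : ℝ) * D :=
          Gval_eq_mul (slk (π₀, p₀)) hOldD (A := AOld)
            (fun t ht => (Finset.mem_filter.1 ht).2) (by omega)
        rw [hyval, hxval]
      have hx2 : G (k + 1) (π₀, p₀) = ((k + 1 : ℕ) : ℝ) * D :=
        Gval_eq_mul (slk (π₀, p₀)) hOldD (A := AOld)
          (fun t ht => (Finset.mem_filter.1 ht).2) (by omega)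
      have hy2 : ((k + 1 : ℕ) : ℝ) * D < G (k + 1) y :=
        mul_lt_Gval (slk y) hNewD (A := T0) hANew (by omega) (by omega)
      exact stages_beat S0 G hx hyS0 (show k < n * n by omega) hiy
        (by rw [hx2]; exact hy2)
    -- rotation engine: a tight cycle contradicts optimality
    have rot : ∀ L : List (Fin n), L ≠ [] → L.Nodup →
        (∀ (i : ℕ) (h : i < L.length),
          E (L[i]) (L[(i+1) % L.length]'(Nat.mod_lt _ (by omega)))) → False := by
      intro L hLne hLnd hLE
      set σ := L.formPerm with hσ
      have hrot : ∀ a ∈ L, E a (σ a) := by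
        intro a ha
        obtain ⟨i, hi, rfl⟩ := List.mem_iff_getElem.1 ha
        rw [hσ, List.formPerm_apply_getElem _ hLnd i hi]
        exact hLE i hi
      have hyS0 : ((π₀ * σ, p₀) : Equiv.Perm (Fin n) × (Fin n → ℝ)) ∈ S0 :=
        Set.mem_prod.2 ⟨trivial, hp₀K⟩
      have hkey : ∀ a ∈ L,
          v a ((π₀ * σ) a) (p₀ ((π₀ * σ) a)) = v a (π₀ a) (p₀ (π₀ a)) - D := by
        intro a ha
        have h1 := hrot a ha
        simp only [hE, htight, hslk] at h1
        have hmul : (π₀ * σ) a = π₀ (σ a) := rfl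
        rw [hmul]
        linarith
      have hslky : ∀ t, slk (π₀, p₀) t ≤ slk (π₀ * σ, p₀) t := by
        intro t
        by_cases ha : t.1 ∈ L
        · have h1 := hkey t.1 ha
          simp only [hslk]
          rw [h1]
          linarith
        · have hfix : σ t.1 = t.1 := List.formPerm_apply_of_notMem ha
          simp only [hslk]
          rw [show (π₀ * σ) t.1 = π₀ (σ t.1) from rfl, hfix]
      obtain ⟨a1, ha1⟩ : ∃ a, a ∈ L := List.exists_mem_of_ne_nil L hLne
      have htight1 : tight (a1, π₀ (σ a1)) := hrot a1 ha1
      have hstrict : D < slk (π₀ * σ, p₀) (a1, π₀ (σ a1)) := by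
        have h1 := hkey a1 ha1
        have h2 : slk (π₀, p₀) (a1, π₀ (σ a1)) = D := htight1
        simp only [hslk] at h2 ⊢
        rw [show (π₀ * σ) a1 = π₀ (σ a1) from rfl] at h1 ⊢
        linarith
      exact contra (π₀ * σ, p₀) hyS0 (fun t => Or.inl (hslky t)) ⟨_, htight1, hstrict⟩
    by_cases hall : ∀ a, Env a
    · choose g hg using hall
      obtain ⟨L, h1, h2, h3⟩ := exists_cycle E g Set.univ (fun _ _ => trivial)
        (fun a _ => hg a) (Set.mem_univ (⟨0, hn⟩ : Fin n))
      exact rot L h1 h2 h3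
    · push_neg at hall
      obtain ⟨b0, hb0⟩ := hall
      by_cases hsrc : ∃ a0, Env a0 ∧ ∀ a', ¬ E a' a0
      · -- perturbation case
        obtain ⟨a0, hEnva0, hnoin⟩ := hsrc
        have hab : a0 ≠ b0 := fun h => hb0 (h ▸ hEnva0)
        have h12 : π₀ a0 ≠ π₀ b0 := fun h => hab (π₀.injective h)
        set NT : Finset (Fin n × Fin n) := Finset.univ.filter (fun t => ¬ tight t) with hNT
        have hNTne : NT.Nonempty :=
          ⟨(a0, π₀ a0), Finset.mem_filter.2 ⟨Finset.mem_univ _, htown a0⟩⟩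
        set pf : ℝ → (Fin n → ℝ) := fun δ r =>
          p₀ r + (if r = π₀ b0 then δ else 0) - (if r = π₀ a0 then δ else 0) with hpf
        have hpfc : ∀ r, Continuous fun δ => pf δ r := by
          intro r
          simp only [hpf]
          apply Continuous.sub
          · apply Continuous.add continuous_const
            by_cases e2 : r = π₀ b0 <;> simp only [e2, if_true, if_false] <;>
              [exact continuous_id; exact continuous_const]
          · by_cases e1 : r = π₀ a0 <;> simp only [e1, if_true, if_false] <;>
              [exact continuous_id; exact continuous_const]
        have hpf0 : pf 0 = p₀ := by funext r; simp [hpf]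
        have hfc : Continuous fun δ => NT.inf' hNTne (fun t => slk (π₀, pf δ) t) := by
          apply Continuous.finset_inf'_apply hNTne
          intro t _
          simp only [hslk]
          exact ((hcont _ _).comp (hpfc _)).sub ((hcont _ _).comp (hpfc _))
        have hh0 : D < NT.inf' hNTne (fun t => slk (π₀, pf 0) t) := by
          rw [Finset.lt_inf'_iff]
          intro t ht
          rw [hpf0]
          exact lt_of_le_of_ne (hDle t) (Ne.symm ((Finset.mem_filter.1 ht).2))
        have hev : ∀ᶠ δ in 𝓝 (0 : ℝ),
            D < NT.inf' hNTne (fun t => slk (π₀, pf δ) t) :=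
          (hfc.continuousAt (x := 0)).eventually (eventually_gt_nhds hh0)
        obtain ⟨η, hη, hball⟩ := Metric.eventually_nhds_iff.1 hev
        set δ := min (η / 2) 1 with hδdef
        have hδ0 : (0 : ℝ) < δ := lt_min (by linarith) one_pos
        have hδ1 : δ ≤ 1 := min_le_right _ _
        have hδη : D < NT.inf' hNTne (fun t => slk (π₀, pf δ) t) := by
          apply hball
          rw [Real.dist_eq, sub_zero, abs_of_pos hδ0]
          calc δ ≤ η / 2 := min_le_left _ _
          _ < η := by linarith
        have hp'sum : ∑ r, pf δ r = C := by
          simp only [hpf]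
          rw [Finset.sum_sub_distrib, Finset.sum_add_distrib]
          rw [Finset.sum_ite_eq' Finset.univ (π₀ b0) (fun _ => δ),
            Finset.sum_ite_eq' Finset.univ (π₀ a0) (fun _ => δ)]
          simp [hp₀K.1]
        have hp'K : pf δ ∈ K := by
          refine ⟨hp'sum, ?_⟩
          intro r
          by_cases e2 : r = π₀ b0
          · have hne : ¬ (r = π₀ a0) := by rw [e2]; exact fun h => h12 h.symm
            simp only [hpf, if_pos e2, if_neg hne, sub_zero]
            have h1 := hbound r
            have h2 : |p₀ r + δ| ≤ |p₀ r| + |δ| := abs_add_le _ _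
            rw [abs_of_pos hδ0] at h2
            calc |p₀ r + δ| ≤ |p₀ r| + δ := h2
            _ ≤ (M - 1) + 1 := add_le_add h1 hδ1
            _ = M := by ring
          · by_cases e1 : r = π₀ a0
            · simp only [hpf, if_neg e2, if_pos e1, add_zero]
              have h1 := hbound r
              have h2 : |p₀ r - δ| ≤ |p₀ r| + |δ| := abs_sub _ _
              rw [abs_of_pos hδ0] at h2
              calc |p₀ r - δ| ≤ |p₀ r| + δ := h2
              _ ≤ (M - 1) + 1 := add_le_add h1 hδ1
              _ = M := by ring
            · simp only [hpf, if_neg e2, if_neg e1, add_zero, sub_zero]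
              exact (hbound r).trans (by linarith)
        have hyS0 : ((π₀, pf δ) : Equiv.Perm (Fin n) × (Fin n → ℝ)) ∈ S0 :=
          Set.mem_prod.2 ⟨trivial, hp'K⟩
        have hH1 : ∀ t, slk (π₀, p₀) t ≤ slk (π₀, pf δ) t ∨
            (D < slk (π₀, p₀) t ∧ D < slk (π₀, pf δ) t) := by
          intro t
          by_cases ht : tight t
          · left
            obtain ⟨a, r⟩ := t
            have haB : a ≠ b0 := by
              intro h
              subst h
              exact hb0 ⟨π₀.symm r, by
                simp only [hE, Equiv.apply_symm_apply]
                exact ht⟩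
            have h2' : π₀ a ≠ π₀ b0 := fun h => haB (π₀.injective h)
            have hr1 : r ≠ π₀ a0 := by
              intro h
              exact hnoin a (show tight (a, π₀ a0) by rw [← h]; exact ht)
            have hown : pf δ (π₀ a) ≤ p₀ (π₀ a) := by
              simp only [hpf, h2', if_false, add_zero]
              split_ifs with hh
              · linarith
              · linarith
            have htar : p₀ r ≤ pf δ r := by
              simp only [hpf, hr1, if_false, sub_zero]
              split_ifs with hh
              · linarith
              · linarith
            simp only [hslk]
            have o1 : v a (π₀ a) (p₀ (π₀ a)) ≤ v a (π₀ a) (pf δ (π₀ a)) :=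
              (hanti _ _).antitone hown
            have o2 : v a r (pf δ r) ≤ v a r (p₀ r) := (hanti _ _).antitone htar
            linarith
          · right
            refine ⟨lt_of_le_of_ne (hDle t) (Ne.symm ht), ?_⟩
            calc D < NT.inf' hNTne (fun t => slk (π₀, pf δ) t) := hδη
            _ ≤ slk (π₀, pf δ) t := by
              refine Finset.inf'_le (fun t => slk (π₀, pf δ) t) ?_
              simp only [hNT, Finset.mem_filter]
              exact ⟨Finset.mem_univ _, ht⟩
        obtain ⟨b_, hEb⟩ := hEnva0
        have ht0 : tight (a0, π₀ b_) := hEb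
        have hb_r1 : π₀ b_ ≠ π₀ a0 := by
          intro h
          exact hnoin a0 (show tight (a0, π₀ a0) by rw [← h]; exact ht0)
        have hstrict : D < slk (π₀, pf δ) (a0, π₀ b_) := by
          have hown : pf δ (π₀ a0) < p₀ (π₀ a0) := by
            simp only [hpf, if_neg h12, eq_self_iff_true, if_true, ite_true, add_zero]
            linarith
          have o1 : v a0 (π₀ a0) (p₀ (π₀ a0)) < v a0 (π₀ a0) (pf δ (π₀ a0)) :=
            hanti a0 (π₀ a0) hown
          have htar : p₀ (π₀ b_) ≤ pf δ (π₀ b_) := by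
            simp only [hpf, hb_r1, if_false, sub_zero]
            split_ifs with hh
            · linarith
            · linarith
          have o2 : v a0 (π₀ b_) (pf δ (π₀ b_)) ≤ v a0 (π₀ b_) (p₀ (π₀ b_)) :=
            (hanti _ _).antitone htar
          have h2 : slk (π₀, p₀) (a0, π₀ b_) = D := ht0
          simp only [hslk] at h2 ⊢
          linarith
        exact contra (π₀, pf δ) hyS0 hH1 ⟨_, ht0, hstrict⟩
      · push_neg at hsrc
        set g : Fin n → Fin n := fun a => if h : Env a then (hsrc a h).choose else a with hg
        have hgE : ∀ a, Env a → E (g a) a := by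
          intro a h
          simp only [hg, dif_pos h]
          exact (hsrc a h).choose_spec
        obtain ⟨a1, ha1⟩ := hEnv1
        obtain ⟨L, h1, h2, h3⟩ := exists_cycle (fun x y => E y x) g {a | Env a}
          (fun a ha => ⟨a, hgE a ha⟩) (fun a ha => hgE a ha) ha1
        -- reverse the cycle
        have hm : 0 < L.length := List.length_pos_iff.2 h1
        have hlen : L.reverse.length = L.length := List.length_reverse
        refine rot L.reverse (by simpa using h1) (List.nodup_reverse.2 h2) ?_
        intro i hi
        rw [hlen] at hi
        have hget : ∀ (s : ℕ) (hs : s < L.length),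
            L.reverse[s]'(by omega) = L[L.length - 1 - s]'(by omega) := by
          intro s hs
          rw [List.getElem_reverse]
        rcases Nat.lt_or_ge (i + 1) L.length with hlt | hge
        · -- interior step
          have e1 : L.reverse[i]'(by omega) = L[L.length - 1 - i]'(by omega) := hget i (by omega)
          have hmod1 : (i + 1) % L.reverse.length = i + 1 := by
            rw [hlen]; exact Nat.mod_eq_of_lt hlt
          have e2 : L.reverse[(i + 1) % L.reverse.length]'(Nat.mod_lt _ (by omega))
              = L[L.length - 2 - i]'(by omega) := by
            have := hget (i + 1) hlt
            simp only [hmod1]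
            rw [this]
            congr 1
            omega
          rw [e1, e2]
          have h3' := h3 (L.length - 2 - i) (by omega)
          have hmod2 : (L.length - 2 - i + 1) % L.length = L.length - 1 - i := by
            rw [Nat.mod_eq_of_lt (by omega)]
            omega
          simp only [hmod2] at h3'
          exact h3'
        · -- wrap-around step
          have hieq : i + 1 = L.length := by omega
          have e1 : L.reverse[i]'(by omega) = L[0]'(by omega) := by
            rw [hget i (by omega)]
            congr 1
            omega
          have hmod1 : (i + 1) % L.reverse.length = 0 := by
            rw [hlen, hieq, Nat.mod_self]
          have e2 : L.reverse[(i + 1) % L.reverse.length]'(Nat.mod_lt _ (by omega))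
              = L[L.length - 1]'(by omega) := by
            simp only [hmod1]
            rw [hget 0 (by omega)]
            simp
          rw [e1, e2]
          have h3' := h3 (L.length - 1) (by omega)
          have hmod2 : (L.length - 1 + 1) % L.length = 0 := by
            rw [show L.length - 1 + 1 = L.length by omega, Nat.mod_self]
          simp only [hmod2] at h3'
          exact h3'
  refine ⟨π₀, p₀, fun a r => ?_, hp₀K.1⟩
  have h1 := hDle (a, r)
  simp only [hslk] at h1
  linarith
end RentAux

/-- Theorem 3.3 (existence content): for any `ε > 0` and any total rent `C`,
under the standing assumptions there is an `ε`-envy-free solution whose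
prices (possibly negative) sum to `C`. -/
theorem exists_eps_envy_free_fixed_rent
    (n : ℕ) (hn : 0 < n) (v : Fin n → Fin n → ℝ → ℝ)
    (hcont : ∀ a r, Continuous (v a r))
    (hanti : ∀ a r, StrictAnti (v a r))
    (hpl : ∀ a r, PiecewiseLinear (v a r))
    (hnonneg : ∀ a r, 0 ≤ v a r 0)
    (ε : ℝ) (hε : 0 < ε) (C : ℝ) :
    ∃ (π : Equiv.Perm (Fin n)) (p : Fin n → ℝ),
      EpsEF n ε v π p ∧ (∑ r, p r) = C := by
  classical
  haveI : Nonempty (Fin n) := Fin.pos_iff_nonempty.mp hn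
  have hbot : ∀ y : ℝ, ∃ Z : ℝ, 0 ≤ Z ∧ ∀ a r x, Z ≤ x → v a r x < y := by
    intro y
    have key : ∀ a r : Fin n, ∃ Z : ℝ, 0 ≤ Z ∧ ∀ x, Z ≤ x → v a r x < y := by
      intro a r
      obtain ⟨t, b, hmono, -, -, m, c, hlast⟩ := hpl a r
      have hm : m < 0 := by
        have h1 : v a r (b (Fin.last t)) = m * (b (Fin.last t)) + c := hlast _ le_rfl
        have h2 : v a r (b (Fin.last t) + 1) = m * (b (Fin.last t) + 1) + c :=
          hlast _ (by linarith)
        have h3 : v a r (b (Fin.last t) + 1) < v a r (b (Fin.last t)) :=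
          hanti a r (by linarith)
        rw [h1, h2] at h3
        nlinarith [h3]
      refine ⟨max (max (b (Fin.last t)) ((y - c) / m + 1)) 0, le_max_right _ _, ?_⟩
      intro x hx
      have hxb : b (Fin.last t) ≤ x :=
        le_trans (le_trans (le_max_left _ _) (le_max_left _ _)) hx
      rw [hlast x hxb]
      have hxy : (y - c) / m + 1 ≤ x :=
        le_trans (le_trans (le_max_right _ _) (le_max_left _ _)) hx
      have h4 : m * x ≤ m * ((y - c) / m + 1) := mul_le_mul_of_nonpos_left hxy hm.le
      have h5 : m * ((y - c) / m + 1) = (y - c) + m := by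
        field_simp [hm.ne]
      linarith
    choose Zf hZf0 hZf using key
    refine ⟨Finset.univ.sup' Finset.univ_nonempty (fun t : Fin n × Fin n => Zf t.1 t.2),
      ?_, ?_⟩
    · obtain ⟨a⟩ := (inferInstance : Nonempty (Fin n))
      exact le_trans (hZf0 a a) (Finset.le_sup' (f := fun t : Fin n × Fin n => Zf t.1 t.2) (Finset.mem_univ (a, a)))
    · intro a r x hx
      exact hZf a r x (le_trans (Finset.le_sup' (f := fun t : Fin n × Fin n => Zf t.1 t.2) (Finset.mem_univ (a, r))) hx)
  obtain ⟨π, p, hEF, hsum⟩ := RentAux.exists_envy_free n hn v hcont hanti hbot C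
  refine ⟨π, p, ?_, hsum⟩
  intro a
  constructor
  · intro hpos r
    calc v a r (p r) ≤ v a (π a) (p (π a)) := hEF a r
    _ ≤ (1 + ε) * v a (π a) (p (π a)) := by nlinarith
  · intro hneg r
    have h1 : v a r (p r) ≤ v a (π a) (p (π a)) := hEF a r
    nlinarith [mul_pos hε (neg_pos.2 (lt_of_le_of_lt h1 hneg))]
end
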